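/- arXiv:0903.2851 — 9 statements merged into one kernel-verified Lean document; each statement's English description precedes it below -/
import Mathlib

section
/- For the NormalHedge potential, regret is controlled by the scale: if N is a positive integer, R_1,…,R_N are real numbers, c > 0, and (1/N) Σ_{i=1}^N exp(([R_i]_+)²/(2c)) = e, then for every index i one has R_i ≤ √(2c(ln N + 1)). (First part of Lemma 1.) -/
open Real Finset

/-- First part of Lemma 1: for the NormalHedge potential, regret is controlled by the
scale.  If the average potential equals `e`, then every regret `R i` is at most
`√(2c(ln N + 1))`. -/
theorem normalHedge_regret_le_of_potential_eq
    {N : ℕ} (hN : 0 < N) (R : Fin N → ℝ) (c : ℝ) (hc : 0 < c)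
    (heq : (1 / N : ℝ) * ∑ i, Real.exp (max (R i) 0 ^ 2 / (2 * c)) = Real.exp 1)
    (i : Fin N) :
    R i ≤ Real.sqrt (2 * c * (Real.log N + 1)) := by
  have hNpos : (0 : ℝ) < N := by exact_mod_cast hN
  have hsum : ∑ j, Real.exp (max (R j) 0 ^ 2 / (2 * c)) = N * Real.exp 1 := by
    field_simp at heq
    linarith [heq]
  have hle : Real.exp (max (R i) 0 ^ 2 / (2 * c)) ≤ N * Real.exp 1 := by
    rw [← hsum]
    exact Finset.single_le_sum (f := fun j => Real.exp (max (R j) 0 ^ 2 / (2 * c))) (fun j _ => (Real.exp_pos _).le) (Finset.mem_univ i)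
  have h2 : max (R i) 0 ^ 2 / (2 * c) ≤ Real.log N + 1 := by
    have := Real.log_le_log (Real.exp_pos _) hle
    rw [Real.log_exp, Real.log_mul (ne_of_gt hNpos) (ne_of_gt (Real.exp_pos 1)),
      Real.log_exp] at this
    exact this
  have h3 : max (R i) 0 ^ 2 ≤ 2 * c * (Real.log N + 1) := by
    rw [div_le_iff₀ (by linarith)] at h2
    linarith [h2]
  have h4 : max (R i) 0 ≤ Real.sqrt (2 * c * (Real.log N + 1)) := by
    have := Real.sqrt_le_sqrt h3
    rwa [Real.sqrt_sq (le_max_right _ _)] at this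
  exact le_trans (le_max_left _ _) h4
end

section
/- Quantile version of the scale-to-regret bound: if N is a positive integer, R_1,…,R_N are real numbers, c > 0, and (1/N) Σ_{i=1}^N exp(([R_i]_+)²/(2c)) = e, then for every 0 < ε ≤ 1 and every index i such that the number of indices j with R_j ≥ R_i is at least εN, one has R_i ≤ √(2c(ln(1/ε) + 1)). (Second part of Lemma 1.) -/
open Real Finset

/-- Second part of Lemma 1 (quantile version): if the average potential equals `e`
and at least `εN` of the regrets are at least `R i`, then
`R i ≤ √(2c(ln(1/ε) + 1))`. -/
theorem normalHedge_quantile_regret_le_of_potential_eq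
    {N : ℕ} (hN : 0 < N) (R : Fin N → ℝ) (c : ℝ) (hc : 0 < c)
    (heq : (1 / N : ℝ) * ∑ i, Real.exp (max (R i) 0 ^ 2 / (2 * c)) = Real.exp 1)
    (ε : ℝ) (hε0 : 0 < ε) (hε1 : ε ≤ 1) (i : Fin N)
    (hquant : ε * N ≤ ((Finset.univ.filter fun j => R i ≤ R j).card : ℝ)) :
    R i ≤ Real.sqrt (2 * c * (Real.log (1 / ε) + 1)) := by
  set S := Finset.univ.filter fun j => R i ≤ R j with hS
  have hNpos : (0 : ℝ) < N := by exact_mod_cast hN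
  have hsum : (∑ j, Real.exp (max (R j) 0 ^ 2 / (2 * c))) = N * Real.exp 1 := by
    field_simp at heq
    linarith [heq]
  set m := max (R i) 0 ^ 2 / (2 * c) with hm
  -- each term in S is ≥ exp m
  have hterm : ∀ j ∈ S, Real.exp m ≤ Real.exp (max (R j) 0 ^ 2 / (2 * c)) := by
    intro j hj
    have hij : R i ≤ R j := (Finset.mem_filter.mp hj).2
    apply Real.exp_le_exp.mpr
    apply div_le_div_of_nonneg_right _ (by positivity)
    have h1 : max (R i) 0 ≤ max (R j) 0 := max_le_max hij le_rfl
    have h0 : (0:ℝ) ≤ max (R i) 0 := le_max_right _ _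
    exact pow_le_pow_left₀ h0 h1 2
  have hcard : (S.card : ℝ) * Real.exp m ≤ N * Real.exp 1 := by
    calc (S.card : ℝ) * Real.exp m = ∑ _j ∈ S, Real.exp m := by
          rw [Finset.sum_const, nsmul_eq_mul]
      _ ≤ ∑ j ∈ S, Real.exp (max (R j) 0 ^ 2 / (2 * c)) := Finset.sum_le_sum hterm
      _ ≤ ∑ j, Real.exp (max (R j) 0 ^ 2 / (2 * c)) :=
          Finset.sum_le_sum_of_subset_of_nonneg (Finset.filter_subset _ _)
            (fun j _ _ => (Real.exp_pos _).le)
      _ = N * Real.exp 1 := hsum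
  have hSpos : (0 : ℝ) < S.card := lt_of_lt_of_le (by positivity) hquant
  have hexpm : Real.exp m ≤ Real.exp 1 / ε := by
    have h1 : ε * N * Real.exp m ≤ (S.card : ℝ) * Real.exp m :=
      mul_le_mul_of_nonneg_right hquant (Real.exp_pos _).le
    have h2 : ε * N * Real.exp m ≤ N * Real.exp 1 := h1.trans hcard
    rw [le_div_iff₀ hε0]
    nlinarith [Real.exp_pos m]
  have hmle : m ≤ Real.log (1 / ε) + 1 := by
    have : Real.exp 1 / ε = Real.exp (Real.log (1 / ε) + 1) := by
      rw [Real.exp_add, Real.exp_log (by positivity)]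
      ring
    rw [this] at hexpm
    exact Real.exp_le_exp.mp hexpm
  have hsq : max (R i) 0 ^ 2 ≤ 2 * c * (Real.log (1 / ε) + 1) := by
    rw [hm, div_le_iff₀ (by positivity)] at hmle
    linarith
  have h0 : (0:ℝ) ≤ max (R i) 0 := le_max_right _ _
  calc R i ≤ max (R i) 0 := le_max_left _ _
    _ = Real.sqrt (max (R i) 0 ^ 2) := (Real.sqrt_sq h0).symm
    _ ≤ Real.sqrt (2 * c * (Real.log (1 / ε) + 1)) := Real.sqrt_le_sqrt hsq
end

section
/- Let ψ : ℝ → ℝ be a continuous, twice-differentiable, convex function such that for some a ∈ ℝ, ψ is non-decreasing on [a,∞) and ψ'(a) = 0. Define f : ℝ → ℝ by f(x) = ψ(x) for x ≥ a and f(x) = ψ(a) for x < a. Then f is differentiable, and for any x₀, x ∈ ℝ there exists ξ with min{x₀,x} ≤ ξ ≤ max{x₀,x} such that f'(x₀)(x − x₀) ≤ f(x) − f(x₀) ≤ f'(x₀)(x − x₀) + (ψ''(ξ)/2)(x − x₀)². (Lemma 7.) -/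
open Real

section Aux

open Set

private lemma taylor1_aux (g : ℝ → ℝ) (hg : Differentiable ℝ g)
    (hg2 : Differentiable ℝ (deriv g)) {x₀ x : ℝ} (hx : x₀ < x) :
    ∃ ξ ∈ Set.Ioo x₀ x,
      g x - g x₀ - deriv g x₀ * (x - x₀) = deriv (deriv g) ξ / 2 * (x - x₀) ^ 2 := by
  have hu : UniqueDiffOn ℝ (Icc x₀ x) := uniqueDiffOn_Icc hx
  have hdw : ∀ y ∈ Icc x₀ x, iteratedDerivWithin 1 g (Icc x₀ x) y = deriv g y := by
    intro y hy
    rw [iteratedDerivWithin_one]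
    exact (hg y).derivWithin (hu y hy)
  have hcd : ContDiffOn ℝ 1 g (Icc x₀ x) :=
    (contDiff_one_iff_deriv.mpr ⟨hg, hg2.continuous⟩).contDiffOn
  have hf' : DifferentiableOn ℝ (iteratedDerivWithin 1 g (Icc x₀ x)) (Ioo x₀ x) :=
    (hg2.differentiableOn).congr fun y hy => hdw y (Ioo_subset_Icc_self hy)
  obtain ⟨ξ, hξ, heq⟩ := taylor_mean_remainder_lagrange (n := 1) hx.ne
    (by rw [uIcc_of_le hx.le]; exact hcd) (by rw [uIcc_of_le hx.le, uIoo_of_lt hx]; exact hf')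
  rw [uIoo_of_lt hx] at hξ
  rw [uIcc_of_le hx.le] at heq
  refine ⟨ξ, hξ, ?_⟩
  have h2 : iteratedDerivWithin 2 g (Icc x₀ x) ξ = deriv (deriv g) ξ := by
    have hξ' : ξ ∈ Icc x₀ x := Ioo_subset_Icc_self hξ
    rw [iteratedDerivWithin_succ]
    have : derivWithin (iteratedDerivWithin 1 g (Icc x₀ x)) (Icc x₀ x) ξ
        = derivWithin (deriv g) (Icc x₀ x) ξ := derivWithin_congr hdw (hdw ξ hξ')
    rw [this]
    exact (hg2 ξ).derivWithin (hu ξ hξ')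
  have hT : taylorWithinEval g 1 (Icc x₀ x) x₀ x = g x₀ + deriv g x₀ * (x - x₀) := by
    rw [taylorWithinEval_succ, taylor_within_zero_eval]
    simp [hdw x₀ (left_mem_Icc.mpr hx.le)]
    ring
  rw [hT, h2] at heq
  norm_num [Nat.factorial] at heq
  linarith

private lemma taylor1_between (g : ℝ → ℝ) (hg : Differentiable ℝ g)
    (hg2 : Differentiable ℝ (deriv g)) (x₀ x : ℝ) :
    ∃ ξ : ℝ, min x₀ x ≤ ξ ∧ ξ ≤ max x₀ x ∧
      g x - g x₀ - deriv g x₀ * (x - x₀) = deriv (deriv g) ξ / 2 * (x - x₀) ^ 2 := by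
  rcases lt_trichotomy x₀ x with h | h | h
  · obtain ⟨ξ, hξ, heq⟩ := taylor1_aux g hg hg2 h
    exact ⟨ξ, le_trans (min_le_left _ _) hξ.1.le, le_trans hξ.2.le (le_max_right _ _), heq⟩
  · exact ⟨x₀, min_le_left _ _, le_max_left _ _, by rw [h]; ring⟩
  · -- x < x₀ : reflect
    set c := x + x₀ with hc
    set φ : ℝ → ℝ := fun t => g (c - t) with hφ
    have hsub : Differentiable ℝ (fun t : ℝ => c - t) :=
      (differentiable_const c).sub differentiable_id
    have hφd : Differentiable ℝ φ := hg.comp hsub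
    have hd1 : ∀ t, HasDerivAt φ (-deriv g (c - t)) t := by
      intro t
      have h1 : HasDerivAt (fun t : ℝ => c - t) (-1) t := (hasDerivAt_id t).const_sub c
      have := ((hg (c - t)).hasDerivAt).comp t h1
      exact this.congr_deriv (by ring)
    have hderφ : deriv φ = fun t => -deriv g (c - t) := funext fun t => (hd1 t).deriv
    have hd2 : ∀ t, HasDerivAt (deriv φ) (deriv (deriv g) (c - t)) t := by
      intro t
      rw [hderφ]
      have h1 : HasDerivAt (fun t : ℝ => c - t) (-1) t := (hasDerivAt_id t).const_sub c
      have h2 := (((hg2 (c - t)).hasDerivAt).comp t h1).neg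
      exact h2.congr_deriv (by ring)
    have hφd2 : Differentiable ℝ (deriv φ) := fun t => (hd2 t).differentiableAt
    obtain ⟨ξ', hξ', heq⟩ := taylor1_aux φ hφd hφd2 h
    refine ⟨c - ξ', ?_, ?_, ?_⟩
    · rw [min_comm, min_eq_left h.le, hc]; linarith [hξ'.2]
    · rw [max_comm, max_eq_right h.le, hc]; linarith [hξ'.1]
    · have hcx : c - x = x₀ := by rw [hc]; ring
      have hcx0 : c - x₀ = x := by rw [hc]; ring
      have e1 : φ x₀ = g x := by simp only [hφ]; rw [hcx0]
      have e2 : φ x = g x₀ := by simp only [hφ]; rw [hcx]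
      have e3 : deriv φ x = -deriv g x₀ := by rw [hderφ]; simp only; rw [hcx]
      have e4 : deriv (deriv φ) ξ' = deriv (deriv g) (c - ξ') := (hd2 ξ').deriv
      rw [e1, e2, e3, e4] at heq
      have e5 : (x₀ - x) ^ 2 = (x - x₀) ^ 2 := by ring
      rw [e5] at heq
      linarith

end Aux

/-- Lemma 7: if `ψ` is continuous, twice differentiable and convex, non-decreasing on
`[a, ∞)` with `ψ'(a) = 0`, and `f` agrees with `ψ` on `[a, ∞)` and equals `ψ(a)` below
`a`, then `f` is differentiable and satisfies the stated first-order Taylor bounds. -/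
theorem truncated_convex_taylor_bounds
    (ψ : ℝ → ℝ) (a : ℝ)
    (hcont : Continuous ψ)
    (hdiff : Differentiable ℝ ψ)
    (hdiff2 : Differentiable ℝ (deriv ψ))
    (hconv : ConvexOn ℝ Set.univ ψ)
    (hmono : MonotoneOn ψ (Set.Ici a))
    (hderiv_a : deriv ψ a = 0)
    (f : ℝ → ℝ) (hf : ∀ x, f x = if a ≤ x then ψ x else ψ a) :
    Differentiable ℝ f ∧
      ∀ x₀ x : ℝ, ∃ ξ : ℝ, min x₀ x ≤ ξ ∧ ξ ≤ max x₀ x ∧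
        deriv f x₀ * (x - x₀) ≤ f x - f x₀ ∧
        f x - f x₀ ≤ deriv f x₀ * (x - x₀) + deriv (deriv ψ) ξ / 2 * (x - x₀) ^ 2 := by
  -- monotonicity of the derivative
  have hmono' : Monotone (deriv ψ) := by
    have := hconv.monotoneOn_deriv (fun x _ => (hdiff x))
    exact monotoneOn_univ.mp this
  -- tangent line inequality
  have htangent : ∀ s t : ℝ, ψ s + deriv ψ s * (t - s) ≤ ψ t := by
    intro s t
    rcases lt_trichotomy s t with h | h | h
    · have h1 := hconv.deriv_le_slope (Set.mem_univ s) (Set.mem_univ t) h (hdiff s)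
      rw [slope_def_field, le_div_iff₀ (by linarith)] at h1
      linarith
    · rw [h]; simp
    · have h1 := hconv.slope_le_deriv (Set.mem_univ t) (Set.mem_univ s) h (hdiff s)
      rw [slope_def_field, div_le_iff₀ (by linarith)] at h1
      linarith
  have hmin : ∀ t, ψ a ≤ ψ t := by
    intro t
    have := htangent a t
    rw [hderiv_a] at this
    linarith
  -- nonnegativity of the second derivative
  have hpsi'' : ∀ t, 0 ≤ deriv (deriv ψ) t := by
    intro t
    have h1 : HasDerivWithinAt (deriv ψ) (deriv (deriv ψ) t) (Set.Ioi t) t :=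
      ((hdiff2 t).hasDerivAt).hasDerivWithinAt
    rw [hasDerivWithinAt_iff_tendsto_slope' (by simp)] at h1
    refine ge_of_tendsto h1 ?_
    filter_upwards [self_mem_nhdsWithin] with u hu
    have hu' : t < u := hu
    rw [slope_def_field]
    exact div_nonneg (sub_nonneg.mpr (hmono' hu'.le)) (sub_nonneg.mpr hu'.le)
  have hderiv_nonneg : ∀ t, a ≤ t → 0 ≤ deriv ψ t := fun t ht => hderiv_a ▸ hmono' ht
  have hderiv_nonpos : ∀ t, t ≤ a → deriv ψ t ≤ 0 := fun t ht => hderiv_a ▸ hmono' ht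
  -- differentiability of f with explicit derivative
  have hfd : ∀ x : ℝ, HasDerivAt f (if a ≤ x then deriv ψ x else 0) x := by
    intro x
    rcases lt_trichotomy x a with h | h | h
    · rw [if_neg (not_le.mpr h)]
      have hev : f =ᶠ[nhds x] fun _ => ψ a := by
        filter_upwards [IsOpen.mem_nhds isOpen_Iio h] with t ht
        rw [hf t, if_neg (not_le.mpr ht)]
      exact (hasDerivAt_const x (ψ a)).congr_of_eventuallyEq hev
    · subst h
      rw [if_pos le_rfl, hderiv_a]
      have hψa : HasDerivAt ψ 0 x := hderiv_a ▸ (hdiff x).hasDerivAt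
      rw [hasDerivAt_iff_isLittleO] at hψa ⊢
      simp only [smul_zero, sub_zero] at hψa ⊢
      have hbig : (fun t => f t - f x) =O[nhds x] fun t => ψ t - ψ x := by
        apply Asymptotics.isBigO_of_le
        intro t
        have hfx : f x = ψ x := by rw [hf x, if_pos le_rfl]
        rcases le_or_gt x t with ht | ht
        · rw [hf t, if_pos ht, hfx]
        · rw [hf t, if_neg (not_le.mpr ht), hfx]
          simp only [sub_self, norm_zero]
          exact norm_nonneg _
      exact hbig.trans_isLittleO hψa
    · rw [if_pos h.le]
      have hev : f =ᶠ[nhds x] ψ := by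
        filter_upwards [IsOpen.mem_nhds isOpen_Ioi h] with t ht
        rw [hf t, if_pos (le_of_lt ht)]
      exact ((hdiff x).hasDerivAt).congr_of_eventuallyEq hev
  have hdf : Differentiable ℝ f := fun x => ((hfd x).differentiableAt)
  have hderivf : ∀ x, deriv f x = if a ≤ x then deriv ψ x else 0 := fun x => (hfd x).deriv
  have hderivf0 : ∀ t, t ≤ a → deriv f t = 0 := by
    intro t ht
    rw [hderivf t]
    split_ifs with h
    · rw [le_antisymm ht h, hderiv_a]
    · rfl
  have hfle : ∀ t, f t ≤ ψ t := by
    intro t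
    rw [hf t]
    split_ifs with h
    · exact le_rfl
    · exact hmin t
  have hfa : ∀ t, t ≤ a → f t = ψ a := by
    intro t ht
    rw [hf t]
    split_ifs with h
    · rw [le_antisymm ht h]
    · rfl
  have hfge : ∀ t, ψ a ≤ f t := by
    intro t
    rw [hf t]
    split_ifs with h
    · exact hmin t
    · exact le_rfl
  refine ⟨hdf, ?_⟩
  intro x₀ x
  by_cases hcase : x ≤ a ∧ x₀ ≤ a
  · -- both points at or below a : everything is flat
    refine ⟨x₀, min_le_left _ _, le_max_left _ _, ?_, ?_⟩
    · rw [hderivf0 x₀ hcase.2, hfa x hcase.1, hfa x₀ hcase.2]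
      simp
    · rw [hderivf0 x₀ hcase.2, hfa x hcase.1, hfa x₀ hcase.2]
      simp only [sub_self, zero_mul, zero_add]
      exact mul_nonneg (by linarith [hpsi'' x₀]) (sq_nonneg _)
  · obtain ⟨ξ, hξ1, hξ2, heq⟩ := taylor1_between ψ hdiff hdiff2 x₀ x
    refine ⟨ξ, hξ1, hξ2, ?_, ?_⟩
    · -- lower bound, via convexity
      rcases le_or_gt a x₀ with h0 | h0
      · rw [hderivf x₀, if_pos h0, hf x₀, if_pos h0]
        rcases le_or_gt a x with h1 | h1
        · rw [hf x, if_pos h1]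
          have := htangent x₀ x
          linarith
        · rw [hf x, if_neg (not_le.mpr h1)]
          have ht := htangent x₀ a
          have h2 : deriv ψ x₀ * (x - x₀) ≤ deriv ψ x₀ * (a - x₀) :=
            mul_le_mul_of_nonneg_left (by linarith) (hderiv_nonneg x₀ h0)
          linarith
      · rw [hderivf0 x₀ h0.le, hfa x₀ h0.le]
        have := hfge x
        linarith
    · -- upper bound, via Taylor for ψ and comparison
      have hclaim : f x - f x₀ - deriv f x₀ * (x - x₀)
          ≤ ψ x - ψ x₀ - deriv ψ x₀ * (x - x₀) := by
        rcases le_or_gt a x₀ with h0 | h0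
        · rw [hderivf x₀, if_pos h0, hf x₀, if_pos h0]
          have := hfle x
          linarith
        · -- x₀ < a, so necessarily a < x (otherwise hcase)
          have hx : ¬ x ≤ a := fun hx => hcase ⟨hx, h0.le⟩
          push_neg at hx
          rw [hderivf0 x₀ h0.le, hfa x₀ h0.le, hf x, if_pos hx.le]
          have ht := htangent x₀ a
          have h2 : deriv ψ x₀ * (x - x₀) ≤ deriv ψ x₀ * (a - x₀) := by
            have := hderiv_nonpos x₀ h0.le
            nlinarith
          linarith
      linarith
end

section
/- Under the NormalHedge dynamics, the scale parameter is non-decreasing: for every round t ≥ 1, c_{t+1} ≥ c_t. (First part of Lemma 4.) -/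
open Real Finset Filter

/-- The NormalHedge dynamics with `N` actions.  Rounds are indexed by `t = 1, 2, …`;
`loss i t` is the loss of action `i` in round `t`, `p i t` its weight in round `t`,
`R i t` its cumulative regret after `t` rounds, and `c t` the scale parameter. -/
structure NormalHedge (N : ℕ) where
  hN : 2 ≤ N
  loss : Fin N → ℕ → ℝ
  p : Fin N → ℕ → ℝ
  R : Fin N → ℕ → ℝ
  c : ℕ → ℝ
  loss_mem : ∀ i t, 1 ≤ t → loss i t ∈ Set.Icc (0 : ℝ) 1
  p_one : ∀ i, p i 1 = 1 / N
  R_zero : ∀ i, R i 0 = 0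
  R_rec : ∀ i t, R i (t + 1) = R i t + ((∑ j, p j (t + 1) * loss j (t + 1)) - loss i (t + 1))
  c_pos : ∀ t, 1 ≤ t → 0 < c t
  c_eq : ∀ t, 1 ≤ t →
    (1 / N : ℝ) * ∑ i, Real.exp (max (R i t) 0 ^ 2 / (2 * c t)) = Real.exp 1
  p_rec : ∀ i t, 1 ≤ t →
    p i (t + 1) = (max (R i t) 0 / c t) * Real.exp (max (R i t) 0 ^ 2 / (2 * c t)) /
      ∑ j, (max (R j t) 0 / c t) * Real.exp (max (R j t) 0 ^ 2 / (2 * c t))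

lemma tangent_ineq (c x y : ℝ) (hc : 0 < c) :
    Real.exp (max x 0 ^ 2 / (2 * c)) +
      (max x 0 / c) * Real.exp (max x 0 ^ 2 / (2 * c)) * (y - x)
      ≤ Real.exp (max y 0 ^ 2 / (2 * c)) := by
  set a := max x 0 with ha'
  set b := max y 0 with hb'
  have ha : 0 ≤ a := le_max_right _ _
  have hb : 0 ≤ b := le_max_right _ _
  have hax : a * x = a ^ 2 := by
    rcases le_or_gt x 0 with h | h
    · have : a = 0 := max_eq_right h
      simp [this]
    · have : a = x := max_eq_left h.le
      rw [this]; ring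
  have hay : a * y ≤ a * b := mul_le_mul_of_nonneg_left (le_max_left _ _) ha
  have h2 : a * (y - x) / c ≤ (b ^ 2 - a ^ 2) / (2 * c) := by
    rw [div_le_div_iff₀ hc (by positivity)]
    nlinarith [sq_nonneg (b - a)]
  have hE : Real.exp (a ^ 2 / (2 * c)) * (1 + (b ^ 2 - a ^ 2) / (2 * c))
      ≤ Real.exp (b ^ 2 / (2 * c)) := by
    have h3 := Real.add_one_le_exp ((b ^ 2 - a ^ 2) / (2 * c))
    calc Real.exp (a ^ 2 / (2 * c)) * (1 + (b ^ 2 - a ^ 2) / (2 * c))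
        ≤ Real.exp (a ^ 2 / (2 * c)) * Real.exp ((b ^ 2 - a ^ 2) / (2 * c)) := by
          apply mul_le_mul_of_nonneg_left _ (Real.exp_nonneg _); linarith
      _ = Real.exp (b ^ 2 / (2 * c)) := by
          rw [← Real.exp_add]; ring_nf
  calc Real.exp (a ^ 2 / (2 * c)) + (a / c) * Real.exp (a ^ 2 / (2 * c)) * (y - x)
      = Real.exp (a ^ 2 / (2 * c)) * (1 + a * (y - x) / c) := by ring
    _ ≤ Real.exp (a ^ 2 / (2 * c)) * (1 + (b ^ 2 - a ^ 2) / (2 * c)) := by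
        apply mul_le_mul_of_nonneg_left _ (Real.exp_nonneg _); linarith
    _ ≤ Real.exp (b ^ 2 / (2 * c)) := hE

/-- If all the clipped regrets at time `t` were zero, the scale equation would force
`1 = e`, a contradiction; so some clipped regret is positive. -/
lemma exists_pos_regret {N : ℕ} (H : NormalHedge N) (t : ℕ) (ht : 1 ≤ t) :
    ∃ i : Fin N, 0 < max (H.R i t) 0 := by
  by_contra h
  push_neg at h
  have hz : ∀ i : Fin N, max (H.R i t) 0 = 0 :=
    fun i => le_antisymm (h i) (le_max_right _ _)
  have hEt := H.c_eq t ht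
  have hNpos : (0 : ℝ) < N := by
    have : (2 : ℕ) ≤ N := H.hN
    exact_mod_cast Nat.lt_of_lt_of_le Nat.zero_lt_two this
  have hs : ∑ i : Fin N, Real.exp (max (H.R i t) 0 ^ 2 / (2 * H.c t)) = N := by
    have : ∀ i : Fin N, Real.exp (max (H.R i t) 0 ^ 2 / (2 * H.c t)) = 1 := by
      intro i; rw [hz i]; norm_num
    simp [this]
  rw [hs] at hEt
  have h1 : (1 : ℝ) = Real.exp 1 := by
    field_simp at hEt
    simpa [mul_comm] using hEt
  have := Real.add_one_le_exp (1 : ℝ)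
  linarith [h1 ▸ this]

/-- First part of Lemma 4: under the NormalHedge dynamics, the scale parameter is
non-decreasing: for every round `t ≥ 1`, `c (t+1) ≥ c t`. -/
theorem normalHedge_scale_monotone {N : ℕ} (H : NormalHedge N)
    (t : ℕ) (ht : 1 ≤ t) :
    H.c t ≤ H.c (t + 1) := by
  by_contra hlt
  push_neg at hlt
  have hc : 0 < H.c t := H.c_pos t ht
  have hc' : 0 < H.c (t + 1) := H.c_pos (t + 1) (by omega)
  have hNpos : (0 : ℝ) < N := by
    have : (2 : ℕ) ≤ N := H.hN
    exact_mod_cast Nat.lt_of_lt_of_le Nat.zero_lt_two this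
  set w : Fin N → ℝ :=
    fun i => (max (H.R i t) 0 / H.c t) * Real.exp (max (H.R i t) 0 ^ 2 / (2 * H.c t))
    with hw
  have hwnn : ∀ i, 0 ≤ w i := by
    intro i
    have : (0 : ℝ) ≤ max (H.R i t) 0 := le_max_right _ _
    positivity
  have hWpos : 0 < ∑ j, w j := by
    obtain ⟨i₀, hi₀⟩ := exists_pos_regret H t ht
    refine Finset.sum_pos' (fun i _ => hwnn i) ⟨i₀, Finset.mem_univ _, ?_⟩
    have := Real.exp_pos (max (H.R i₀ t) 0 ^ 2 / (2 * H.c t))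
    positivity
  -- the weighted sum of instantaneous regrets is zero
  have hzero : ∑ i, w i *
      ((∑ j, H.p j (t + 1) * H.loss j (t + 1)) - H.loss i (t + 1)) = 0 := by
    have hp : ∀ i : Fin N, H.p i (t + 1) = w i / ∑ j, w j := fun i => H.p_rec i t ht
    have hL : (∑ j, H.p j (t + 1) * H.loss j (t + 1))
        = (∑ j, w j * H.loss j (t + 1)) / ∑ j, w j := by
      rw [Finset.sum_div]
      exact Finset.sum_congr rfl fun j _ => by rw [hp j, div_mul_eq_mul_div]
    rw [hL]
    have : ∑ i, w i * ((∑ j, w j * H.loss j (t + 1)) / (∑ j, w j) - H.loss i (t + 1))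
        = (∑ i, w i) * ((∑ j, w j * H.loss j (t + 1)) / (∑ j, w j))
          - ∑ i, w i * H.loss i (t + 1) := by
      rw [Finset.sum_mul]
      rw [← Finset.sum_sub_distrib]
      exact Finset.sum_congr rfl fun i _ => by ring
    rw [this, mul_div_cancel₀ _ (ne_of_gt hWpos)]
    ring
  -- potential at time t+1 with old scale dominates potential at time t
  have hpot : ∑ i, Real.exp (max (H.R i t) 0 ^ 2 / (2 * H.c t))
      ≤ ∑ i, Real.exp (max (H.R i (t + 1)) 0 ^ 2 / (2 * H.c t)) := by
    have step : ∀ i : Fin N,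
        Real.exp (max (H.R i t) 0 ^ 2 / (2 * H.c t)) +
          w i * ((∑ j, H.p j (t + 1) * H.loss j (t + 1)) - H.loss i (t + 1))
        ≤ Real.exp (max (H.R i (t + 1)) 0 ^ 2 / (2 * H.c t)) := by
      intro i
      have hy : H.R i (t + 1) - H.R i t
          = (∑ j, H.p j (t + 1) * H.loss j (t + 1)) - H.loss i (t + 1) := by
        rw [H.R_rec i t]; ring
      have := tangent_ineq (H.c t) (H.R i t) (H.R i (t + 1)) hc
      rw [hy] at this
      simpa [hw, mul_assoc] using this
    calc ∑ i, Real.exp (max (H.R i t) 0 ^ 2 / (2 * H.c t))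
        = ∑ i, (Real.exp (max (H.R i t) 0 ^ 2 / (2 * H.c t)) +
            w i * ((∑ j, H.p j (t + 1) * H.loss j (t + 1)) - H.loss i (t + 1))) := by
          rw [Finset.sum_add_distrib, hzero, add_zero]
      _ ≤ ∑ i, Real.exp (max (H.R i (t + 1)) 0 ^ 2 / (2 * H.c t)) :=
          Finset.sum_le_sum fun i _ => step i
  -- combine with the two scale equations
  have hEt := H.c_eq t ht
  have hEt1 := H.c_eq (t + 1) (by omega)
  have hsum : ∑ i, Real.exp (max (H.R i (t + 1)) 0 ^ 2 / (2 * H.c (t + 1)))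
      ≤ ∑ i, Real.exp (max (H.R i (t + 1)) 0 ^ 2 / (2 * H.c t)) := by
    have h1 : (1 / N : ℝ) * ∑ i, Real.exp (max (H.R i (t + 1)) 0 ^ 2 / (2 * H.c (t + 1)))
        = (1 / N : ℝ) * ∑ i, Real.exp (max (H.R i t) 0 ^ 2 / (2 * H.c t)) := by
      rw [hEt, hEt1]
    have h2 := mul_le_mul_of_nonneg_left hpot (by positivity : (0:ℝ) ≤ 1 / N)
    rw [← h1] at h2
    exact le_of_mul_le_mul_left h2 (by positivity)
  -- but the sum is strictly increasing when the scale strictly decreases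
  have hstrict : ∑ i, Real.exp (max (H.R i (t + 1)) 0 ^ 2 / (2 * H.c t))
      < ∑ i, Real.exp (max (H.R i (t + 1)) 0 ^ 2 / (2 * H.c (t + 1))) := by
    obtain ⟨i₀, hi₀⟩ := exists_pos_regret H (t + 1) (by omega)
    refine Finset.sum_lt_sum (fun i _ => ?_) ⟨i₀, Finset.mem_univ _, ?_⟩
    · apply Real.exp_le_exp.2
      apply div_le_div_of_nonneg_left (by positivity) (by positivity)
      linarith
    · apply Real.exp_lt_exp.2
      apply div_lt_div_of_pos_left (by positivity) (by positivity)
      linarith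
  linarith
end

section
/- Under the NormalHedge dynamics, the scale parameter grows at most geometrically: for every round t ≥ 1, c_{t+1} ≤ 2c_t(1 + ln N) + 3. (Lemma 2.) -/
open Real Finset Filter

set_option maxHeartbeats 1000000 in
/-- Lemma 2: under the NormalHedge dynamics, the scale grows at most geometrically:
for every round `t ≥ 1`, `c (t+1) ≤ 2 c t (1 + ln N) + 3`. -/
theorem normalHedge_scale_growth {N : ℕ} (H : NormalHedge N)
    (t : ℕ) (ht : 1 ≤ t) :
    H.c (t + 1) ≤ 2 * H.c t * (1 + Real.log N) + 3 := by
  have hN2 : 2 ≤ N := H.hN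
  have hNpos : (0:ℝ) < N := by exact_mod_cast Nat.lt_of_lt_of_le (by norm_num) hN2
  have hlogN : 0 ≤ Real.log N := Real.log_nonneg (by exact_mod_cast hN2.trans' (by norm_num))
  have hct : 0 < H.c t := H.c_pos t ht
  set a : ℝ := 2 * H.c t * (1 + Real.log N) with ha_def
  have ha0 : 0 ≤ a := by positivity
  -- Sum equation at time t
  have hS : ∑ i, Real.exp (max (H.R i t) 0 ^ 2 / (2 * H.c t)) = N * Real.exp 1 := by
    have := H.c_eq t ht
    field_simp at this
    linarith [this]
  -- each regret bounded by sqrt a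
  have hRt : ∀ i : Fin N, max (H.R i t) 0 ≤ Real.sqrt a := by
    intro i
    have hterm : Real.exp (max (H.R i t) 0 ^ 2 / (2 * H.c t)) ≤ N * Real.exp 1 := by
      rw [← hS]
      exact Finset.single_le_sum (f := fun j => Real.exp (max (H.R j t) 0 ^ 2 / (2 * H.c t)))
        (fun j _ => (Real.exp_pos _).le) (mem_univ i)
    have hNe : (N : ℝ) * Real.exp 1 = Real.exp (Real.log N + 1) := by
      rw [Real.exp_add, Real.exp_log hNpos]
    rw [hNe] at hterm
    have hle : max (H.R i t) 0 ^ 2 / (2 * H.c t) ≤ Real.log N + 1 := Real.exp_le_exp.mp hterm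
    have hsq : max (H.R i t) 0 ^ 2 ≤ a := by
      rw [div_le_iff₀ (by positivity)] at hle
      rw [ha_def]; nlinarith
    have := Real.sqrt_le_sqrt hsq
    rwa [Real.sqrt_sq (le_max_right _ _)] at this
  -- weights at t+1 are a probability distribution
  set w : Fin N → ℝ := fun j => (max (H.R j t) 0 / H.c t) *
      Real.exp (max (H.R j t) 0 ^ 2 / (2 * H.c t)) with hw_def
  have hw0 : ∀ j, 0 ≤ w j := fun j => by
    have := le_max_right (H.R j t) 0
    positivity
  have hDpos : 0 < ∑ j, w j := by
    -- some j has positive regret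
    by_contra hcon
    push_neg at hcon
    have hall : ∀ j, w j = 0 := by
      intro j
      by_contra hj
      have : 0 < w j := lt_of_le_of_ne (hw0 j) (Ne.symm hj)
      have : 0 < ∑ j, w j :=
        Finset.sum_pos' (fun k _ => hw0 k) ⟨j, mem_univ j, this⟩
      linarith
    have hall' : ∀ j : Fin N, max (H.R j t) 0 = 0 := by
      intro j
      by_contra hne
      have hpos : 0 < max (H.R j t) 0 := (le_max_right _ _).lt_of_ne (Ne.symm hne)
      have hwj : 0 < w j := by
        simp only [hw_def]
        exact mul_pos (div_pos hpos hct) (Real.exp_pos _)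
      rw [hall j] at hwj
      exact lt_irrefl _ hwj
    have : ∑ i, Real.exp (max (H.R i t) 0 ^ 2 / (2 * H.c t)) = (N : ℝ) := by
      calc ∑ i, Real.exp (max (H.R i t) 0 ^ 2 / (2 * H.c t))
          = ∑ _i : Fin N, (1 : ℝ) :=
            Finset.sum_congr rfl (fun i _ => by rw [hall' i]; simp)
        _ = (N : ℝ) := by simp
    rw [this] at hS
    nlinarith [Real.exp_one_gt_d9, hNpos, hS]
  have hp_nonneg : ∀ j, 0 ≤ H.p j (t+1) := by
    intro j
    rw [H.p_rec j t ht]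
    exact div_nonneg (hw0 j) hDpos.le
  have hp_sum : ∑ j, H.p j (t+1) = 1 := by
    rw [Finset.sum_congr rfl (fun j _ => H.p_rec j t ht), ← Finset.sum_div]
    exact div_self (ne_of_gt hDpos)
  -- learner's loss in [0,1]
  have hA0 : 0 ≤ ∑ j, H.p j (t+1) * H.loss j (t+1) :=
    Finset.sum_nonneg fun j _ => mul_nonneg (hp_nonneg j)
      (H.loss_mem j (t+1) (by omega)).1
  have hA1 : ∑ j, H.p j (t+1) * H.loss j (t+1) ≤ 1 := by
    calc ∑ j, H.p j (t+1) * H.loss j (t+1) ≤ ∑ j, H.p j (t+1) := by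
          apply Finset.sum_le_sum
          intro j _
          have := (H.loss_mem j (t+1) (by omega)).2
          nlinarith [hp_nonneg j]
      _ = 1 := hp_sum
  -- regrets at t+1 bounded
  have hRt1 : ∀ i : Fin N, max (H.R i (t+1)) 0 ≤ Real.sqrt a + 1 := by
    intro i
    apply max_le
    · have hr := H.R_rec i t
      have hl := (H.loss_mem i (t+1) (by omega)).1
      have := le_max_left (H.R i t) 0
      have := hRt i
      linarith
    · positivity
  -- scale equation at t+1: some term ≥ e
  have hS1 : ∑ i, Real.exp (max (H.R i (t+1)) 0 ^ 2 / (2 * H.c (t+1))) = N * Real.exp 1 := by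
    have := H.c_eq (t+1) (by omega)
    field_simp at this
    linarith [this]
  obtain ⟨i, hi⟩ : ∃ i : Fin N, Real.exp 1 ≤
      Real.exp (max (H.R i (t+1)) 0 ^ 2 / (2 * H.c (t+1))) := by
    by_contra hcon
    push_neg at hcon
    have : ∑ i : Fin N, Real.exp (max (H.R i (t+1)) 0 ^ 2 / (2 * H.c (t+1))) <
        ∑ _i : Fin N, Real.exp 1 := by
      have : Nonempty (Fin N) := ⟨⟨0, by omega⟩⟩
      apply Finset.sum_lt_sum_of_nonempty
      · exact Finset.univ_nonempty
      · exact fun j _ => hcon j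
    simp [hS1, Finset.card_univ] at this
  have hct1 : 0 < H.c (t+1) := H.c_pos (t+1) (by omega)
  have hkey : 2 * H.c (t+1) ≤ (Real.sqrt a + 1) ^ 2 := by
    have h1 : (1:ℝ) ≤ max (H.R i (t+1)) 0 ^ 2 / (2 * H.c (t+1)) := Real.exp_le_exp.mp hi
    rw [le_div_iff₀ (by positivity)] at h1
    have h2 : max (H.R i (t+1)) 0 ^ 2 ≤ (Real.sqrt a + 1) ^ 2 := by
      have hm0 := le_max_right (H.R i (t+1)) 0
      nlinarith [hRt1 i]
    linarith
  have hsqa : Real.sqrt a ^ 2 = a := Real.sq_sqrt ha0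
  have h2sqa : 2 * Real.sqrt a ≤ a + 1 := by
    nlinarith [sq_nonneg (Real.sqrt a - 1)]
  nlinarith [hkey, hsqa, h2sqa]
end

section
/- Under the NormalHedge dynamics, suppose that for some round t₀ and some constant 0 < δ ≤ 1/2 one has c_{t₀} ≥ (16 ln N)/δ². Then for every round t ≥ t₀, c_{t+1} − c_t ≤ e^δ(3/2 + δ + ln N)/(1 − δ² e^δ). (Lemma 5.) -/
open Real Finset Filter

noncomputable def nhF (c z : ℝ) : ℝ := Real.exp (max z 0 ^ 2 / (2 * c))
noncomputable def nhD (c z : ℝ) : ℝ := max z 0 / c * Real.exp (max z 0 ^ 2 / (2 * c))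
noncomputable def nhK (c B : ℝ) : ℝ := (1/c + B^2/c^2) * Real.exp (B^2/(2*c))

lemma hasDerivAt_maxsq (z : ℝ) : HasDerivAt (fun w => max w 0 ^ 2) (2 * max z 0) z := by
  rcases lt_trichotomy z 0 with hz | hz | hz
  · have h : (fun w : ℝ => max w 0 ^ 2) =ᶠ[nhds z] fun _ => (0:ℝ) := by
      filter_upwards [eventually_lt_nhds hz] with w hw
      simp [max_eq_right hw.le]
    rw [max_eq_right hz.le, mul_zero]
    exact (hasDerivAt_const z (0:ℝ)).congr_of_eventuallyEq h
  · subst hz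
    rw [max_self, mul_zero, hasDerivAt_iff_isLittleO]
    rw [Asymptotics.isLittleO_iff]
    intro ε hε
    filter_upwards [Metric.eventually_nhds_iff.2 ⟨ε, hε, fun {y} h => h⟩] with w hw
    have h1 : max w 0 ^ 2 ≤ w ^ 2 := by
      rcases le_total w 0 with h | h
      · rw [max_eq_right h]; simpa using sq_nonneg w
      · rw [max_eq_left h]
    have habs : |w| < ε := by simpa [Real.dist_eq] using hw
    have : ‖max w 0 ^ 2 - max (0:ℝ) 0 ^2 - (w - 0) • (0:ℝ)‖ = max w 0 ^ 2 := by
      simp [abs_of_nonneg (by positivity : (0:ℝ) ≤ max w 0 ^ 2)]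
    rw [this]
    calc max w 0 ^ 2 ≤ w ^ 2 := h1
      _ = |w| * |w| := (abs_mul_abs_self w).symm ▸ (sq w)
      _ ≤ ε * ‖w - 0‖ := by
          rw [sub_zero]
          exact mul_le_mul habs.le le_rfl (abs_nonneg _) hε.le
  · have h : (fun w : ℝ => max w 0 ^ 2) =ᶠ[nhds z] fun w => w ^ 2 := by
      filter_upwards [eventually_gt_nhds hz] with w hw
      simp [max_eq_left hw.le]
    rw [max_eq_left hz.le]
    have := hasDerivAt_pow 2 z
    simp only [Nat.cast_ofNat, pow_one] at this
    exact (by simpa [mul_comm] using this : HasDerivAt (fun w : ℝ => w ^ 2) (2*z) z).congr_of_eventuallyEq h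

lemma hasDerivAt_nhF (c : ℝ) (hc : c ≠ 0) (z : ℝ) : HasDerivAt (nhF c) (nhD c z) z := by
  have h := ((hasDerivAt_maxsq z).div_const (2*c)).exp
  have e : Real.exp (max z 0 ^2/(2*c)) * (2 * max z 0 / (2*c)) = nhD c z := by
    unfold nhD; field_simp
  rw [← e]
  exact h

lemma nhD_nonneg {c : ℝ} (hc : 0 < c) (z : ℝ) : 0 ≤ nhD c z := by
  unfold nhD
  have : (0:ℝ) ≤ max z 0 := le_max_right _ _
  positivity

lemma nhD_mono {c : ℝ} (hc : 0 < c) : Monotone (nhD c) := by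
  intro a b hab
  unfold nhD
  have h0a : (0:ℝ) ≤ max a 0 := le_max_right _ _
  have hm : max a 0 ≤ max b 0 := max_le_max hab le_rfl
  apply mul_le_mul
  · gcongr
  · have hsq : max a 0 ^2 ≤ max b 0 ^2 := by nlinarith
    exact Real.exp_le_exp.2 (by gcongr)
  · positivity
  · positivity

lemma nhF_cont (c : ℝ) (hc : c ≠ 0) : Continuous (nhF c) :=
  continuous_iff_continuousAt.2 fun z => (hasDerivAt_nhF c hc z).continuousAt

/-- tangent line inequality (convexity) -/
lemma nhF_tangent {c : ℝ} (hc : 0 < c) (a b : ℝ) :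
    nhF c a + (b - a) * nhD c a ≤ nhF c b := by
  rcases lt_trichotomy a b with h | h | h
  · obtain ⟨ξ, hξ, hslope⟩ := exists_hasDerivAt_eq_slope (nhF c) (nhD c) h
      ((nhF_cont c hc.ne').continuousOn) (fun x _ => hasDerivAt_nhF c hc.ne' x)
    have h1 : nhD c a ≤ nhD c ξ := nhD_mono hc hξ.1.le
    rw [eq_div_iff (by linarith : b - a ≠ 0)] at hslope
    nlinarith [h1, sub_pos.2 h]
  · subst h; simp
  · obtain ⟨ξ, hξ, hslope⟩ := exists_hasDerivAt_eq_slope (nhF c) (nhD c) h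
      ((nhF_cont c hc.ne').continuousOn) (fun x _ => hasDerivAt_nhF c hc.ne' x)
    have h1 : nhD c ξ ≤ nhD c a := nhD_mono hc hξ.2.le
    rw [eq_div_iff (by linarith : a - b ≠ 0)] at hslope
    nlinarith [h1, sub_pos.2 h]

lemma hasDerivAt_nhh (c : ℝ) (hc : c ≠ 0) (x : ℝ) :
    HasDerivAt (fun x : ℝ => x / c * Real.exp (x^2/(2*c))) (nhK c x) x := by
  have h1 : HasDerivAt (fun x : ℝ => x / c) (1/c) x := (hasDerivAt_id x).div_const c
  have h2 : HasDerivAt (fun x : ℝ => Real.exp (x^2/(2*c))) (Real.exp (x^2/(2*c)) * (2*x/(2*c))) x := by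
    exact (((hasDerivAt_pow 2 x).congr_deriv (by simp [mul_comm])).div_const (2*c)).exp
  have := h1.mul h2
  refine this.congr_deriv ?_
  unfold nhK
  field_simp

lemma nhK_nonneg {c : ℝ} (hc : 0 < c) (B : ℝ) : 0 ≤ nhK c B := by
  unfold nhK; positivity

lemma nhK_mono {c : ℝ} (hc : 0 < c) {A B : ℝ} (hA : 0 ≤ A) (hAB : A ≤ B) :
    nhK c A ≤ nhK c B := by
  unfold nhK
  have hsq : A^2 ≤ B^2 := by nlinarith
  have h1 : Real.exp (A^2/(2*c)) ≤ Real.exp (B^2/(2*c)) := Real.exp_le_exp.2 (by gcongr)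
  have h2 : 1/c + A^2/c^2 ≤ 1/c + B^2/c^2 := by gcongr
  apply mul_le_mul h2 h1 (Real.exp_pos _).le
  positivity

lemma nhD_lip {c : ℝ} (hc : 0 < c) {w z B : ℝ} (hwz : w ≤ z) (hB : max z 0 ≤ B) :
    nhD c z - nhD c w ≤ (z - w) * nhK c B := by
  set m := max z 0 with hm
  set n := max w 0 with hn
  have hnm : n ≤ m := max_le_max hwz le_rfl
  have hmn_le : m - n ≤ z - w := by
    rcases le_total w 0 with h | h
    · rcases le_total z 0 with h2 | h2
      · simp [hm, hn, max_eq_right h, max_eq_right h2]; linarith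
      · rw [hm, hn, max_eq_left h2, max_eq_right h]; linarith
    · rw [hm, hn, max_eq_left (le_trans h hwz), max_eq_left h]
  have hKnn := nhK_nonneg hc B
  rcases eq_or_lt_of_le hnm with he | hlt
  · unfold nhD; rw [← hm, ← hn, ← he]
    have : (0:ℝ) ≤ (z - w) * nhK c B := mul_nonneg (by linarith) hKnn
    linarith
  · obtain ⟨η, hη, hslope⟩ := exists_hasDerivAt_eq_slope
      (fun x : ℝ => x / c * Real.exp (x^2/(2*c))) (nhK c) hlt
      (Continuous.continuousOn (by
        apply continuous_iff_continuousAt.2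
        exact fun x => (hasDerivAt_nhh c hc.ne' x).continuousAt))
      (fun x _ => hasDerivAt_nhh c hc.ne' x)
    rw [eq_div_iff (by linarith : m - n ≠ 0)] at hslope
    have hη0 : 0 ≤ η := le_trans (le_max_right _ _) hη.1.le
    have hηB : η ≤ B := le_trans hη.2.le hB
    have hKη : nhK c η ≤ nhK c B := nhK_mono hc hη0 hηB
    have hDz : nhD c z = m / c * Real.exp (m^2/(2*c)) := rfl
    have hDw : nhD c w = n / c * Real.exp (n^2/(2*c)) := rfl
    rw [hDz, hDw]
    have h1 : m / c * Real.exp (m^2/(2*c)) - n / c * Real.exp (n^2/(2*c)) = nhK c η * (m - n) := hslope.symm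
    rw [h1]
    calc nhK c η * (m - n) ≤ nhK c B * (m - n) := by
          apply mul_le_mul_of_nonneg_right hKη (by linarith)
      _ ≤ nhK c B * (z - w) := by apply mul_le_mul_of_nonneg_left hmn_le hKnn
      _ = (z - w) * nhK c B := mul_comm _ _

lemma nhF_taylor {c : ℝ} (hc : 0 < c) (a r : ℝ) (hr : |r| ≤ 1) :
    nhF c (a + r) ≤ nhF c a + r * nhD c a + r^2/2 * nhK c (max a 0 + 1) := by
  set K := nhK c (max a 0 + 1) with hK
  set F : ℝ → ℝ := fun s => nhF c a + s * nhD c a + s^2/2 * K - nhF c (a + s) with hF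
  have hFd : ∀ s : ℝ, HasDerivAt F (nhD c a + s * K - nhD c (a + s)) s := by
    intro s
    have h1 : HasDerivAt (fun s : ℝ => nhF c (a + s)) (nhD c (a + s)) s := by
      have := (hasDerivAt_nhF c hc.ne' (a + s)).comp s ((hasDerivAt_id s).const_add a)
      rw [mul_one] at this; exact this
    have h2 : HasDerivAt (fun s : ℝ => nhF c a + s * nhD c a + s^2/2 * K) (nhD c a + s * K) s := by
      have ha : HasDerivAt (fun s : ℝ => s * nhD c a) (nhD c a) s := by
        simpa using (hasDerivAt_id s).mul_const (nhD c a)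
      have hb : HasDerivAt (fun s : ℝ => s^2/2*K) (s * K) s := by
        have := ((hasDerivAt_pow 2 s).div_const 2).mul_const K
        refine this.congr_deriv ?_
        push_cast
        ring
      exact ((ha.const_add _).add hb)
    exact h2.sub h1
  have hF0 : F 0 = 0 := by simp [hF]
  -- key: show 0 ≤ F r
  have key : 0 ≤ F r := by
    rcases lt_trichotomy r 0 with h | h | h
    · obtain ⟨ξ, hξ, hslope⟩ := exists_hasDerivAt_eq_slope F
        (fun s => nhD c a + s * K - nhD c (a + s)) h
        (Continuous.continuousOn (by
          apply continuous_iff_continuousAt.2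
          exact fun x => (hFd x).continuousAt))
        (fun x _ => hFd x)
      rw [hF0, eq_div_iff (by linarith : (0:ℝ) - r ≠ 0)] at hslope
      -- hslope : nhD c a + ξ*K - nhD c (a+ξ) = (0 - F r)/(0-r)... now multiplied
      have hξr : r < ξ := hξ.1
      have hξ0 : ξ < 0 := hξ.2
      have hlip : nhD c a - nhD c (a + ξ) ≤ (a - (a + ξ)) * K := by
        apply nhD_lip hc (by linarith)
        linarith [le_max_right a (0:ℝ)]
      -- F' ξ ≤ 0
      have hd : nhD c a + ξ * K - nhD c (a + ξ) ≤ 0 := by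
        have : (a - (a+ξ)) * K = -ξ * K := by ring
        rw [this] at hlip
        linarith
      nlinarith [hslope, hd, h]
    · rw [h, hF0]
    · obtain ⟨ξ, hξ, hslope⟩ := exists_hasDerivAt_eq_slope F
        (fun s => nhD c a + s * K - nhD c (a + s)) h
        (Continuous.continuousOn (by
          apply continuous_iff_continuousAt.2
          exact fun x => (hFd x).continuousAt))
        (fun x _ => hFd x)
      rw [hF0, eq_div_iff (by linarith : r - (0:ℝ) ≠ 0)] at hslope
      have hξ0 : 0 < ξ := hξ.1
      have hξr : ξ < r := hξ.2
      have hξ1 : ξ ≤ 1 := le_trans hξr.le (le_trans (le_abs_self r) hr)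
      have hlip : nhD c (a + ξ) - nhD c a ≤ ((a + ξ) - a) * K := by
        apply nhD_lip hc (by linarith)
        have : max (a+ξ) 0 ≤ max a 0 + ξ := by
          apply max_le <;> [linarith [le_max_left a (0:ℝ)]; linarith [le_max_right a (0:ℝ), hξ0]]
        linarith
      have hd : 0 ≤ nhD c a + ξ * K - nhD c (a + ξ) := by
        have : ((a+ξ) - a) * K = ξ * K := by ring
        rw [this] at hlip
        linarith
      nlinarith [hslope, hd, h]
  have h2 : 0 ≤ nhF c a + r * nhD c a + r^2/2 * nhK c (max a 0 + 1) - nhF c (a + r) := key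
  linarith

section perRound
open Finset
variable {N : ℕ} (H : NormalHedge N) (s : ℕ) (hs : 1 ≤ s)

lemma Npos {N : ℕ} (H : NormalHedge N) : (0:ℝ) < N := by
  have := H.hN; positivity

include hs in
lemma sum_nhF_eq : ∑ i, nhF (H.c s) (H.R i s) = N * Real.exp 1 := by
  have h := H.c_eq s hs
  have hN := Npos H
  unfold nhF
  field_simp at h
  linarith [h]

include hs in
lemma exists_regret_pos : ∃ j, 0 < max (H.R j s) 0 := by
  by_contra hcon
  push_neg at hcon
  have hall : ∀ j, max (H.R j s) 0 = 0 := fun j => le_antisymm (hcon j) (le_max_right _ _)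
  have h := H.c_eq s hs
  have hN := Npos H
  rw [Finset.sum_congr rfl (fun i _ => by rw [hall i]; norm_num : ∀ i ∈ Finset.univ, Real.exp (max (H.R i s) 0 ^ 2 / (2 * H.c s)) = 1)] at h
  simp at h
  have h1 : (1:ℝ) < Real.exp 1 := by
    have := Real.exp_one_gt_d9; norm_num at this; linarith
  have h2 : (N:ℝ)⁻¹ * N = 1 := inv_mul_cancel₀ hN.ne'
  rw [h2] at h
  linarith

include hs in
lemma W_pos : 0 < ∑ j, nhD (H.c s) (H.R j s) := by
  obtain ⟨j, hj⟩ := exists_regret_pos H s hs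
  have hc := H.c_pos s hs
  apply Finset.sum_pos' (fun i _ => nhD_nonneg hc _)
  refine ⟨j, Finset.mem_univ j, ?_⟩
  unfold nhD
  positivity

/-- the per-round regret increment -/
noncomputable def rr (i : Fin N) : ℝ :=
  (∑ j, H.p j (s+1) * H.loss j (s+1)) - H.loss i (s+1)

lemma R_succ (i : Fin N) : H.R i (s+1) = H.R i s + rr H s i := H.R_rec i s

include hs in
lemma rr_abs (i : Fin N) : |rr H s i| ≤ 1 := by
  have hc := H.c_pos s hs
  have hW := W_pos H s hs
  have hp : ∀ j : Fin N, H.p j (s+1) = nhD (H.c s) (H.R j s) / ∑ k, nhD (H.c s) (H.R k s) :=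
    fun j => H.p_rec j s hs
  have hpnn : ∀ j : Fin N, 0 ≤ H.p j (s+1) := fun j => by
    rw [hp j]; exact div_nonneg (nhD_nonneg hc _) hW.le
  have hps : ∑ j, H.p j (s+1) = 1 := by
    rw [Finset.sum_congr rfl (fun j _ => hp j), ← Finset.sum_div, div_self hW.ne']
  have hl : ∀ j : Fin N, H.loss j (s+1) ∈ Set.Icc (0:ℝ) 1 := fun j =>
    H.loss_mem j (s+1) (by omega)
  have hA0 : 0 ≤ ∑ j, H.p j (s+1) * H.loss j (s+1) :=
    Finset.sum_nonneg fun j _ => mul_nonneg (hpnn j) (hl j).1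
  have hA1 : ∑ j, H.p j (s+1) * H.loss j (s+1) ≤ 1 := by
    calc ∑ j, H.p j (s+1) * H.loss j (s+1) ≤ ∑ j, H.p j (s+1) * 1 :=
          Finset.sum_le_sum fun j _ => mul_le_mul_of_nonneg_left (hl j).2 (hpnn j)
      _ = 1 := by simpa using hps
  have := (hl i).1; have := (hl i).2
  rw [abs_le]
  constructor <;> [unfold rr; unfold rr] <;> linarith

include hs in
lemma sum_nhD_rr : ∑ i, nhD (H.c s) (H.R i s) * rr H s i = 0 := by
  have hW := W_pos H s hs
  set W := ∑ k, nhD (H.c s) (H.R k s) with hWdef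
  have hp : ∀ j : Fin N, H.p j (s+1) = nhD (H.c s) (H.R j s) / W :=
    fun j => H.p_rec j s hs
  set A := ∑ j, H.p j (s+1) * H.loss j (s+1) with hA
  have hWA : W * A = ∑ j, nhD (H.c s) (H.R j s) * H.loss j (s+1) := by
    rw [hA, Finset.mul_sum]
    apply Finset.sum_congr rfl
    intro j _
    rw [hp j]
    field_simp
  have : ∑ i, nhD (H.c s) (H.R i s) * rr H s i
      = W * A - ∑ j, nhD (H.c s) (H.R j s) * H.loss j (s+1) := by
    unfold rr
    rw [Finset.sum_congr rfl (fun i (_ : i ∈ Finset.univ) => mul_sub (nhD (H.c s) (H.R i s)) A (H.loss i (s+1))), Finset.sum_sub_distrib, ← Finset.sum_mul, ← hWdef, mul_comm W A]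
  rw [this, hWA, sub_self]
end perRound

lemma nhF_anti {c c' z : ℝ} (hc' : 0 < c') (h : c' ≤ c) : nhF c z ≤ nhF c' z := by
  unfold nhF
  apply Real.exp_le_exp.2
  have h0 : (0:ℝ) ≤ max z 0 ^ 2 := sq_nonneg _
  gcongr

lemma nhF_anti_strict {c c' z : ℝ} (hc' : 0 < c') (h : c' < c) (hz : 0 < max z 0) :
    nhF c z < nhF c' z := by
  unfold nhF
  apply Real.exp_lt_exp.2
  apply div_lt_div_of_pos_left (by positivity) (by linarith) (by linarith)

/-- pointwise tangent-of-rpow inequality, via weighted AM-GM -/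
lemma exp_theta_bound {θ : ℝ} (hθ0 : 0 < θ) (hθ1 : θ ≤ 1) (v : ℝ) :
    Real.exp (θ * v) ≤ (1 - θ) * Real.exp θ + θ * Real.exp (θ - 1 + v) := by
  have hamgm := Real.geom_mean_le_arith_mean2_weighted (w₁ := 1 - θ) (w₂ := θ)
    (p₁ := Real.exp (-θ * (v - 1))) (p₂ := Real.exp ((1 - θ) * (v - 1)))
    (by linarith) hθ0.le (Real.exp_pos _).le (Real.exp_pos _).le (by ring)
  have h1 : Real.exp (-θ * (v-1)) ^ (1 - θ) * Real.exp ((1-θ)*(v-1)) ^ θ = 1 := by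
    rw [← Real.exp_mul, ← Real.exp_mul, ← Real.exp_add]
    rw [show -θ * (v-1) * (1-θ) + (1-θ)*(v-1)*θ = 0 by ring, Real.exp_zero]
  rw [h1] at hamgm
  have h2 : Real.exp (θ * v) * ((1-θ) * Real.exp (-θ*(v-1)) + θ * Real.exp ((1-θ)*(v-1)))
      = (1 - θ) * Real.exp θ + θ * Real.exp (θ - 1 + v) := by
    rw [mul_add, ← mul_assoc, ← mul_assoc, mul_comm (Real.exp (θ*v)) (1-θ),
      mul_comm (Real.exp (θ*v)) θ, mul_assoc, mul_assoc, ← Real.exp_add, ← Real.exp_add]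
    ring_nf
  calc Real.exp (θ * v) = Real.exp (θ * v) * 1 := (mul_one _).symm
    _ ≤ Real.exp (θ * v) * ((1-θ) * Real.exp (-θ*(v-1)) + θ * Real.exp ((1-θ)*(v-1))) := by
        apply mul_le_mul_of_nonneg_left hamgm (Real.exp_pos _).le
    _ = _ := h2

lemma c_mono {N : ℕ} (H : NormalHedge N) (s : ℕ) (hs : 1 ≤ s) : H.c s ≤ H.c (s+1) := by
  have hc := H.c_pos s hs
  have hc' := H.c_pos (s+1) (by omega)
  by_contra hcon
  push_neg at hcon
  -- lower bound: ∑ nhF (c s) (R i (s+1)) ≥ N e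
  have hlow : (N:ℝ) * Real.exp 1 ≤ ∑ i, nhF (H.c s) (H.R i (s+1)) := by
    have h1 : ∀ i : Fin N, nhF (H.c s) (H.R i s) + rr H s i * nhD (H.c s) (H.R i s)
        ≤ nhF (H.c s) (H.R i (s+1)) := by
      intro i
      rw [R_succ H s i]
      have := nhF_tangent hc (H.R i s) (H.R i s + rr H s i)
      simpa using this
    calc (N:ℝ) * Real.exp 1
        = ∑ i, nhF (H.c s) (H.R i s) + ∑ i, nhD (H.c s) (H.R i s) * rr H s i := by
          rw [sum_nhF_eq H s hs, sum_nhD_rr H s hs, add_zero]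
      _ = ∑ i, (nhF (H.c s) (H.R i s) + rr H s i * nhD (H.c s) (H.R i s)) := by
          rw [← Finset.sum_add_distrib]
          apply Finset.sum_congr rfl
          intros; ring
      _ ≤ _ := Finset.sum_le_sum fun i _ => h1 i
  obtain ⟨j, hj⟩ := exists_regret_pos H (s+1) (by omega)
  have hstrict : ∑ i, nhF (H.c s) (H.R i (s+1)) < ∑ i, nhF (H.c (s+1)) (H.R i (s+1)) := by
    apply Finset.sum_lt_sum
    · exact fun i _ => nhF_anti hc' hcon.le
    · exact ⟨j, Finset.mem_univ j, nhF_anti_strict hc' hcon hj⟩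
  have := sum_nhF_eq H (s+1) (by omega)
  rw [this] at hstrict
  linarith

set_option maxHeartbeats 1000000 in
lemma c_succ_le {N : ℕ} (H : NormalHedge N) (s : ℕ) (hs : 1 ≤ s)
    (δ : ℝ) (hδ0 : 0 < δ) (hδ1 : δ ≤ 1/2)
    (hcs : 16 * Real.log N / δ^2 ≤ H.c s) :
    H.c (s+1) ≤ H.c s + Real.exp δ * (3/2 + δ + Real.log N) := by
  set c := H.c s with hcdef
  set L := Real.log N with hLdef
  have hc : 0 < c := H.c_pos s hs
  have hN : (0:ℝ) < N := Npos H
  have hL2 : Real.log 2 ≤ L := Real.log_le_log (by norm_num) (by exact_mod_cast H.hN)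
  have hL : (0.69:ℝ) < L := lt_of_lt_of_le (by linarith [Real.log_two_gt_d9]) hL2
  have hδc : 16 * L ≤ δ^2 * c := by
    rw [div_le_iff₀ (by positivity)] at hcs
    linarith [hcs]
  have hsum : ∑ i, nhF c (H.R i s) = N * Real.exp 1 := sum_nhF_eq H s hs
  -- abbreviations
  set x : Fin N → ℝ := fun i => max (H.R i s) 0 with hxdef
  have hx0 : ∀ i, 0 ≤ x i := fun i => le_max_right _ _
  set u : Fin N → ℝ := fun i => x i ^ 2 / (2 * c) with hudef
  have hu0 : ∀ i, 0 ≤ u i := fun i => by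
    have := hx0 i; positivity
  have hnhF : ∀ i, nhF c (H.R i s) = Real.exp (u i) := fun i => rfl
  -- u i ≤ 1 + L
  have hu_le : ∀ i, u i ≤ 1 + L := by
    intro i
    have h1 : Real.exp (u i) ≤ N * Real.exp 1 := by
      rw [← hsum, ← hnhF i]
      exact Finset.single_le_sum (f := fun j => nhF c (H.R j s))
        (fun j _ => (Real.exp_pos _).le) (Finset.mem_univ i)
    have h2 : (N:ℝ) * Real.exp 1 = Real.exp (L + 1) := by
      rw [Real.exp_add, hLdef, Real.exp_log hN]
    rw [h2] at h1
    have := Real.exp_le_exp.1 h1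
    linarith
  -- x i ≤ 3/4 δ c
  have hx_le : ∀ i, x i ≤ 3/4 * δ * c := by
    intro i
    have h1 : x i ^ 2 ≤ 2 * c * (1 + L) := by
      have := hu_le i
      rw [hudef] at this
      simp only at this
      rw [div_le_iff₀ (by positivity)] at this
      linarith
    have h2 : 2 * c * (1 + L) ≤ (3/4 * δ * c)^2 := by
      have hc2 : (3/4 * δ * c)^2 = 9/16 * (δ^2 * c) * c := by ring
      rw [hc2]
      nlinarith [hδc, hL, hc]
    have hB : 0 < 3/4 * δ * c := by positivity
    nlinarith [hx0 i, h1, h2, hB, sq_nonneg (x i - 3/4 * δ * c)]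
  -- (2 x i + 1) / (2 c) ≤ δ
  have hδbd : ∀ i, (2 * x i + 1) / (2 * c) ≤ δ := by
    intro i
    rw [div_le_iff₀ (by positivity)]
    have h1 : 1 ≤ δ/4 * (2 * c) := by
      -- c ≥ 2/δ
      have hδ2 : δ * δ ≤ δ * (1/2) := by nlinarith
      have : 2 ≤ δ * c := by nlinarith [hδc, hL, hδ0, hδ1]
      nlinarith
    nlinarith [hx_le i, hδ0, hc]
  -- bound nhK
  have hK_bd : ∀ i, nhK c (x i + 1) ≤ 1/c * (1 + 2*δ + 2 * u i) * Real.exp δ * Real.exp (u i) := by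
    intro i
    have hB2 : (x i + 1)^2 / (2*c) = u i + (2 * x i + 1)/(2*c) := by
      rw [hudef]; field_simp; ring
    have hexp : Real.exp ((x i + 1)^2/(2*c)) ≤ Real.exp δ * Real.exp (u i) := by
      rw [← Real.exp_add]
      apply Real.exp_le_exp.2
      rw [hB2]
      linarith [hδbd i]
    have hcoef : 1/c + (x i + 1)^2/c^2 ≤ 1/c * (1 + 2*δ + 2*u i) := by
      have h3 : (x i + 1)^2/c^2 = 2/c * ((x i + 1)^2/(2*c)) := by field_simp
      rw [h3, hB2]
      have := hδbd i
      have h4 : 2/c * (u i + (2 * x i + 1)/(2*c)) ≤ 2/c * (u i + δ) := by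
        apply mul_le_mul_of_nonneg_left (by linarith) (by positivity)
      calc 1/c + 2/c * (u i + (2 * x i + 1)/(2*c)) ≤ 1/c + 2/c * (u i + δ) := by linarith
        _ = 1/c * (1 + 2*δ + 2*u i) := by field_simp; ring
    unfold nhK
    calc (1/c + (x i + 1)^2/c^2) * Real.exp ((x i+1)^2/(2*c))
        ≤ (1/c * (1 + 2*δ + 2*u i)) * (Real.exp δ * Real.exp (u i)) := by
          apply mul_le_mul hcoef hexp (Real.exp_pos _).le
          have := hu0 i; positivity
      _ = 1/c * (1 + 2*δ + 2 * u i) * Real.exp δ * Real.exp (u i) := by ring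
  -- Taylor per i
  have htaylor : ∀ i, nhF c (H.R i (s+1))
      ≤ nhF c (H.R i s) + rr H s i * nhD c (H.R i s) + 1/2 * nhK c (x i + 1) := by
    intro i
    rw [R_succ H s i]
    have hr := rr_abs H s hs i
    have := nhF_taylor hc (H.R i s) (rr H s i) hr
    have hr2 : rr H s i ^ 2 / 2 ≤ 1/2 := by
      have : rr H s i ^2 ≤ 1 := by
        have := abs_le.1 hr; nlinarith
      linarith
    have hKnn := nhK_nonneg hc (x i + 1)
    have this2 : nhF c (H.R i s + rr H s i) ≤ nhF c (H.R i s) + rr H s i * nhD c (H.R i s)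
        + rr H s i ^2/2 * nhK c (x i + 1) := this
    have hmul := mul_le_mul_of_nonneg_right hr2 hKnn
    linarith
  -- sum the Taylor bound
  set K := 3/2 + δ + L with hKdef
  have hsum2 : ∑ i, nhF c (H.R i (s+1)) ≤ N * Real.exp 1 * (1 + Real.exp δ * K / c) := by
    have h1 : ∑ i, nhF c (H.R i (s+1))
        ≤ ∑ i, (nhF c (H.R i s) + rr H s i * nhD c (H.R i s) + 1/2 * nhK c (x i + 1)) :=
      Finset.sum_le_sum fun i _ => htaylor i
    have h2 : ∑ i, (nhF c (H.R i s) + rr H s i * nhD c (H.R i s) + 1/2 * nhK c (x i + 1))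
        = N * Real.exp 1 + ∑ i, 1/2 * nhK c (x i + 1) := by
      rw [Finset.sum_add_distrib, Finset.sum_add_distrib, hsum]
      have : ∑ i, rr H s i * nhD c (H.R i s) = 0 := by
        rw [← sum_nhD_rr H s hs]
        apply Finset.sum_congr rfl
        intros; ring
      rw [this, add_zero]
    have h3 : ∑ i, 1/2 * nhK c (x i + 1)
        ≤ ∑ i, 1/(2*c) * Real.exp δ * ((1 + 2*δ + 2 * u i) * Real.exp (u i)) := by
      apply Finset.sum_le_sum
      intro i _
      have := hK_bd i
      calc 1/2 * nhK c (x i + 1) ≤ 1/2 * (1/c * (1 + 2*δ + 2 * u i) * Real.exp δ * Real.exp (u i)) := by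
            apply mul_le_mul_of_nonneg_left this (by norm_num)
        _ = 1/(2*c) * Real.exp δ * ((1 + 2*δ + 2 * u i) * Real.exp (u i)) := by
            field_simp
    have h4 : ∑ i, (1 + 2*δ + 2 * u i) * Real.exp (u i) ≤ (3 + 2*δ + 2*L) * (N * Real.exp 1) := by
      have h5 : ∀ i, (1 + 2*δ + 2*u i) * Real.exp (u i) ≤ (3 + 2*δ + 2*L) * Real.exp (u i) := by
        intro i
        apply mul_le_mul_of_nonneg_right _ (Real.exp_pos _).le
        linarith [hu_le i]
      calc ∑ i, (1 + 2*δ + 2 * u i) * Real.exp (u i) ≤ ∑ i, (3 + 2*δ + 2*L) * Real.exp (u i) :=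
            Finset.sum_le_sum fun i _ => h5 i
        _ = (3 + 2*δ + 2*L) * ∑ i, Real.exp (u i) := by rw [Finset.mul_sum]
        _ = (3 + 2*δ + 2*L) * (N * Real.exp 1) := by
            rw [← hsum]
            congr 1
    have h6 : ∑ i, 1/(2*c) * Real.exp δ * ((1 + 2*δ + 2 * u i) * Real.exp (u i))
        = 1/(2*c) * Real.exp δ * ∑ i, (1 + 2*δ + 2 * u i) * Real.exp (u i) := by
      rw [Finset.mul_sum]
    have h7 : 1/(2*c) * Real.exp δ * ((3 + 2*δ + 2*L) * (N * Real.exp 1))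
        = N * Real.exp 1 * (Real.exp δ * K / c) := by
      rw [hKdef]; field_simp
    have h8 : 0 ≤ 1/(2*c) * Real.exp δ := by positivity
    calc ∑ i, nhF c (H.R i (s+1)) ≤ N * Real.exp 1 + ∑ i, 1/2 * nhK c (x i + 1) := by
          rw [← h2]; exact h1
      _ ≤ N * Real.exp 1 + 1/(2*c) * Real.exp δ * ((3 + 2*δ + 2*L) * (N * Real.exp 1)) := by
          have := le_trans h3 (h6 ▸ mul_le_mul_of_nonneg_left h4 h8)
          linarith
      _ = N * Real.exp 1 * (1 + Real.exp δ * K / c) := by rw [h7]; ring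
  -- Jensen step
  set ε := Real.exp δ * K / c with hεdef
  have hε0 : 0 < ε := by
    rw [hεdef, hKdef]
    positivity
  set θ := 1/(1+ε) with hθdef
  have hθ0 : 0 < θ := by rw [hθdef]; positivity
  have hθ1 : θ ≤ 1 := by
    rw [hθdef]
    rw [div_le_one (by linarith)]
    linarith
  have hθε : θ * (1 + ε) = 1 := by
    rw [hθdef]; field_simp
  set c' := c + Real.exp δ * K with hc'def
  have hc'c : c' = c * (1 + ε) := by
    rw [hc'def, hεdef]; field_simp
  have hc'0 : 0 < c' := by rw [hc'c]; positivity
  -- ∑ nhF c' (R i (s+1)) ≤ N e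
  have hjensen : ∑ i, nhF c' (H.R i (s+1)) ≤ N * Real.exp 1 := by
    set v : Fin N → ℝ := fun i => max (H.R i (s+1)) 0 ^2/(2*c) with hvdef
    have hptv : ∀ i, nhF c' (H.R i (s+1)) = Real.exp (θ * v i) := by
      intro i
      unfold nhF
      congr 1
      rw [hvdef, hθdef, hc'c]
      simp only
      have h1ε : (1:ℝ) + ε ≠ 0 := by positivity
      field_simp
    have hpt : ∀ i, Real.exp (θ * v i) ≤ (1-θ) * Real.exp θ + θ * Real.exp (θ - 1 + v i) :=
      fun i => exp_theta_bound hθ0 hθ1 (v i)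
    have hsumv : ∑ i, Real.exp (v i) ≤ N * Real.exp 1 * (1 + ε) := by
      have : ∀ i, Real.exp (v i) = nhF c (H.R i (s+1)) := fun i => rfl
      calc ∑ i, Real.exp (v i) = ∑ i, nhF c (H.R i (s+1)) :=
            Finset.sum_congr rfl fun i _ => this i
        _ ≤ N * Real.exp 1 * (1 + ε) := by rw [hεdef] at hsum2 ⊢; exact hsum2
    calc ∑ i, nhF c' (H.R i (s+1)) = ∑ i, Real.exp (θ * v i) :=
          Finset.sum_congr rfl fun i _ => hptv i
      _ ≤ ∑ i, ((1-θ) * Real.exp θ + θ * Real.exp (θ - 1 + v i)) :=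
          Finset.sum_le_sum fun i _ => hpt i
      _ = N * ((1-θ) * Real.exp θ) + θ * Real.exp (θ-1) * ∑ i, Real.exp (v i) := by
          rw [Finset.sum_add_distrib, Finset.sum_const, Finset.card_univ, Fintype.card_fin,
            nsmul_eq_mul, Finset.mul_sum]
          congr 1
          apply Finset.sum_congr rfl
          intro i _
          rw [show θ - 1 + v i = (θ-1) + v i by ring, Real.exp_add]
          ring
      _ ≤ N * ((1-θ) * Real.exp θ) + θ * Real.exp (θ-1) * (N * Real.exp 1 * (1 + ε)) := by
          have h9 : 0 ≤ θ * Real.exp (θ-1) := by positivity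
          nlinarith [mul_le_mul_of_nonneg_left hsumv h9]
      _ = N * Real.exp θ * (1 + θ * ε) := by
          rw [show Real.exp (θ-1) = Real.exp θ / Real.exp 1 by
            rw [Real.exp_sub]]
          field_simp [(Real.exp_pos 1).ne']
          ring
      _ ≤ N * Real.exp θ * Real.exp (θ * ε) := by
          apply mul_le_mul_of_nonneg_left _ (by positivity)
          linarith [Real.add_one_le_exp (θ * ε)]
      _ = N * Real.exp 1 := by
          rw [mul_assoc, ← Real.exp_add, show θ + θ * ε = θ * (1+ε) by ring, hθε]
  -- conclude by strict monotonicity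
  by_contra hcon
  push_neg at hcon
  obtain ⟨j, hj⟩ := exists_regret_pos H (s+1) (by omega)
  have hstrict : ∑ i, nhF (H.c (s+1)) (H.R i (s+1)) < ∑ i, nhF c' (H.R i (s+1)) := by
    apply Finset.sum_lt_sum
    · exact fun i _ => nhF_anti hc'0 hcon.le
    · exact ⟨j, Finset.mem_univ j, nhF_anti_strict hc'0 hcon hj⟩
  have heq := sum_nhF_eq H (s+1) (by omega)
  rw [heq] at hstrict
  linarith


/-- Lemma 5: if at some round `t₀` the scale satisfies `c t₀ ≥ (16 ln N)/δ²` with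
`0 < δ ≤ 1/2`, then for every `t ≥ t₀`,
`c (t+1) - c t ≤ e^δ (3/2 + δ + ln N)/(1 - δ² e^δ)`. -/
theorem normalHedge_scale_increment_bound {N : ℕ} (H : NormalHedge N)
    (t₀ : ℕ) (ht₀ : 1 ≤ t₀) (δ : ℝ) (hδ0 : 0 < δ) (hδ1 : δ ≤ 1 / 2)
    (hc : 16 * Real.log N / δ ^ 2 ≤ H.c t₀)
    (t : ℕ) (ht : t₀ ≤ t) :
    H.c (t + 1) - H.c t ≤
      Real.exp δ * (3 / 2 + δ + Real.log N) / (1 - δ ^ 2 * Real.exp δ) := by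
  have hmono : ∀ t', t₀ ≤ t' → 16 * Real.log N / δ ^ 2 ≤ H.c t' := by
    intro t' ht'
    induction t' with
    | zero => omega
    | succ n ih =>
      rcases eq_or_lt_of_le ht' with he | hlt
      · rw [← he]; exact hc
      · have hn : t₀ ≤ n := by omega
        exact le_trans (ih hn) (c_mono H n (by omega))
  have h1 := c_succ_le H t (le_trans ht₀ ht) δ hδ0 hδ1 (hmono t ht)
  have hlogN : 0 ≤ Real.log N := Real.log_nonneg (by exact_mod_cast le_trans (by norm_num) H.hN)
  have hnum : 0 ≤ Real.exp δ * (3/2 + δ + Real.log N) := by positivity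
  have hsq : Real.exp (1/2 : ℝ) * Real.exp (1/2 : ℝ) = Real.exp 1 := by
    rw [← Real.exp_add]; norm_num
  have hehalf : Real.exp (1/2 : ℝ) < 2 := by
    nlinarith [Real.exp_pos (1/2 : ℝ), Real.exp_one_lt_d9, hsq]
  have heδ : Real.exp δ ≤ Real.exp (1/2 : ℝ) := Real.exp_le_exp.2 hδ1
  have hd : 0 < 1 - δ ^ 2 * Real.exp δ := by
    nlinarith [hδ0, hδ1, heδ, hehalf, Real.exp_pos δ]
  have hle1 : δ ^ 2 * Real.exp δ ≤ 1 := by nlinarith [hδ0, hδ1, heδ, hehalf]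
  have h2 : Real.exp δ * (3/2 + δ + Real.log N)
      ≤ Real.exp δ * (3/2 + δ + Real.log N) / (1 - δ ^ 2 * Real.exp δ) := by
    rw [le_div_iff₀ hd]
    nlinarith [hnum, hd, mul_nonneg hnum (by nlinarith [Real.exp_pos δ] : 0 ≤ δ^2 * Real.exp δ)]
  have h3 : (3/2 : ℝ) + δ + Real.log N = 3 / 2 + δ + Real.log N := by norm_num
  linarith [h1, h2]
end

section
/- Under the NormalHedge dynamics, suppose that for some round t₀ and some constant 0 < δ ≤ 1/2 one has c_{t₀} ≥ (4 ln² N)/δ + (16 ln N)/δ³. Then for every round t ≥ t₀, c_{t+1} − c_t ≤ (3/2)(1 + 49.19 δ). (Lemma 3.) -/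
open Real Finset Filter

lemma cubic_le_exp {v : ℝ} (hv : 0 ≤ v) : 1 + v + v^2/2 + v^3/6 ≤ Real.exp v := by
  have h := Real.sum_le_exp_of_nonneg hv 4
  rw [Finset.sum_range_succ, Finset.sum_range_succ, Finset.sum_range_succ,
    Finset.sum_range_one] at h
  norm_num [Nat.factorial] at h
  linarith

lemma exp_neg_le_quad {v : ℝ} (hv : 0 ≤ v) : Real.exp (-v) ≤ 1 - v + v^2/2 := by
  have hq : 1 + v + v^2/2 ≤ Real.exp v := Real.quadratic_le_exp_of_nonneg hv
  have hQpos : (0:ℝ) < 1 + v + v^2/2 := by positivity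
  have h2 : Real.exp (-v) * (1 + v + v^2/2) ≤ Real.exp (-v) * Real.exp v :=
    mul_le_mul_of_nonneg_left hq (Real.exp_pos _).le
  rw [← Real.exp_add] at h2
  simp at h2
  nlinarith [Real.exp_pos (-v), sq_nonneg (v^2), sq_nonneg v]

lemma exp_neg_ge_cubic {u : ℝ} (hu : 0 ≤ u) : 1 - u + u^2/2 - u^3/6 ≤ Real.exp (-u) := by
  set F : ℝ → ℝ := fun x => Real.exp (-x) - (1 - x + x^2/2 - x^3/6) with hF
  have hderiv : ∀ x : ℝ, HasDerivAt F (-Real.exp (-x) + (1 - x + x^2/2)) x := by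
    intro x
    have h1 : HasDerivAt (fun x : ℝ => Real.exp (-x)) (-Real.exp (-x)) x := by
      simpa [Function.comp_def] using (Real.hasDerivAt_exp (-x)).comp x (hasDerivAt_neg x)
    have h2 : HasDerivAt (fun x : ℝ => 1 - x + x^2/2 - x^3/6) (-1 + x - x^2/2) x := by
      have : HasDerivAt (fun x : ℝ => 1 - x + x^2/2 - x^3/6)
          (0 - 1 + (2*x^1)/2 - (3*x^2)/6) x := by
        apply HasDerivAt.sub
        apply HasDerivAt.add
        apply HasDerivAt.sub
        · exact hasDerivAt_const x 1
        · exact hasDerivAt_id' x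
        · exact (hasDerivAt_pow 2 x).div_const 2
        · exact (hasDerivAt_pow 3 x).div_const 6
      convert this using 1
      ring
    have := h1.sub h2
    exact this.congr_deriv (by ring)
  have hmono : MonotoneOn F (Set.Ici (0:ℝ)) := by
    apply monotoneOn_of_deriv_nonneg (convex_Ici 0)
    · exact (Continuous.continuousOn (by continuity))
    · intro x hx
      exact (hderiv x).differentiableAt.differentiableWithinAt
    · intro x hx
      rw [(hderiv x).deriv]
      rw [interior_Ici] at hx
      have hx0 : 0 < x := hx
      have := exp_neg_le_quad hx0.le
      linarith
  have h0 : F 0 ≤ F u := hmono (by simp) (by simpa using hu) hu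
  simp [hF] at h0 ⊢
  linarith

lemma lemE (u : ℝ) : Real.exp u ≤ 1 + u + u^2/2 * Real.exp (max u 0) := by
  rcases le_or_gt u 0 with hu | hu
  · have hmax : max u 0 = 0 := max_eq_right hu
    rw [hmax, Real.exp_zero]
    have h := exp_neg_le_quad (neg_nonneg.mpr hu)
    rw [neg_neg] at h
    nlinarith
  · have hmax : max u 0 = u := max_eq_left hu.le
    rw [hmax]
    rcases le_or_gt 2 (u^2) with h2 | h2
    · nlinarith [Real.exp_pos u]
    · have hu2 : u ≤ 2 := by nlinarith
      have hC := exp_neg_ge_cubic hu.le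
      have key : 1 - u^2/2 ≤ (1 + u) * Real.exp (-u) := by
        nlinarith [pow_nonneg hu.le 3, pow_nonneg hu.le 4]
      have hexp : Real.exp u * Real.exp (-u) = 1 := by
        rw [← Real.exp_add]; simp
      nlinarith [Real.exp_pos u, mul_le_mul_of_nonneg_left key (Real.exp_pos u).le]

lemma lemB (R r c : ℝ) (hc : 0 < c) :
    Real.exp ((max R 0)^2/(2*c)) * (1 + r * (max R 0)/c) ≤
      Real.exp ((max (R + r) 0)^2/(2*c)) := by
  have h2c : (0:ℝ) < 2*c := by linarith
  set a := max R 0 with ha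
  have ha0 : 0 ≤ a := le_max_right _ _
  rcases eq_or_lt_of_le ha0 with h0 | hpos
  · rw [← h0]
    have h1 : Real.exp ((0:ℝ)^2/(2*c)) * (1 + r * 0/c) = 1 := by
      norm_num
    rw [h1]
    exact Real.one_le_exp (by positivity)
  · have hRa : R = a := by
      rw [ha]; rw [max_eq_left]; by_contra h; push_neg at h
      rw [ha, max_eq_right (le_of_lt h)] at hpos; exact lt_irrefl 0 hpos
    rcases le_or_gt (1 + r * a / c) 0 with hneg | hposf
    · calc Real.exp (a^2/(2*c)) * (1 + r * a/c) ≤ 0 := by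
            apply mul_nonpos_of_nonneg_of_nonpos (Real.exp_pos _).le hneg
        _ ≤ _ := (Real.exp_pos _).le
    · have hkey : 2*a*r ≤ (max (R + r) 0)^2 - a^2 := by
        rcases le_or_gt 0 (R + r) with hge | hlt
        · rw [max_eq_left hge, hRa]; nlinarith [sq_nonneg r]
        · rw [max_eq_right hlt.le]
          have hr : r < -a := by
            have := hlt; rw [hRa] at this; linarith
          have hmul : 0 < a * (-(a+2*r)) := mul_pos hpos (by linarith)
          nlinarith [hmul]
      have h1 : 1 + r * a / c ≤ Real.exp (r * a / c) := by
        linarith [Real.add_one_le_exp (r * a / c)]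
      calc Real.exp (a^2/(2*c)) * (1 + r * a/c)
          ≤ Real.exp (a^2/(2*c)) * Real.exp (r * a / c) :=
            mul_le_mul_of_nonneg_left h1 (Real.exp_pos _).le
        _ = Real.exp (a^2/(2*c) + r*a/c) := (Real.exp_add _ _).symm
        _ ≤ Real.exp ((max (R + r) 0)^2/(2*c)) := by
            apply Real.exp_le_exp.mpr
            have he : a^2/(2*c) + r*a/c = (a^2 + 2*a*r)/(2*c) := by ring
            rw [he]
            rw [div_le_div_iff_of_pos_right h2c]
            linarith

set_option maxHeartbeats 1000000 in
lemma lemD (R r c : ℝ) (hr1 : -1 ≤ r) (hr2 : r ≤ 1) (hc : 0 < c) :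
    Real.exp ((max (R + r) 0)^2/(2*c)) ≤
      Real.exp ((max R 0)^2/(2*c)) + r * (max R 0 / c) * Real.exp ((max R 0)^2/(2*c))
        + (1/(2*c)) * Real.exp ((max R 0 + 1)^2/(2*c))
        + ((max R 0 + 1)^2/(2*c)) * (1/c) * Real.exp ((max R 0 + 1)^2/(2*c)) := by
  have h2c : (0:ℝ) < 2*c := by linarith
  set a := max R 0 with ha
  have ha0 : 0 ≤ a := le_max_right _ _
  have hstep1 : (max (R + r) 0)^2 ≤ (a + r)^2 := by
    rcases le_or_gt 0 (R + r) with hge | hlt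
    · rw [max_eq_left hge]
      have hRa : R ≤ a := le_max_left _ _
      nlinarith [mul_nonneg (by linarith : (0:ℝ) ≤ a - R) (by linarith : (0:ℝ) ≤ a + R + 2*r)]
    · rw [max_eq_right hlt.le]; simpa using sq_nonneg (a+r)
  have hmono : Real.exp ((max (R + r) 0)^2/(2*c)) ≤ Real.exp ((a+r)^2/(2*c)) :=
    Real.exp_le_exp.mpr ((div_le_div_iff_of_pos_right h2c).mpr hstep1)
  set u := (2*a*r + r^2)/(2*c) with hu
  have hsplit : (a+r)^2/(2*c) = a^2/(2*c) + u := by rw [hu]; ring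
  have hE := lemE u
  have hfa : (0:ℝ) < Real.exp (a^2/(2*c)) := Real.exp_pos _
  have hx : a^2/(2*c) ≤ (a+1)^2/(2*c) := (div_le_div_iff_of_pos_right h2c).mpr (by nlinarith)
  have hfa_le : Real.exp (a^2/(2*c)) ≤ Real.exp ((a+1)^2/(2*c)) := Real.exp_le_exp.mpr hx
  have hprod : Real.exp (a^2/(2*c)) * Real.exp (max u 0) ≤ Real.exp ((a+1)^2/(2*c)) := by
    rw [← Real.exp_add]
    apply Real.exp_le_exp.mpr
    rcases le_or_gt u 0 with h | h
    · rw [max_eq_right h]; simpa using hx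
    · rw [max_eq_left h.le, ← hsplit]
      apply (div_le_div_iff_of_pos_right h2c).mpr
      nlinarith [mul_nonneg (by linarith : (0:ℝ) ≤ 1 - r) (by linarith : (0:ℝ) ≤ 1 + r)]
  have hu2 : u^2 ≤ (a+1)^2/c^2 := by
    rw [hu]
    rw [div_pow, div_le_div_iff₀ (by positivity) (by positivity)]
    have f1 : (0:ℝ) ≤ 2*a*(1-r) + (1 - r^2) := by
      nlinarith [mul_nonneg (by linarith : (0:ℝ) ≤ 1 - r) (by linarith : (0:ℝ) ≤ 1 + r),
        mul_nonneg ha0 (by linarith : (0:ℝ) ≤ 1 - r)]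
    have f2 : (0:ℝ) ≤ 2*a*(1+r) + (1 + r^2) := by
      nlinarith [mul_nonneg ha0 (by linarith : (0:ℝ) ≤ 1 + r), sq_nonneg r]
    have habs : (2*a*r + r^2)^2 ≤ (2*a+1)^2 := by
      have hexpand : (2*a+1)^2 - (2*a*r+r^2)^2 = (2*a*(1-r) + (1-r^2))*(2*a*(1+r)+(1+r^2)) := by
        ring
      linarith [mul_nonneg f1 f2, hexpand.ge, hexpand.le]
    have h4 : (2*a+1)^2 ≤ 4*(a+1)^2 := by nlinarith
    have hc2 : (0:ℝ) < c^2 := by positivity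
    calc (2*a*r + r^2)^2 * c^2 ≤ (2*a+1)^2 * c^2 :=
          mul_le_mul_of_nonneg_right habs hc2.le
      _ ≤ (a+1)^2 * (2*c)^2 := by
          have h5 := mul_le_mul_of_nonneg_right h4 hc2.le
          have h6 : (a+1)^2 * (2*c)^2 = 4*(a+1)^2 * c^2 := by ring
          linarith
  calc Real.exp ((max (R + r) 0)^2/(2*c)) ≤ Real.exp ((a+r)^2/(2*c)) := hmono
    _ = Real.exp (a^2/(2*c)) * Real.exp u := by rw [hsplit, Real.exp_add]
    _ ≤ Real.exp (a^2/(2*c)) * (1 + u + u^2/2 * Real.exp (max u 0)) :=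
        mul_le_mul_of_nonneg_left hE hfa.le
    _ ≤ _ := by
        have expand : Real.exp (a^2/(2*c)) * (1 + u + u^2/2 * Real.exp (max u 0))
            = Real.exp (a^2/(2*c)) + r * (a / c) * Real.exp (a^2/(2*c))
              + (r^2/(2*c)) * Real.exp (a^2/(2*c))
              + u^2/2 * (Real.exp (a^2/(2*c)) * Real.exp (max u 0)) := by
          rw [hu]; ring
        rw [expand]
        have h3 : (r^2/(2*c)) * Real.exp (a^2/(2*c)) ≤ (1/(2*c)) * Real.exp ((a+1)^2/(2*c)) := by
          apply mul_le_mul _ hfa_le hfa.le (one_div_pos.mpr h2c).le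
          apply (div_le_div_iff_of_pos_right h2c).mpr
          nlinarith [mul_nonneg (by linarith : (0:ℝ) ≤ 1 - r) (by linarith : (0:ℝ) ≤ 1 + r)]
        have h4 : u^2/2 * (Real.exp (a^2/(2*c)) * Real.exp (max u 0))
            ≤ ((a+1)^2/(2*c)) * (1/c) * Real.exp ((a+1)^2/(2*c)) := by
          apply mul_le_mul _ hprod (by positivity)
            (mul_nonneg (div_nonneg (sq_nonneg _) h2c.le) (one_div_pos.mpr hc).le)
          have he : (a+1)^2/(2*c) * (1/c) = ((a+1)^2/c^2)/2 := by ring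
          rw [he]
          linarith [(div_le_div_iff_of_pos_right (by norm_num : (0:ℝ) < 2)).mpr hu2]
        linarith

lemma exp_le_inv {x : ℝ} : Real.exp x * (1 - x) ≤ 1 := by
  have h := Real.add_one_le_exp (-x)
  have h2 : Real.exp x * Real.exp (-x) = 1 := by rw [← Real.exp_add]; simp
  nlinarith [Real.exp_pos x, mul_le_mul_of_nonneg_left h (Real.exp_pos x).le]

lemma base_bounds (δ L c a : ℝ) (hδ0 : 0 < δ) (hδ1 : δ ≤ 1/2) (hL : 0.693 ≤ L)
    (hc1 : 16*L/δ^3 ≤ c) (ha0 : 0 ≤ a) (ha2 : a^2 ≤ 2*c*(1+L)) :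
    a ≤ 0.3973*δ*c ∧ 1 ≤ 0.0226*δ*c ∧ 0 < c ∧ 32*L ≤ δ^2*c := by
  have hLpos : (0:ℝ) < L := by linarith
  have hc0 : (0:ℝ) < c := lt_of_lt_of_le (by positivity) hc1
  have h16 : 16*L ≤ δ^3*c := by
    have := (div_le_iff₀ (by positivity : (0:ℝ) < δ^3)).mp hc1
    linarith
  have hd2c : 0 ≤ δ^2*c := by positivity
  have h32 : 32*L ≤ δ^2*c := by nlinarith [mul_le_mul_of_nonneg_right hδ1 hd2c]
  have hδc : 0 ≤ δ*c := by positivity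
  have h1 : 1 ≤ 0.0226*δ*c := by nlinarith [mul_le_mul_of_nonneg_right hδ1 hδc]
  refine ⟨?_, h1, hc0, h32⟩
  have hsq : a^2 ≤ 0.1532*(δ*c)^2 := by nlinarith [mul_le_mul_of_nonneg_right h32 hc0.le]
  by_contra h
  push_neg at h
  have : (0.3973*δ*c)^2 < a^2 := by
    have h0 : 0 ≤ 0.3973*δ*c := by positivity
    nlinarith
  nlinarith

lemma hE_pointwise (δ L c a : ℝ) (hδ0 : 0 < δ) (hδ1 : δ ≤ 1/2) (hL : 0.693 ≤ L)
    (hc1 : 16*L/δ^3 ≤ c) (ha0 : 0 ≤ a) (ha2 : a^2 ≤ 2*c*(1+L)) :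
    Real.exp ((a+1)^2/(2*c)) ≤ (1 + 0.55*δ) * Real.exp (a^2/(2*c)) := by
  obtain ⟨hak, h1c, hc0, -⟩ := base_bounds δ L c a hδ0 hδ1 hL hc1 ha0 ha2
  have hsplit : (a+1)^2/(2*c) = a^2/(2*c) + (2*a+1)/(2*c) := by field_simp; ring
  set s := (2*a+1)/(2*c) with hs
  have hs0 : 0 ≤ s := by positivity
  have hsle : s ≤ 0.41*δ := by
    rw [hs, div_le_iff₀ (by positivity : (0:ℝ) < 2*c)]
    nlinarith
  have hs205 : s ≤ 0.205 := by linarith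
  have hexp : Real.exp s ≤ 1 + 0.55*δ := by
    have h1 : Real.exp s * (1 - s) ≤ 1 := exp_le_inv
    have h2 : (0:ℝ) < 1 - s := by linarith
    have h3 : Real.exp s ≤ 1/(1-s) := by
      rw [le_div_iff₀ h2]; linarith
    have h4 : 1/(1-s) ≤ 1 + 1.26*s := by
      rw [div_le_iff₀ h2]; nlinarith
    linarith
  rw [hsplit, Real.exp_add]
  calc Real.exp (a^2/(2*c)) * Real.exp s ≤ Real.exp (a^2/(2*c)) * (1 + 0.55*δ) :=
        mul_le_mul_of_nonneg_left hexp (Real.exp_pos _).le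
    _ = (1 + 0.55*δ) * Real.exp (a^2/(2*c)) := by ring

lemma exp_small_bound (s δ : ℝ) (hδ0 : 0 < δ) (hδ1 : δ ≤ 1/2) (hs : s ≤ 2.27*δ) :
    Real.exp s ≤ 1 + 12.2*δ := by
  have hd2 : s ≤ 1.135 := by linarith
  have hs2 : s/2 ≤ 0.5675 := by linarith
  have h5 : Real.exp (s/2) * (1 - s/2) ≤ 1 := exp_le_inv
  have h6 : Real.exp (s/2) ≤ 1/(1-s/2) := by
    rw [le_div_iff₀ (by linarith : (0:ℝ) < 1 - s/2)]; linarith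
  have h7 : Real.exp s = Real.exp (s/2) * Real.exp (s/2) := by
    rw [← Real.exp_add]; ring_nf
  have h8 : Real.exp s ≤ (1/(1-s/2))^2 := by
    rw [h7, sq]
    exact mul_le_mul h6 h6 (Real.exp_pos _).le
      (le_of_lt (one_div_pos.mpr (by linarith)))
  have h9 : (1/(1-s/2))^2 ≤ 5.35 := by
    rw [div_pow, div_le_iff₀ (by nlinarith : (0:ℝ) < (1-s/2)^2)]
    rcases le_or_gt 0 s with h | h
    · nlinarith
    · nlinarith
  rcases le_or_gt s 0 with h | h
  · calc Real.exp s ≤ 1 := Real.exp_le_one_iff.mpr h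
      _ ≤ 1 + 12.2*δ := by nlinarith
  · have h10 : Real.exp s * (1 - s) ≤ 1 := exp_le_inv
    have h11 : Real.exp s - 1 ≤ s * Real.exp s := by nlinarith [Real.exp_pos s]
    have h12 : s * Real.exp s ≤ s * 5.35 := by nlinarith [h8, h9]
    nlinarith

set_option maxHeartbeats 1600000 in
lemma hT_pointwise (δ L c d a a' : ℝ) (hδ0 : 0 < δ) (hδ1 : δ ≤ 1/2) (hL : 0.693 ≤ L)
    (hc1 : 16*L/δ^3 ≤ c) (ha0 : 0 ≤ a) (ha2 : a^2 ≤ 2*c*(1+L))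
    (ha' : a - 1 ≤ a') (ha'0 : 0 ≤ a') (hd : d = 3/2*(1+49.19*δ)) :
    ((a+1)^2/(2*c)) * Real.exp ((a+1)^2/(2*c)) ≤
      (1+30*δ) * ((a'^2/(2*(c+d))) * Real.exp (a'^2/(2*(c+d)))) + 4.8*δ := by
  obtain ⟨hak, h1c, hc0, h32⟩ := base_bounds δ L c a hδ0 hδ1 hL hc1 ha0 ha2
  have hd0 : 0 < d := by rw [hd]; nlinarith
  have hcd0 : (0:ℝ) < c + d := by linarith
  have hrhs1 : 0 ≤ (a'^2/(2*(c+d))) * Real.exp (a'^2/(2*(c+d))) := by positivity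
  have hLpos : (0:ℝ) < L := by linarith
  have h16 : 16*L ≤ δ^3*c := by
    have := (div_le_iff₀ (by positivity : (0:ℝ) < δ^3)).mp hc1
    linarith
  have hdd2 : d*δ^2 ≤ 9.6 := by rw [hd]; nlinarith [sq_nonneg δ]
  rcases lt_or_ge (a^2) (2*c*δ) with hsmall | hbig
  · -- small case
    set x := (a+1)^2/(2*c) with hx
    have hx0 : 0 ≤ x := by positivity
    have hxle : x ≤ 1.41*δ := by
      rw [hx, div_le_iff₀ (by positivity : (0:ℝ) < 2*c)]
      nlinarith
    have hx705 : x ≤ 0.705 := by linarith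
    have hexp : Real.exp x ≤ 3.39 := by
      have h1 : Real.exp x * (1 - x) ≤ 1 := exp_le_inv
      nlinarith [Real.exp_pos x]
    have hmm : x * Real.exp x ≤ (1.41*δ)*3.39 :=
      mul_le_mul hxle hexp (Real.exp_pos x).le (by positivity)
    have : x * Real.exp x ≤ 4.8*δ := by nlinarith
    have hnn : 0 ≤ (1+30*δ) * ((a'^2/(2*(c+d))) * Real.exp (a'^2/(2*(c+d)))) :=
      mul_nonneg (by linarith) hrhs1
    linarith
  · -- big case
    have ha88 : 88 ≤ a^2 := by nlinarith
    have ha94 : 9.4 ≤ a := by nlinarith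
    have haδ : 4.7 ≤ a*δ := by
      have h1 : 22.1 ≤ (a*δ)^2 := by nlinarith
      nlinarith [mul_nonneg ha0 hδ0.le]
    have hb3 : (a+1)^2 ≤ (1+1.08*δ)*(a-1)^2 := by
      have key : 4*a ≤ 1.08*δ*(a-1)^2 := by
        have h1 : 4.7*(a-1)^2 ≤ a*δ*(a-1)^2 :=
          mul_le_mul_of_nonneg_right haδ (sq_nonneg _)
        nlinarith [sq_nonneg (a - 9.4), hδ0.le]
      nlinarith
    have ha1' : (a-1)^2 ≤ a'^2 := by
      have h1 : (0:ℝ) ≤ a - 1 := by linarith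
      nlinarith
    have hdc : d/c ≤ 0.88*δ := by
      rw [div_le_iff₀ hc0]
      -- d ≤ 0.88*δ*c ⟸ d*δ^3 ≤ 0.88*δ*(δ^3*c)/δ^3... use h16 : 16L ≤ δ^3 c, dδ^2 ≤ 9.6, L ≥ 0.693
      -- 0.88*δ*c*δ^3 = 0.88*δ^4*c ≥ 0.88*δ*16L ≥ 0.88*16*0.693*δ = 9.758δ ≥ d*δ^3 = (dδ^2)*δ ≤ 9.6δ
      nlinarith [mul_le_mul_of_nonneg_right h16 hδ0.le, mul_le_mul_of_nonneg_right hdd2 hδ0.le,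
        mul_pos hδ0 hc0, sq_nonneg δ]
    -- x' lower bound
    set x' := a'^2/(2*(c+d)) with hx'
    set xt := (a+1)^2/(2*c) with hxt
    have hx'0 : 0 ≤ x' := by positivity
    have hx'low : (a-1)^2/(2*(c+d)) ≤ x' := by
      rw [hx']
      apply (div_le_div_iff_of_pos_right (by positivity : (0:ℝ) < 2*(c+d))).mpr ha1'
    have hP : xt ≤ (1+1.08*δ)*(1+0.88*δ)*x' := by
      have h1 : xt ≤ (1+1.08*δ)*(a-1)^2/(2*c) := by
        rw [hxt]
        apply (div_le_div_iff_of_pos_right (by positivity : (0:ℝ) < 2*c)).mpr hb3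
      have hdc' : d ≤ 0.88*δ*c := by
        have := (div_le_iff₀ hc0).mp hdc; linarith
      have h2 : (a-1)^2/(2*c) ≤ (1+0.88*δ)*((a-1)^2/(2*(c+d))) := by
        have hfrac : 1 ≤ (1+0.88*δ)*(2*c)/(2*(c+d)) := by
          rw [le_div_iff₀ (by positivity : (0:ℝ) < 2*(c+d))]
          nlinarith
        have e2 : (a-1)^2 * ((1+0.88*δ)*(2*c)/(2*(c+d)))
            = ((1+0.88*δ)*((a-1)^2/(2*(c+d))))*(2*c) := by
          field_simp
        rw [div_le_iff₀ (by positivity : (0:ℝ) < 2*c), ← e2]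
        nlinarith [mul_le_mul_of_nonneg_left hfrac (sq_nonneg (a-1))]
      calc xt ≤ (1+1.08*δ)*(a-1)^2/(2*c) := h1
        _ = (1+1.08*δ)*((a-1)^2/(2*c)) := by ring
        _ ≤ (1+1.08*δ)*((1+0.88*δ)*((a-1)^2/(2*(c+d)))) := by
            apply mul_le_mul_of_nonneg_left h2 (by linarith)
        _ ≤ (1+1.08*δ)*(1+0.88*δ)*x' := by
            rw [mul_assoc]
            apply mul_le_mul_of_nonneg_left _ (by linarith)
            apply mul_le_mul_of_nonneg_left hx'low (by linarith)
    have hQ : Real.exp xt ≤ (1+12.2*δ) * Real.exp x' := by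
      have hdiff : xt - x' ≤ 2.27*δ := by
        have h1 : xt - x' ≤ (a+1)^2/(2*c) - (a-1)^2/(2*(c+d)) := by
          rw [hxt]; linarith [hx'low]
        have h2 : (a+1)^2/(2*c) - (a-1)^2/(2*(c+d))
            = (2*a)/c + (a-1)^2*d/(2*c*(c+d)) := by
          field_simp; ring
        have h3 : (2*a)/c ≤ 0.795*δ := by
          rw [div_le_iff₀ hc0]; nlinarith
        have h4 : (a-1)^2*d/(2*c*(c+d)) ≤ 1.47*δ := by
          rw [div_le_iff₀ (by positivity : (0:ℝ) < 2*c*(c+d))]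
          -- (a-1)^2 * d ≤ a^2 * d ≤ 2c(1+L)d; need ≤ 1.47δ * 2c(c+d); suffices (1+L)d ≤ 1.47δ(c+d)
          -- (1+L) ≤ 2.45 L ; d*δ^2 ≤ 9.6 ⇒ 2.45*L*d ≤ 2.45*d*(δ^3 c/16)/δ^3*... 
          -- 2.45 L d ≤ 2.45 d * (δ^3 c)/(16 L) * L /... simpler: 16L ≤ δ^3 c and want (1+L)d*2c ≤ 1.47δ*2c(c+d)
          -- ⟸ (1+L)d ≤ 1.47δ(c+d) ⟸ (1+L)d ≤ 1.47δc. (1+L) ≤ 2.45L. 2.45 L d δ^3 ≤ 2.45 d δ^3 L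
          -- and δ^3 c ≥ 16 L ⇒ 1.47 δ c * δ^3 ≥ 1.47δ*16L = 23.52 L δ; 2.45 L d δ^3 = 2.45 L δ (dδ^2) ≤ 2.45*9.6 L δ = 23.52 L δ ✓
          have e3 : (0:ℝ) < δ^3 := by positivity
          have k1 : (1+L)*d ≤ 1.47*δ*c := by
            have e5 : 2.45*L*δ*(d*δ^2) ≤ 2.45*L*δ*9.6 :=
              mul_le_mul_of_nonneg_left hdd2 (by positivity)
            have e6 : 1.47*δ*(16*L) ≤ 1.47*δ*(δ^3*c) :=
              mul_le_mul_of_nonneg_left h16 (by positivity)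
            have e4 : (1+L)*(d*δ^3) ≤ (2.45*L)*(d*δ^3) :=
              mul_le_mul_of_nonneg_right (by linarith : (1+L) ≤ 2.45*L)
                (mul_nonneg hd0.le e3.le)
            have e7 : ((1+L)*d)*δ^3 ≤ (1.47*δ*c)*δ^3 := by nlinarith [mul_pos hLpos hδ0]
            exact le_of_mul_le_mul_right e7 e3
          have ha1'' : (a-1)^2 ≤ a^2 := by nlinarith
          have m1 : (a-1)^2*d ≤ (2*c*(1+L))*d :=
            mul_le_mul_of_nonneg_right (le_trans ha1'' ha2) hd0.le
          have m2 : 2*c*((1+L)*d) ≤ 2*c*(1.47*δ*c) :=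
            mul_le_mul_of_nonneg_left k1 (by linarith)
          have m3 : 0 ≤ δ*c*d := mul_nonneg (mul_nonneg hδ0.le hc0.le) hd0.le
          nlinarith
        linarith
      have hexp2 : Real.exp (xt - x') ≤ 1 + 12.2*δ :=
        exp_small_bound _ δ hδ0 hδ1 hdiff
      calc Real.exp xt = Real.exp x' * Real.exp (xt - x') := by
            rw [← Real.exp_add]; ring_nf
        _ ≤ Real.exp x' * (1 + 12.2*δ) := mul_le_mul_of_nonneg_left hexp2 (Real.exp_pos _).le
        _ = (1+12.2*δ) * Real.exp x' := by ring
    -- combine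
    have hcomb : xt * Real.exp xt ≤ (1+1.08*δ)*(1+0.88*δ)*(1+12.2*δ) * (x' * Real.exp x') := by
      have := mul_le_mul hP hQ (Real.exp_pos _).le
        (by positivity : (0:ℝ) ≤ (1+1.08*δ)*(1+0.88*δ)*x')
      calc xt * Real.exp xt ≤ ((1+1.08*δ)*(1+0.88*δ)*x') * ((1+12.2*δ) * Real.exp x') := this
        _ = (1+1.08*δ)*(1+0.88*δ)*(1+12.2*δ) * (x' * Real.exp x') := by ring
    have hK : (1+1.08*δ)*(1+0.88*δ)*(1+12.2*δ) ≤ 1+30*δ := by nlinarith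
    calc xt * Real.exp xt ≤ (1+1.08*δ)*(1+0.88*δ)*(1+12.2*δ) * (x' * Real.exp x') := hcomb
      _ ≤ (1+30*δ) * (x' * Real.exp x') := mul_le_mul_of_nonneg_right hK (by positivity)
      _ ≤ (1+30*δ) * (x' * Real.exp x') + 4.8*δ := by nlinarith
variable {N : ℕ} (H : NormalHedge N)

lemma NH_Npos (H : NormalHedge N) : (0:ℝ) < N := by
  have h2 := H.hN
  have : 0 < N := by omega
  exact_mod_cast this

lemma NH_sum_eq (t : ℕ) (ht : 1 ≤ t) :
    ∑ i, Real.exp (max (H.R i t) 0 ^ 2 / (2 * H.c t)) = N * Real.exp 1 := by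
  have h := H.c_eq t ht
  have hN : (0:ℝ) < N := NH_Npos H
  field_simp at h
  linarith

lemma NH_exists_pos (t : ℕ) (ht : 1 ≤ t) : ∃ j : Fin N, 0 < max (H.R j t) 0 := by
  by_contra h
  push_neg at h
  have hall : ∀ j : Fin N, max (H.R j t) 0 = 0 := fun j =>
    le_antisymm (h j) (le_max_right _ _)
  have h1 := NH_sum_eq H t ht
  have hone : ∀ i : Fin N, Real.exp (max (H.R i t) 0 ^ 2 / (2 * H.c t)) = 1 := by
    intro i; rw [hall i]; norm_num
  have h2 : ∑ i : Fin N, Real.exp (max (H.R i t) 0 ^ 2 / (2 * H.c t)) = N := by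
    rw [Finset.sum_congr rfl (fun i _ => hone i)]
    simp [Finset.card_univ]
  rw [h2] at h1
  have hN : (0:ℝ) < N := NH_Npos H
  have he : (2:ℝ) < Real.exp 1 := by
    have := Real.exp_one_gt_d9; linarith
  nlinarith

lemma NH_W_pos (t : ℕ) (ht : 1 ≤ t) :
    0 < ∑ j, (max (H.R j t) 0 / H.c t) * Real.exp (max (H.R j t) 0 ^ 2 / (2 * H.c t)) := by
  obtain ⟨j, hj⟩ := NH_exists_pos H t ht
  have hc := H.c_pos t ht
  apply Finset.sum_pos' (fun i _ => by positivity)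
  exact ⟨j, Finset.mem_univ j, by positivity⟩

lemma NH_p_nonneg (t : ℕ) (ht : 1 ≤ t) (i : Fin N) : 0 ≤ H.p i (t+1) := by
  rw [H.p_rec i t ht]
  have hc := H.c_pos t ht
  have hW := NH_W_pos H t ht
  positivity

lemma NH_p_sum (t : ℕ) (ht : 1 ≤ t) : ∑ j, H.p j (t+1) = 1 := by
  have hW := NH_W_pos H t ht
  rw [Finset.sum_congr rfl (fun j _ => H.p_rec j t ht), ← Finset.sum_div]
  exact div_self hW.ne'

lemma NH_r_bounds (t : ℕ) (ht : 1 ≤ t) (i : Fin N) :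
    -1 ≤ (∑ j, H.p j (t+1) * H.loss j (t+1)) - H.loss i (t+1) ∧
      (∑ j, H.p j (t+1) * H.loss j (t+1)) - H.loss i (t+1) ≤ 1 := by
  have ht1 : 1 ≤ t + 1 := by omega
  have hA0 : 0 ≤ ∑ j, H.p j (t+1) * H.loss j (t+1) :=
    Finset.sum_nonneg fun j _ =>
      mul_nonneg (NH_p_nonneg H t ht j) (H.loss_mem j (t+1) ht1).1
  have hA1 : ∑ j, H.p j (t+1) * H.loss j (t+1) ≤ 1 := by
    calc ∑ j, H.p j (t+1) * H.loss j (t+1) ≤ ∑ j, H.p j (t+1) :=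
          Finset.sum_le_sum fun j _ => by
            have := (H.loss_mem j (t+1) ht1).2
            have := NH_p_nonneg H t ht j
            nlinarith
      _ = 1 := NH_p_sum H t ht
  have hl := H.loss_mem i (t+1) ht1
  constructor <;> [linarith [hl.2]; linarith [hl.1]]

lemma cancel_generic (n : ℕ) (w l : Fin n → ℝ) (hW : 0 < ∑ k, w k) :
    ∑ i, ((∑ j, (w j / ∑ k, w k) * l j) - l i) * w i = 0 := by
  have hA : (∑ j, (w j / ∑ k, w k) * l j) * (∑ k, w k) = ∑ j, l j * w j := by
    rw [Finset.sum_mul]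
    apply Finset.sum_congr rfl
    intro j _
    field_simp
  have expand : ∑ i, ((∑ j, (w j / ∑ k, w k) * l j) - l i) * w i
      = (∑ j, (w j / ∑ k, w k) * l j) * (∑ k, w k) - ∑ i, l i * w i := by
    simp only [sub_mul, Finset.sum_sub_distrib, ← Finset.mul_sum]
  rw [expand, hA, sub_self]

lemma NH_cancel (t : ℕ) (ht : 1 ≤ t) :
    ∑ i, ((∑ j, H.p j (t+1) * H.loss j (t+1)) - H.loss i (t+1)) *
      ((max (H.R i t) 0 / H.c t) * Real.exp (max (H.R i t) 0 ^ 2 / (2 * H.c t))) = 0 := by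
  have hW := NH_W_pos H t ht
  have hp : ∀ j, H.p j (t+1) = ((max (H.R j t) 0 / H.c t) *
      Real.exp (max (H.R j t) 0 ^ 2 / (2 * H.c t))) /
      (∑ k, (max (H.R k t) 0 / H.c t) * Real.exp (max (H.R k t) 0 ^ 2 / (2 * H.c t))) :=
    fun j => H.p_rec j t ht
  simp only [hp]
  exact cancel_generic N _ _ hW

lemma NH_max_bound (t : ℕ) (ht : 1 ≤ t) (i : Fin N) :
    max (H.R i t) 0 ^ 2 ≤ 2 * H.c t * (1 + Real.log N) := by
  have hc := H.c_pos t ht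
  have hN : (0:ℝ) < N := NH_Npos H
  have hsum := NH_sum_eq H t ht
  have hterm : Real.exp (max (H.R i t) 0 ^ 2 / (2 * H.c t)) ≤ N * Real.exp 1 := by
    rw [← hsum]
    exact Finset.single_le_sum (f := fun j => Real.exp (max (H.R j t) 0 ^ 2 / (2 * H.c t)))
      (fun j _ => (Real.exp_pos _).le) (Finset.mem_univ i)
  have hrw : (N:ℝ) * Real.exp 1 = Real.exp (Real.log N + 1) := by
    rw [Real.exp_add, Real.exp_log hN]
  rw [hrw] at hterm
  have := Real.exp_le_exp.mp hterm
  have h2c : (0:ℝ) < 2 * H.c t := by linarith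
  rw [div_le_iff₀ h2c] at this
  nlinarith

lemma NH_logN (H : NormalHedge N) : 0.693 ≤ Real.log N := by
  have h2 : (2:ℝ) ≤ N := by exact_mod_cast H.hN
  have := Real.log_le_log (by norm_num) h2
  have hl2 := Real.log_two_gt_d9
  linarith

lemma NH_mono (t : ℕ) (ht : 1 ≤ t) : H.c t ≤ H.c (t+1) := by
  have hc := H.c_pos t ht
  have hc' := H.c_pos (t+1) (by omega)
  by_contra hlt
  push_neg at hlt
  -- key lower bound at scale c t
  have hkey : (N:ℝ) * Real.exp 1 ≤
      ∑ i, Real.exp (max (H.R i (t+1)) 0 ^ 2 / (2 * H.c t)) := by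
    have hpt : ∀ i : Fin N,
        Real.exp (max (H.R i t) 0 ^ 2 / (2 * H.c t)) +
          ((∑ j, H.p j (t+1) * H.loss j (t+1)) - H.loss i (t+1)) *
            ((max (H.R i t) 0 / H.c t) * Real.exp (max (H.R i t) 0 ^ 2 / (2 * H.c t))) ≤
          Real.exp (max (H.R i (t+1)) 0 ^ 2 / (2 * H.c t)) := by
      intro i
      have hB := lemB (H.R i t) ((∑ j, H.p j (t+1) * H.loss j (t+1)) - H.loss i (t+1)) (H.c t) hc
      rw [H.R_rec i t]
      calc Real.exp (max (H.R i t) 0 ^ 2 / (2 * H.c t)) +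
            ((∑ j, H.p j (t+1) * H.loss j (t+1)) - H.loss i (t+1)) *
              ((max (H.R i t) 0 / H.c t) * Real.exp (max (H.R i t) 0 ^ 2 / (2 * H.c t)))
          = Real.exp ((max (H.R i t) 0)^2/(2*H.c t)) *
              (1 + ((∑ j, H.p j (t+1) * H.loss j (t+1)) - H.loss i (t+1)) *
                (max (H.R i t) 0)/(H.c t)) := by ring
        _ ≤ _ := hB
    have hsum := Finset.sum_le_sum (fun i (_ : i ∈ Finset.univ) => hpt i)
    rw [Finset.sum_add_distrib, NH_sum_eq H t ht, NH_cancel H t ht] at hsum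
    linarith
  -- strict monotonicity in scale
  have hstrict : ∑ i, Real.exp (max (H.R i (t+1)) 0 ^ 2 / (2 * H.c t)) <
      ∑ i, Real.exp (max (H.R i (t+1)) 0 ^ 2 / (2 * H.c (t+1))) := by
    obtain ⟨j, hj⟩ := NH_exists_pos H (t+1) (by omega)
    apply Finset.sum_lt_sum
    · intro i _
      apply Real.exp_le_exp.mpr
      rw [div_le_div_iff₀ (by linarith) (by linarith)]
      nlinarith [sq_nonneg (max (H.R i (t+1)) 0)]
    · refine ⟨j, Finset.mem_univ j, ?_⟩
      apply Real.exp_lt_exp.mpr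
      rw [div_lt_div_iff₀ (by linarith) (by linarith)]
      nlinarith [sq_nonneg (max (H.R j (t+1)) 0), mul_pos hj hj]
  have hsum' := NH_sum_eq H (t+1) (by omega)
  linarith [hkey, hstrict, hsum'.ge, hsum'.le]

lemma lemJ (x : ℝ) : 2 * Real.exp x - Real.exp 1 ≤ x * Real.exp x := by
  have h : Real.exp (x-1) * (1 - (x-1)) ≤ 1 := exp_le_inv
  have hx : Real.exp x = Real.exp 1 * Real.exp (x-1) := by
    rw [← Real.exp_add]; ring_nf
  nlinarith [Real.exp_pos 1, Real.exp_pos (x-1),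
    mul_le_mul_of_nonneg_left h (Real.exp_pos 1).le]

set_option maxHeartbeats 2000000

/-- Lemma 3: if at some round `t₀` the scale satisfies
`c t₀ ≥ (4 ln² N)/δ + (16 ln N)/δ³` with `0 < δ ≤ 1/2`, then for every `t ≥ t₀`,
`c (t+1) - c t ≤ (3/2)(1 + 49.19 δ)`. -/
theorem normalHedge_scale_increment_bound_fine {N : ℕ} (H : NormalHedge N)
    (t₀ : ℕ) (ht₀ : 1 ≤ t₀) (δ : ℝ) (hδ0 : 0 < δ) (hδ1 : δ ≤ 1 / 2)
    (hc : 4 * Real.log N ^ 2 / δ + 16 * Real.log N / δ ^ 3 ≤ H.c t₀)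
    (t : ℕ) (ht : t₀ ≤ t) :
    H.c (t + 1) - H.c t ≤ 3 / 2 * (1 + 49.19 * δ) := by
  have ht1 : 1 ≤ t := le_trans ht₀ ht
  have hNpos : (0:ℝ) < N := NH_Npos H
  have hL : 0.693 ≤ Real.log N := NH_logN H
  have hLpos : (0:ℝ) < Real.log N := by linarith
  -- c is monotone, so c t ≥ lower bound
  have hmono : ∀ s, t₀ ≤ s → H.c t₀ ≤ H.c s := by
    intro s hs
    induction s, hs using Nat.le_induction with
    | base => exact le_refl _
    | succ n hn ih => exact le_trans ih (NH_mono H n (by omega))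
  have hc1 : 16 * Real.log N / δ^3 ≤ H.c t := by
    have h1 := le_trans hc (hmono t ht)
    have h2 : 0 ≤ 4 * Real.log N ^ 2 / δ := by positivity
    linarith
  have hc0 : 0 < H.c t := H.c_pos t ht1
  have hc0' : 0 < H.c (t+1) := H.c_pos (t+1) (by omega)
  by_contra hcon
  push_neg at hcon
  set d := 3/2*(1+49.19*δ) with hddef
  have hd0 : 0 < d := by rw [hddef]; nlinarith
  have hgt : H.c t + d < H.c (t+1) := by linarith
  have hcd0 : 0 < H.c t + d := by linarith
  -- basic sums
  have hsum_t := NH_sum_eq H t ht1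
  have hsum_t' := NH_sum_eq H (t+1) (by omega)
  have hcancel := NH_cancel H t ht1
  -- Step 3 : N e < sum at scale c+d
  have h3 : (N:ℝ) * Real.exp 1 <
      ∑ i, Real.exp (max (H.R i (t+1)) 0 ^ 2 / (2 * (H.c t + d))) := by
    rw [← hsum_t']
    obtain ⟨j, hj⟩ := NH_exists_pos H (t+1) (by omega)
    apply Finset.sum_lt_sum
    · intro i _
      apply Real.exp_le_exp.mpr
      rw [div_le_div_iff₀ (by linarith) (by linarith)]
      nlinarith [sq_nonneg (max (H.R i (t+1)) 0)]
    · refine ⟨j, Finset.mem_univ j, ?_⟩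
      apply Real.exp_lt_exp.mpr
      rw [div_lt_div_iff₀ (by linarith) (by linarith)]
      nlinarith [sq_nonneg (max (H.R j (t+1)) 0), mul_pos hj hj]
  -- S'
  set S' := ∑ i, (max (H.R i (t+1)) 0 ^ 2 / (2 * (H.c t + d))) *
      Real.exp (max (H.R i (t+1)) 0 ^ 2 / (2 * (H.c t + d))) with hS'def
  -- Step 4 : N e ≤ S'
  have h4 : (N:ℝ) * Real.exp 1 ≤ S' := by
    have hpt : ∀ i : Fin N,
        2 * Real.exp (max (H.R i (t+1)) 0 ^ 2 / (2 * (H.c t + d))) - Real.exp 1 ≤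
          (max (H.R i (t+1)) 0 ^ 2 / (2 * (H.c t + d))) *
            Real.exp (max (H.R i (t+1)) 0 ^ 2 / (2 * (H.c t + d))) :=
      fun i => lemJ _
    have hsum := Finset.sum_le_sum (fun i (_ : i ∈ Finset.univ) => hpt i)
    rw [Finset.sum_sub_distrib, ← Finset.mul_sum, Finset.sum_const, Finset.card_univ,
      Fintype.card_fin, nsmul_eq_mul] at hsum
    rw [hS'def]
    linarith
  have hS'0 : 0 < S' := lt_of_lt_of_le (by positivity) h4
  -- Step 5
  have h5 : ∑ i, Real.exp (max (H.R i (t+1)) 0 ^ 2 / (2 * (H.c t + d))) + (d / H.c t) * S' ≤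
      ∑ i, Real.exp (max (H.R i (t+1)) 0 ^ 2 / (2 * H.c t)) := by
    have hpt : ∀ i : Fin N,
        Real.exp (max (H.R i (t+1)) 0 ^ 2 / (2 * (H.c t + d))) +
          (d / H.c t) * ((max (H.R i (t+1)) 0 ^ 2 / (2 * (H.c t + d))) *
            Real.exp (max (H.R i (t+1)) 0 ^ 2 / (2 * (H.c t + d)))) ≤
          Real.exp (max (H.R i (t+1)) 0 ^ 2 / (2 * H.c t)) := by
      intro i
      set x := max (H.R i (t+1)) 0 ^ 2 / (2 * (H.c t + d)) with hx
      have hx0 : 0 ≤ x := by positivity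
      have hz : max (H.R i (t+1)) 0 ^ 2 / (2 * H.c t) = x + x * (d / H.c t) := by
        rw [hx]; field_simp
      rw [hz, Real.exp_add]
      have h1 : 1 + x * (d / H.c t) ≤ Real.exp (x * (d / H.c t)) := by
        linarith [Real.add_one_le_exp (x * (d / H.c t))]
      calc Real.exp x + (d / H.c t) * (x * Real.exp x)
          = Real.exp x * (1 + x * (d / H.c t)) := by ring
        _ ≤ Real.exp x * Real.exp (x * (d / H.c t)) :=
            mul_le_mul_of_nonneg_left h1 (Real.exp_pos _).le
    have hsum := Finset.sum_le_sum (fun i (_ : i ∈ Finset.univ) => hpt i)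
    rw [Finset.sum_add_distrib, ← Finset.mul_sum] at hsum
    rw [hS'def]
    linarith
  -- Step 6 : Taylor upper bound
  set Et := ∑ i, Real.exp ((max (H.R i t) 0 + 1) ^ 2 / (2 * H.c t)) with hEtdef
  set Tt := ∑ i, ((max (H.R i t) 0 + 1) ^ 2 / (2 * H.c t)) *
      Real.exp ((max (H.R i t) 0 + 1) ^ 2 / (2 * H.c t)) with hTtdef
  have h6 : ∑ i, Real.exp (max (H.R i (t+1)) 0 ^ 2 / (2 * H.c t)) ≤
      (N:ℝ) * Real.exp 1 + (1/(2 * H.c t)) * Et + (1/(H.c t)) * Tt := by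
    have hpt : ∀ i : Fin N,
        Real.exp (max (H.R i (t+1)) 0 ^ 2 / (2 * H.c t)) ≤
          Real.exp (max (H.R i t) 0 ^ 2 / (2 * H.c t)) +
          ((∑ j, H.p j (t+1) * H.loss j (t+1)) - H.loss i (t+1)) *
            ((max (H.R i t) 0 / H.c t) * Real.exp (max (H.R i t) 0 ^ 2 / (2 * H.c t))) +
          (1/(2 * H.c t)) * Real.exp ((max (H.R i t) 0 + 1) ^ 2 / (2 * H.c t)) +
          (1/(H.c t)) * (((max (H.R i t) 0 + 1) ^ 2 / (2 * H.c t)) *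
            Real.exp ((max (H.R i t) 0 + 1) ^ 2 / (2 * H.c t))) := by
      intro i
      obtain ⟨hr1, hr2⟩ := NH_r_bounds H t ht1 i
      have hD := lemD (H.R i t) ((∑ j, H.p j (t+1) * H.loss j (t+1)) - H.loss i (t+1))
        (H.c t) hr1 hr2 hc0
      rw [H.R_rec i t]
      calc Real.exp (max (H.R i t +
              ((∑ j, H.p j (t+1) * H.loss j (t+1)) - H.loss i (t+1))) 0 ^ 2 / (2 * H.c t))
          ≤ _ := hD
        _ = _ := by ring
    have hsum := Finset.sum_le_sum (fun i (_ : i ∈ Finset.univ) => hpt i)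
    rw [Finset.sum_add_distrib, Finset.sum_add_distrib, Finset.sum_add_distrib,
      hsum_t, hcancel, ← Finset.mul_sum, ← Finset.mul_sum] at hsum
    rw [hEtdef, hTtdef]
    linarith
  -- Step 7
  have h7 : Et ≤ (1 + 0.55*δ) * ((N:ℝ) * Real.exp 1) := by
    have hpt : ∀ i : Fin N,
        Real.exp ((max (H.R i t) 0 + 1) ^ 2 / (2 * H.c t)) ≤
          (1 + 0.55*δ) * Real.exp (max (H.R i t) 0 ^ 2 / (2 * H.c t)) := by
      intro i
      exact hE_pointwise δ (Real.log N) (H.c t) (max (H.R i t) 0) hδ0 hδ1 hL hc1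
        (le_max_right _ _) (NH_max_bound H t ht1 i)
    have hsum := Finset.sum_le_sum (fun i (_ : i ∈ Finset.univ) => hpt i)
    rw [← Finset.mul_sum, hsum_t] at hsum
    rw [hEtdef]
    linarith
  -- Step 8
  have h8 : Tt ≤ (1 + 30*δ) * S' + (N:ℝ) * (4.8*δ) := by
    have hpt : ∀ i : Fin N,
        ((max (H.R i t) 0 + 1) ^ 2 / (2 * H.c t)) *
          Real.exp ((max (H.R i t) 0 + 1) ^ 2 / (2 * H.c t)) ≤
        (1 + 30*δ) * ((max (H.R i (t+1)) 0 ^ 2 / (2 * (H.c t + d))) *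
          Real.exp (max (H.R i (t+1)) 0 ^ 2 / (2 * (H.c t + d)))) + 4.8*δ := by
      intro i
      obtain ⟨hr1, hr2⟩ := NH_r_bounds H t ht1 i
      have ha'low : max (H.R i t) 0 - 1 ≤ max (H.R i (t+1)) 0 := by
        rcases le_or_gt (H.R i t) 0 with h | h
        · rw [max_eq_right h]
          have := le_max_right (H.R i (t+1)) 0
          linarith
        · rw [max_eq_left h.le]
          have h1 : H.R i t - 1 ≤ H.R i (t+1) := by
            rw [H.R_rec i t]; linarith
          have := le_max_left (H.R i (t+1)) 0
          linarith
      exact hT_pointwise δ (Real.log N) (H.c t) d (max (H.R i t) 0) (max (H.R i (t+1)) 0)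
        hδ0 hδ1 hL hc1 (le_max_right _ _) (NH_max_bound H t ht1 i)
        ha'low (le_max_right _ _) hddef
    have hsum := Finset.sum_le_sum (fun i (_ : i ∈ Finset.univ) => hpt i)
    rw [Finset.sum_add_distrib, ← Finset.mul_sum, Finset.sum_const, Finset.card_univ,
      Fintype.card_fin, nsmul_eq_mul] at hsum
    rw [hTtdef, hS'def]
    linarith
  -- Step 9 : bracket inequality
  have hbr : (1/2) * Et + Tt ≤ d * S' := by
    have he1 : (2.7182818283:ℝ) < Real.exp 1 := Real.exp_one_gt_d9
    have hEt0 : 0 ≤ Et := by rw [hEtdef]; positivity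
    have hNe : (N:ℝ) * Real.exp 1 ≤ S' := h4
    have hNbound : (N:ℝ) * (4.8*δ) ≤ 1.77*δ * S' := by
      have k1 : (N:ℝ) * (4.8*δ) * 2.7182818283 ≤ (N:ℝ) * Real.exp 1 * (4.8*δ) := by
        nlinarith [mul_nonneg hNpos.le (by positivity : (0:ℝ) ≤ 4.8*δ)]
      nlinarith [mul_le_mul_of_nonneg_right hNe (by positivity : (0:ℝ) ≤ 4.8*δ)]
    have hEtS : (1/2) * Et ≤ (1/2) * ((1 + 0.55*δ) * S') := by
      have : (1 + 0.55*δ) * ((N:ℝ) * Real.exp 1) ≤ (1 + 0.55*δ) * S' :=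
        mul_le_mul_of_nonneg_left hNe (by linarith)
      linarith
    rw [hddef]
    nlinarith [hS'0.le]
  -- Step 10 : divide by c and conclude
  have hP : (1/(2 * H.c t)) * Et + (1/(H.c t)) * Tt ≤ (d / H.c t) * S' := by
    have h1 : ((1/2) * Et + Tt) / H.c t ≤ (d * S') / H.c t :=
      (div_le_div_iff_of_pos_right hc0).mpr hbr
    have e1 : (1/(2 * H.c t)) * Et + (1/(H.c t)) * Tt = ((1/2) * Et + Tt) / H.c t := by
      field_simp
    have e2 : (d / H.c t) * S' = (d * S') / H.c t := by ring
    linarith [e1.le, e1.ge, e2.le, e2.ge, h1]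
  linarith [h3, h4, h5, h6, hP]
end

section
/- Cumulative bound on the scale parameter: under the NormalHedge dynamics, for every constant 0 < δ ≤ 1/2 and every round t ≥ 1, c_t ≤ (3/2)(1 + 49.19 δ)·t + (8 ln³ N)/δ + (81 ln² N)/δ³. -/
open Real Finset Filter

set_option maxHeartbeats 4000000

/-- For `z ≤ 0`, `exp z ≤ 1 + z + z²/2`. -/
lemma exp_le_quad_of_nonpos {z : ℝ} (hz : z ≤ 0) : Real.exp z ≤ 1 + z + z^2/2 := by
  have hder : ∀ x:ℝ, HasDerivAt (fun z : ℝ => 1 + z + z^2/2 - Real.exp z) (1 + x - Real.exp x) x := by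
    intro x
    have h1 : HasDerivAt (fun z : ℝ => 1 + z + z^2/2) (1 + x) x := by
      have := ((hasDerivAt_id x).const_add (1:ℝ)).add ((hasDerivAt_pow 2 x).div_const 2)
      exact this.congr_deriv (by push_cast; ring)
    exact h1.sub (Real.hasDerivAt_exp x)
  have hanti : Antitone (fun z : ℝ => 1 + z + z^2/2 - Real.exp z) := by
    apply antitone_of_deriv_nonpos
    · exact fun x => (hder x).differentiableAt
    · intro x; rw [(hder x).deriv]; nlinarith [Real.add_one_le_exp x]
  have := hanti hz
  simp only [Real.exp_zero] at this
  nlinarith [this]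

/-- For `0 ≤ z`, `exp z ≤ 1 + z + (z²/2) exp z`. -/
lemma exp_le_quad_of_nonneg {z : ℝ} (hz : 0 ≤ z) :
    Real.exp z ≤ 1 + z + z^2/2 * Real.exp z := by
  -- g(z) = z²/2 - 1 + (1+z) exp(-z) is monotone, g 0 = 0
  have hder : ∀ x:ℝ, HasDerivAt (fun z : ℝ => z^2/2 - 1 + (1+z) * Real.exp (-z))
      (x - x * Real.exp (-x)) x := by
    intro x
    have h1 : HasDerivAt (fun z : ℝ => z^2/2 - 1) x x := by
      have := ((hasDerivAt_pow 2 x).div_const 2).sub_const 1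
      exact this.congr_deriv (by push_cast; ring)
    have h2 : HasDerivAt (fun z : ℝ => Real.exp (-z)) (-Real.exp (-x)) x := by
      exact ((Real.hasDerivAt_exp (-x)).comp x (hasDerivAt_neg x)).congr_deriv (by ring)
    have h3 : HasDerivAt (fun z : ℝ => (1+z) * Real.exp (-z))
        (1 * Real.exp (-x) + (1+x) * (-Real.exp (-x))) x :=
      (((hasDerivAt_id x).const_add (1:ℝ))).mul h2
    have := h1.add h3
    exact this.congr_deriv (by ring)
  have hmono : Monotone (fun z : ℝ => z^2/2 - 1 + (1+z) * Real.exp (-z)) := by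
    apply monotone_of_deriv_nonneg
    · exact fun x => (hder x).differentiableAt
    · intro x; rw [(hder x).deriv]
      rcases le_or_gt 0 x with h | h
      · have : Real.exp (-x) ≤ 1 := by
          rw [Real.exp_le_one_iff]; linarith
        nlinarith [Real.exp_pos (-x)]
      · have : (1:ℝ) ≤ Real.exp (-x) := by
          rw [Real.one_le_exp_iff]; linarith
        nlinarith [Real.exp_pos (-x)]
  have h0 := hmono hz
  simp only [neg_zero, Real.exp_zero] at h0
  have h0' : 0 ≤ z^2/2 - 1 + (1+z) * Real.exp (-z) := by nlinarith [h0]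
  have hp := Real.exp_pos z
  have hme : Real.exp (-z) * Real.exp z = 1 := by
    rw [← Real.exp_add]; simp
  nlinarith [h0', hp, hme]

/-- Combined: `exp z ≤ 1+z+(z²/2) exp (max z 0)`. -/
lemma exp_le_quad (z : ℝ) : Real.exp z ≤ 1 + z + z^2/2 * Real.exp (max z 0) := by
  rcases le_or_gt z 0 with h | h
  · rw [max_eq_right h, Real.exp_zero]
    have := exp_le_quad_of_nonpos h; nlinarith
  · rw [max_eq_left h.le]
    exact exp_le_quad_of_nonneg h.le

/-- `exp z ≤ 1 + z * exp z` for `0 ≤ z`. -/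
lemma exp_le_one_add_mul_exp {z : ℝ} (hz : 0 ≤ z) : Real.exp z ≤ 1 + z * Real.exp z := by
  have h := Real.add_one_le_exp (-z)
  have hme : Real.exp (-z) * Real.exp z = 1 := by rw [← Real.exp_add]; simp
  nlinarith [Real.exp_pos z]

/-- Tangent line: `2 v - e ≤ v * log v` for `v > 0`. -/
lemma tangent_line_mul_log {v : ℝ} (hv : 0 < v) : 2 * v - Real.exp 1 ≤ v * Real.log v := by
  set s := Real.log v with hs
  have hv' : v = Real.exp s := (Real.exp_log hv).symm
  rw [hv']
  -- need 2 e^s - e ≤ s e^s  ⟺ (2-s) e^s ≤ e  ⟸ (2-s) ≤ e^{1-s}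
  rcases le_or_gt s 2 with h | h
  · have h1 : (2 - s) ≤ Real.exp (1 - s) := by
      have := Real.add_one_le_exp (1 - s); linarith
    have h2 : Real.exp (1-s) * Real.exp s = Real.exp 1 := by rw [← Real.exp_add]; ring_nf
    nlinarith [Real.exp_pos s, Real.exp_pos (1-s)]
  · nlinarith [Real.exp_pos s, Real.exp_pos (1:ℝ)]

/-- `u e^u - s e^s ≤ (u-s)(1+u)e^u` for `0 ≤ s ≤ u`. -/
lemma mul_exp_sub_mul_exp_le {s u : ℝ} (hs : 0 ≤ s) (hsu : s ≤ u) :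
    u * Real.exp u - s * Real.exp s ≤ (u - s) * (1 + u) * Real.exp u := by
  have h1 : Real.exp u - Real.exp s ≤ (u - s) * Real.exp u := by
    have := Real.add_one_le_exp (s - u)
    have hme : Real.exp (s-u) * Real.exp u = Real.exp s := by rw [← Real.exp_add]; ring_nf
    nlinarith [Real.exp_pos u]
  have h2 : s * (Real.exp u - Real.exp s) ≤ s * ((u - s) * Real.exp u) :=
    mul_le_mul_of_nonneg_left h1 hs
  nlinarith [h2, Real.exp_pos u, mul_nonneg (sub_nonneg.2 hsu) (Real.exp_pos u).le]


/-- Core Taylor bound over abstract nonneg reals. -/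
lemma taylor_core {c a b r : ℝ} (hc : 0 < c) (hr1 : -1 ≤ r) (hr2 : r ≤ 1)
    (ha0 : 0 ≤ a) (hb0 : 0 ≤ b)
    (hq : b^2 - a^2 - 2*a*r ≤ 1) (habs : |b^2 - a^2| ≤ 2*a + 1) :
    Real.exp (b^2/(2*c)) ≤
      Real.exp (a^2/(2*c)) + (a/c) * Real.exp (a^2/(2*c)) * r +
        (1/(2*c)) * (1 + (a + 1)^2/c) * Real.exp ((a + 1)^2/(2*c)) := by
  obtain ⟨z, hz⟩ : ∃ z, z = (b^2 - a^2)/(2*c) := ⟨_, rfl⟩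
  have h2c : (0:ℝ) < 2*c := by linarith
  have hexp : Real.exp (b^2/(2*c)) = Real.exp (a^2/(2*c)) * Real.exp z := by
    rw [← Real.exp_add]; congr 1; rw [hz]; field_simp; ring
  have hzub : z ≤ a*r/c + 1/(2*c) := by
    rw [hz]
    have h1 : (b^2 - a^2)/(2*c) ≤ (2*a*r+1)/(2*c) := by
      gcongr
      linarith [hq]
    have h2 : (2*a*r+1)/(2*c) = a*r/c + 1/(2*c) := by field_simp
    linarith
  have hzle : z ≤ (2*a+1)/(2*c) := by
    rw [hz]
    gcongr
    linarith [(abs_le.1 habs).2]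
  have hmz : max z 0 ≤ (2*a+1)/(2*c) := max_le hzle (by positivity)
  have hzsq : z^2 ≤ (a+1)^2/c^2 := by
    have h1 : |z| ≤ (2*a+1)/(2*c) := by
      rw [hz, abs_div, abs_of_pos h2c, div_le_div_iff₀ h2c h2c]
      nlinarith [habs]
    have h2 : z^2 ≤ ((2*a+1)/(2*c))^2 := by
      rw [← sq_abs]
      exact pow_le_pow_left₀ (abs_nonneg z) h1 2
    have h3 : ((2*a+1)/(2*c))^2 ≤ (a+1)^2/c^2 := by
      rw [div_pow, div_le_div_iff₀ (by positivity) (by positivity)]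
      have h4 : (0:ℝ) ≤ 4*a+3 := by linarith
      nlinarith [mul_nonneg h4 (sq_nonneg c)]
    linarith
  obtain ⟨A1, hA1⟩ : ∃ A1, A1 = Real.exp (a^2/(2*c)) := ⟨_, rfl⟩
  obtain ⟨A2, hA2⟩ : ∃ A2, A2 = Real.exp ((a+1)^2/(2*c)) := ⟨_, rfl⟩
  rw [← hA1, ← hA2]
  rw [← hA1] at hexp
  have hA1p : 0 < A1 := hA1 ▸ Real.exp_pos _
  have hA2p : 0 < A2 := hA2 ▸ Real.exp_pos _
  have hA12 : A1 ≤ A2 := by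
    rw [hA1, hA2]
    apply Real.exp_le_exp.2
    gcongr
    nlinarith
  have hA2eq : A2 = A1 * Real.exp ((2*a+1)/(2*c)) := by
    rw [hA1, hA2, ← Real.exp_add]
    congr 1
    field_simp
    ring
  have hstep1 : Real.exp (b^2/(2*c)) ≤ A1 * (1 + z + z^2/2 * Real.exp (max z 0)) := by
    rw [hexp]
    exact mul_le_mul_of_nonneg_left (exp_le_quad z) hA1p.le
  have ht2 : A1 * z ≤ (a/c) * A1 * r + (1/(2*c)) * A2 := by
    have h1 : A1 * z ≤ A1 * (a*r/c + 1/(2*c)) := mul_le_mul_of_nonneg_left hzub hA1p.le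
    have h2 : A1 * (1/(2*c)) ≤ A2 * (1/(2*c)) :=
      mul_le_mul_of_nonneg_right hA12 (by positivity)
    have h3 : A1*(a*r/c + 1/(2*c)) = a/c*A1*r + A1*(1/(2*c)) := by ring
    have h4 : (1/(2*c)) * A2 = A2 * (1/(2*c)) := by ring
    linarith
  have ht3 : A1 * (z^2/2 * Real.exp (max z 0)) ≤ ((a+1)^2/(2*c^2)) * A2 := by
    have h1 : A1 * Real.exp (max z 0) ≤ A2 := by
      rw [hA2eq]
      exact mul_le_mul_of_nonneg_left (Real.exp_le_exp.2 hmz) hA1p.le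
    have h2 : A1 * (z^2/2 * Real.exp (max z 0)) = (z^2/2) * (A1 * Real.exp (max z 0)) := by ring
    have he : (a+1)^2/(2*c^2) = ((a+1)^2/c^2)/2 := by ring
    have hq2 : z^2/2 ≤ (a+1)^2/(2*c^2) := by rw [he]; linarith [hzsq]
    calc A1 * (z^2/2 * Real.exp (max z 0)) = (z^2/2) * (A1 * Real.exp (max z 0)) := h2
      _ ≤ (z^2/2) * A2 := mul_le_mul_of_nonneg_left h1 (by positivity)
      _ ≤ ((a+1)^2/(2*c^2)) * A2 := mul_le_mul_of_nonneg_right hq2 hA2p.le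
  have hsc : 1/(2*c) + (a+1)^2/(2*c^2) = (1/(2*c)) * (1 + (a+1)^2/c) := by
    field_simp
  calc Real.exp (b^2/(2*c)) ≤ A1 * (1 + z + z^2/2 * Real.exp (max z 0)) := hstep1
    _ = A1 + A1 * z + A1 * (z^2/2 * Real.exp (max z 0)) := by ring
    _ ≤ A1 + ((a/c) * A1 * r + (1/(2*c)) * A2) + ((a+1)^2/(2*c^2)) * A2 := by linarith
    _ = A1 + (a/c) * A1 * r + (1/(2*c)) * (1 + (a+1)^2/c) * A2 := by
        linear_combination A2 * hsc

/-- One-step Taylor bound for the potential `Φ(R) = exp((R⁺)²/(2c))`. -/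
lemma taylor_step {c R r : ℝ} (hc : 0 < c) (hr : |r| ≤ 1) :
    Real.exp ((max (R+r) 0)^2/(2*c)) ≤
      Real.exp ((max R 0)^2/(2*c)) + (max R 0/c) * Real.exp ((max R 0)^2/(2*c)) * r +
        (1/(2*c)) * (1 + (max R 0 + 1)^2/c) * Real.exp ((max R 0 + 1)^2/(2*c)) := by
  obtain ⟨hr1, hr2⟩ := abs_le.1 hr
  have ha0 : (0:ℝ) ≤ max R 0 := le_max_right _ _
  have hb0 : (0:ℝ) ≤ max (R+r) 0 := le_max_right _ _
  have hq : (max (R+r) 0)^2 - (max R 0)^2 - 2*(max R 0)*r ≤ 1 := by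
    rcases le_or_gt 0 R with h1 | h1 <;> rcases le_or_gt 0 (R+r) with h2 | h2
    · rw [max_eq_left h1, max_eq_left h2]; nlinarith
    · rw [max_eq_left h1, max_eq_right h2.le]; nlinarith
    · rw [max_eq_right h1.le, max_eq_left h2]; nlinarith
    · rw [max_eq_right h1.le, max_eq_right h2.le]; norm_num
  have habs : |(max (R+r) 0)^2 - (max R 0)^2| ≤ 2*(max R 0) + 1 := by
    rw [abs_le]
    constructor <;>
    · rcases le_or_gt 0 R with h1 | h1 <;> rcases le_or_gt 0 (R+r) with h2 | h2
      · rw [max_eq_left h1, max_eq_left h2]; nlinarith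
      · rw [max_eq_left h1, max_eq_right h2.le]; nlinarith
      · rw [max_eq_right h1.le, max_eq_left h2]; nlinarith
      · rw [max_eq_right h1.le, max_eq_right h2.le]; norm_num
  exact taylor_core hc hr1 hr2 ha0 hb0 hq habs

section NumHelpers
variable {δ B c : ℝ}

lemma num_c_lb (hδ0 : 0 < δ) (hδ1 : δ ≤ 1/2) (hB : 1.6931 ≤ B)
    (hc : 12*B/δ^3 ≤ c) : 162 ≤ c := by
  rw [div_le_iff₀ (by positivity)] at hc
  nlinarith [pow_pos hδ0 3, sq_nonneg δ, pow_le_pow_left₀ hδ0.le hδ1 3]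

lemma num_Delta (hδ0 : 0 < δ) (hδ1 : δ ≤ 1/2) (hB : 1.6931 ≤ B)
    (hc : 12*B/δ^3 ≤ c) : 3/2*(1+49.19*δ) ≤ 0.48*δ*c := by
  rw [div_le_iff₀ (by positivity)] at hc
  nlinarith [pow_pos hδ0 3, sq_nonneg δ, mul_pos hδ0 hδ0,
    pow_le_pow_left₀ hδ0.le hδ1 2, pow_le_pow_left₀ hδ0.le hδ1 3]

lemma num_DeltaB (hδ0 : 0 < δ) (hδ1 : δ ≤ 1/2) (hB : 1.6931 ≤ B)
    (hc : 12*B/δ^3 ≤ c) : 3/2*(1+49.19*δ)*(B+0.3*δ) ≤ 0.88*δ*c := by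
  rw [div_le_iff₀ (by positivity)] at hc
  -- δ*c ≥ 12*B/δ^2 ≥ 48*B
  have h1 : 48*B ≤ δ*c := by
    nlinarith [pow_pos hδ0 3, pow_le_pow_left₀ hδ0.le hδ1 2, mul_pos hδ0 hδ0]
  nlinarith [hδ0, hδ1, hB, h1]

lemma num_x (hδ0 : 0 < δ) (hδ1 : δ ≤ 1/2) (hB : 1.6931 ≤ B)
    (hc : 12*B/δ^3 ≤ c) {x : ℝ} (hx0 : 0 ≤ x) (hx : x^2 ≤ 2*c*B) :
    x ≤ 0.29*δ*c := by
  rw [div_le_iff₀ (by positivity)] at hc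
  have hcpos : (0:ℝ) < c := by nlinarith [pow_pos hδ0 3]
  have h1 : 2*c*B ≤ (0.29*δ*c)^2 := by
    have h2 : 12*B*(2*c) ≤ (c*δ^3)*(2*c) :=
      mul_le_mul_of_nonneg_right hc (by linarith)
    have h3 : δ^3*(c*c) ≤ (1/2)*δ^2*(c*c) := by
      have : δ^3 ≤ (1/2)*δ^2 := by nlinarith [sq_nonneg δ]
      nlinarith [mul_pos hcpos hcpos]
    nlinarith [mul_pos hcpos hcpos, mul_pos hδ0 hδ0]
  nlinarith [sq_nonneg (x - 0.29*δ*c), sq_nonneg (x + 0.29*δ*c), mul_pos hδ0 hcpos]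

lemma num_one (hδ0 : 0 < δ) (hδ1 : δ ≤ 1/2) (hB : 1.6931 ≤ B)
    (hc : 12*B/δ^3 ≤ c) : 1 ≤ 0.02*δ*c := by
  rw [div_le_iff₀ (by positivity)] at hc
  nlinarith [pow_pos hδ0 3, pow_le_pow_left₀ hδ0.le hδ1 2, mul_pos hδ0 hδ0]

lemma num_final (hδ0 : 0 < δ) (hδ1 : δ ≤ 1/2) :
    (1+0.48*δ)*((1+0.36*δ)*(3+1.96*δ)) ≤ 3*(1+49.19*δ)*(1-0.44*δ) := by
  nlinarith [hδ0, hδ1, sq_nonneg δ, mul_pos hδ0 hδ0]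

lemma num_ratio (hδ0 : 0 < δ) (hδ1 : δ ≤ 1/2) :
    (1+0.29*δ)/(1-0.29*δ) ≤ 1+0.68*δ := by
  rw [div_le_iff₀ (by nlinarith)]
  nlinarith

lemma exp_small (hδ0 : 0 < δ) (hδ1 : δ ≤ 1/2) : Real.exp (0.3*δ) ≤ 1+0.36*δ := by
  have h0 : (0:ℝ) ≤ 0.3*δ := by linarith
  have h1 : Real.exp (0.3*δ) ≤ 1 + (0.3*δ) * Real.exp (0.3*δ) := by
    have h := Real.add_one_le_exp (-(0.3*δ))
    have hme : Real.exp (-(0.3*δ)) * Real.exp (0.3*δ) = 1 := by rw [← Real.exp_add]; simp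
    nlinarith [Real.exp_pos (0.3*δ)]
  -- exp(0.3δ)(1-0.3δ) ≤ 1 with 1-0.3δ ≥ 0.85
  nlinarith [Real.exp_pos (0.3*δ), h1, hδ0, hδ1]
end NumHelpers

namespace NormalHedge


variable {N : ℕ} (H : NormalHedge N)

lemma Npos (H : NormalHedge N) : (0:ℝ) < N := by
  have h := H.hN
  have : 0 < N := by omega
  exact_mod_cast this

lemma sum_exp {t : ℕ} (ht : 1 ≤ t) :
    ∑ i, Real.exp (max (H.R i t) 0 ^ 2 / (2 * H.c t)) = N * Real.exp 1 := by
  have h := H.c_eq t ht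
  have hN : (N:ℝ) ≠ 0 := ne_of_gt H.Npos
  field_simp at h
  linear_combination h

lemma exists_pos {t : ℕ} (ht : 1 ≤ t) : ∃ j, 0 < max (H.R j t) 0 := by
  by_contra hcon
  push_neg at hcon
  have hz : ∀ j, max (H.R j t) 0 = 0 := fun j => le_antisymm (hcon j) (le_max_right _ _)
  have h := H.sum_exp ht
  simp only [hz] at h
  norm_num at h
  have h2 : (N:ℝ) * 1 < (N:ℝ) * Real.exp 1 := by
    apply mul_lt_mul_of_pos_left _ H.Npos
    have := Real.exp_one_gt_d9; linarith
  rw [mul_one] at h2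
  rw [← h] at h2
  exact lt_irrefl _ h2

lemma sq_le {t : ℕ} (ht : 1 ≤ t) (i : Fin N) :
    max (H.R i t) 0 ^ 2 ≤ 2 * H.c t * (1 + Real.log N) := by
  have hc := H.c_pos t ht
  have h1 : Real.exp (max (H.R i t) 0 ^ 2 / (2 * H.c t)) ≤ N * Real.exp 1 := by
    rw [← H.sum_exp ht]
    exact Finset.single_le_sum (f := fun k => Real.exp (max (H.R k t) 0 ^ 2 / (2 * H.c t)))
      (fun j _ => (Real.exp_pos _).le) (Finset.mem_univ i)
  have h2 : (N:ℝ) * Real.exp 1 = Real.exp (Real.log N + 1) := by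
    rw [Real.exp_add, Real.exp_log H.Npos]
  rw [h2] at h1
  have h3 := Real.exp_le_exp.1 h1
  rw [div_le_iff₀ (by linarith)] at h3
  nlinarith [h3]

lemma exists_ge {t : ℕ} (ht : 1 ≤ t) : ∃ i, 2 * H.c t ≤ max (H.R i t) 0 ^ 2 := by
  have hc := H.c_pos t ht
  by_contra hcon
  push_neg at hcon
  have h : ∀ i : Fin N, Real.exp (max (H.R i t) 0 ^ 2 / (2 * H.c t)) < Real.exp 1 := by
    intro i
    apply Real.exp_lt_exp.2
    rw [div_lt_one (by linarith)]
    linarith [hcon i]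
  have h2N := H.hN
  have hne : (Finset.univ : Finset (Fin N)).Nonempty := by
    have : Nonempty (Fin N) := ⟨⟨0, by omega⟩⟩
    exact Finset.univ_nonempty
  have h2 : ∑ i, Real.exp (max (H.R i t) 0 ^ 2 / (2 * H.c t)) <
      ∑ _i : Fin N, Real.exp 1 := Finset.sum_lt_sum_of_nonempty hne (fun i _ => h i)
  rw [H.sum_exp ht] at h2
  rw [Finset.sum_const, Finset.card_univ, Fintype.card_fin, nsmul_eq_mul] at h2
  exact lt_irrefl _ h2

lemma learner_mem {t : ℕ} (ht : 1 ≤ t) :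
    (∑ j, H.p j t * H.loss j t) ∈ Set.Icc (0:ℝ) 1 := by
  rcases Nat.exists_eq_add_of_le ht with ⟨s, hs⟩
  rcases Nat.eq_zero_or_pos s with h0 | hpos
  · -- t = 1
    subst h0
    simp only [Nat.add_zero] at hs
    subst hs
    constructor
    · apply Finset.sum_nonneg
      intro j _
      have := H.loss_mem j 1 le_rfl
      have hp := H.p_one j
      rw [hp]
      have := this.1
      positivity
    · calc ∑ j, H.p j 1 * H.loss j 1 ≤ ∑ _j : Fin N, (1/N : ℝ) := by
            apply Finset.sum_le_sum
            intro j _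
            rw [H.p_one j]
            have hl := H.loss_mem j 1 le_rfl
            have h1 : (0:ℝ) < 1/N := by have := H.Npos; positivity
            nlinarith [hl.1, hl.2]
        _ = 1 := by
            rw [Finset.sum_const, Finset.card_univ, Fintype.card_fin, nsmul_eq_mul]
            have : (N:ℝ) ≠ 0 := ne_of_gt (Npos H)
            field_simp
  · -- t = s + 1 with s ≥ 1
    have hs1 : 1 ≤ s := hpos
    have ht' : t = s + 1 := by omega
    subst ht'
    have hc := H.c_pos s hs1
    set w : Fin N → ℝ := fun j => (max (H.R j s) 0 / H.c s) *
      Real.exp (max (H.R j s) 0 ^ 2 / (2 * H.c s)) with hw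
    have hw0 : ∀ j, 0 ≤ w j := by
      intro j
      have h1 : 0 ≤ max (H.R j s) 0 := le_max_right _ _
      have := Real.exp_pos (max (H.R j s) 0 ^ 2 / (2 * H.c s))
      positivity
    have hW : 0 < ∑ j, w j := by
      obtain ⟨j, hj⟩ := H.exists_pos hs1
      apply Finset.sum_pos' (fun i _ => hw0 i) ⟨j, Finset.mem_univ j, ?_⟩
      have := Real.exp_pos (max (H.R j s) 0 ^ 2 / (2 * H.c s))
      rw [hw]
      positivity
    have hp : ∀ j, H.p j (s+1) = w j / ∑ k, w k := fun j => H.p_rec j s hs1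
    constructor
    · apply Finset.sum_nonneg
      intro j _
      rw [hp j]
      have := (H.loss_mem j (s+1) (by omega)).1
      have := hw0 j
      positivity
    · calc ∑ j, H.p j (s+1) * H.loss j (s+1) ≤ ∑ j, H.p j (s+1) := by
            apply Finset.sum_le_sum
            intro j _
            have hl := H.loss_mem j (s+1) (by omega)
            have hpj : 0 ≤ H.p j (s+1) := by
              rw [hp j]
              exact div_nonneg (hw0 j) hW.le
            nlinarith [hl.1, hl.2]
        _ = 1 := by
            simp only [hp]
            rw [← Finset.sum_div]
            field_simp
  
lemma step_abs (t : ℕ) (i : Fin N) : |H.R i (t+1) - H.R i t| ≤ 1 := by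
  rw [H.R_rec i t]
  have hA := H.learner_mem (t := t+1) (by omega)
  have hl := H.loss_mem i (t+1) (by omega)
  rw [abs_le]
  constructor <;> simp only [add_sub_cancel_left] <;>
    [linarith [hA.1, hl.2]; linarith [hA.2, hl.1]]

lemma zero_sum {t : ℕ} (ht : 1 ≤ t) :
    ∑ i, (max (H.R i t) 0 / H.c t * Real.exp (max (H.R i t) 0 ^ 2 / (2 * H.c t))) *
      ((∑ j, H.p j (t+1) * H.loss j (t+1)) - H.loss i (t+1)) = 0 := by
  have hc := H.c_pos t ht
  set w : Fin N → ℝ := fun j => (max (H.R j t) 0 / H.c t) *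
    Real.exp (max (H.R j t) 0 ^ 2 / (2 * H.c t)) with hw
  have hw0 : ∀ j, 0 ≤ w j := by
    intro j
    have h1 : 0 ≤ max (H.R j t) 0 := le_max_right _ _
    have := Real.exp_pos (max (H.R j t) 0 ^ 2 / (2 * H.c t))
    positivity
  have hW : 0 < ∑ j, w j := by
    obtain ⟨j, hj⟩ := H.exists_pos ht
    apply Finset.sum_pos' (fun i _ => hw0 i) ⟨j, Finset.mem_univ j, ?_⟩
    have := Real.exp_pos (max (H.R j t) 0 ^ 2 / (2 * H.c t))
    rw [hw]
    positivity
  have hp : ∀ j, H.p j (t+1) = w j / ∑ k, w k := fun j => H.p_rec j t ht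
  have hW' : (∑ k, w k) ≠ 0 := ne_of_gt hW
  have hA : (∑ j, H.p j (t+1) * H.loss j (t+1)) =
      (∑ j, w j * H.loss j (t+1)) / (∑ k, w k) := by
    have he : ∀ j : Fin N, H.p j (t+1) * H.loss j (t+1) =
        (w j * H.loss j (t+1)) / (∑ k, w k) := by
      intro j; rw [hp j]; ring
    rw [Finset.sum_congr rfl (fun j _ => he j), ← Finset.sum_div]
  calc ∑ i, w i * ((∑ j, H.p j (t+1) * H.loss j (t+1)) - H.loss i (t+1))
      = ∑ i, (w i * (∑ j, H.p j (t+1) * H.loss j (t+1)) - w i * H.loss i (t+1)) := by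
        apply Finset.sum_congr rfl
        intro i _
        ring
    _ = (∑ i, w i * (∑ j, H.p j (t+1) * H.loss j (t+1))) - ∑ i, w i * H.loss i (t+1) :=
        Finset.sum_sub_distrib _ _
    _ = (∑ i, w i) * (∑ j, H.p j (t+1) * H.loss j (t+1)) - ∑ i, w i * H.loss i (t+1) := by
        rw [Finset.sum_mul]
    _ = 0 := by
        rw [hA]
        field_simp
        ring

lemma logN_ge (H : NormalHedge N) : 0.6931 ≤ Real.log N := by
  have h2 : (2:ℝ) ≤ N := by exact_mod_cast H.hN
  have := Real.log_le_log (by norm_num) h2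
  have h3 := Real.log_two_gt_d9
  linarith

/-- Main per-step bound: if `c t` is above the threshold then it grows by at most
`(3/2)(1+49.19δ)`. -/
lemma step_main {t : ℕ} (ht : 1 ≤ t) {δ : ℝ} (hδ0 : 0 < δ) (hδ1 : δ ≤ 1/2)
    (hth : 12*(1 + Real.log N)/δ^3 ≤ H.c t) :
    H.c (t+1) ≤ H.c t + 3/2*(1+49.19*δ) := by
  obtain ⟨B, hBdef⟩ : ∃ B : ℝ, B = 1 + Real.log N := ⟨_, rfl⟩
  have hB : 1.6931 ≤ B := by have := H.logN_ge; rw [hBdef]; linarith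
  obtain ⟨c, hcdef⟩ : ∃ c, c = H.c t := ⟨_, rfl⟩
  rw [← hcdef, ← hBdef] at hth
  have hc : 0 < c := hcdef ▸ H.c_pos t ht
  have hc162 : 162 ≤ c := num_c_lb hδ0 hδ1 hB hth
  obtain ⟨Δ, hΔdef⟩ : ∃ Δ, Δ = 3/2*(1+49.19*δ) := ⟨_, rfl⟩
  have hΔpos : 0 < Δ := by rw [hΔdef]; nlinarith
  have hΔc : Δ ≤ 0.48*δ*c := hΔdef ▸ num_Delta hδ0 hδ1 hB hth
  have hΔB : Δ*(B+0.3*δ) ≤ 0.88*δ*c := hΔdef ▸ num_DeltaB hδ0 hδ1 hB hth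
  have hone : 1 ≤ 0.02*δ*c := num_one hδ0 hδ1 hB hth
  -- notation
  obtain ⟨x, hxdef⟩ : ∃ x : Fin N → ℝ, x = fun i => max (H.R i t) 0 := ⟨_, rfl⟩
  obtain ⟨x', hx'def⟩ : ∃ x' : Fin N → ℝ, x' = fun i => max (H.R i (t+1)) 0 := ⟨_, rfl⟩
  obtain ⟨u, hudef⟩ : ∃ u : Fin N → ℝ, u = fun i => (x i)^2/(2*c) := ⟨_, rfl⟩
  obtain ⟨u', hu'def⟩ : ∃ u' : Fin N → ℝ, u' = fun i => (x' i)^2/(2*c) := ⟨_, rfl⟩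
  have hx0 : ∀ i, 0 ≤ x i := fun i => hxdef ▸ le_max_right _ _
  have hx'0 : ∀ i, 0 ≤ x' i := fun i => hx'def ▸ le_max_right _ _
  have hu0 : ∀ i, 0 ≤ u i := fun i => by rw [hudef]; positivity
  have hu'0 : ∀ i, 0 ≤ u' i := fun i => by rw [hu'def]; positivity
  have hxB : ∀ i, (x i)^2 ≤ 2*c*B := by
    intro i; rw [hxdef, hBdef, hcdef]; exact H.sq_le ht i
  have hxδ : ∀ i, x i ≤ 0.29*δ*c := fun i => num_x hδ0 hδ1 hB hth (hx0 i) (hxB i)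
  have huB : ∀ i, u i ≤ B := by
    intro i
    rw [hudef]
    rw [div_le_iff₀ (by linarith)]
    nlinarith [hxB i]
  have hxx' : ∀ i, |x' i - x i| ≤ 1 := by
    intro i
    rw [hxdef, hx'def]
    calc |max (H.R i (t+1)) 0 - max (H.R i t) 0| ≤ |H.R i (t+1) - H.R i t| :=
          abs_max_sub_max_le_abs _ _ _
      _ ≤ 1 := H.step_abs t i
  have hsum : ∑ i, Real.exp (u i) = N * Real.exp 1 := by
    rw [hudef, hxdef, hcdef]
    exact H.sum_exp ht
  obtain ⟨Ne, hNedef⟩ : ∃ Ne : ℝ, Ne = N * Real.exp 1 := ⟨_, rfl⟩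
  rw [← hNedef] at hsum
  have hNepos : 0 < Ne := by
    rw [hNedef]; have := H.Npos; positivity
  obtain ⟨S, hSdef⟩ : ∃ S, S = ∑ i, u i * Real.exp (u i) := ⟨_, rfl⟩
  obtain ⟨S', hS'def⟩ : ∃ S', S' = ∑ i, u' i * Real.exp (u' i) := ⟨_, rfl⟩
  obtain ⟨V, hVdef⟩ : ∃ V, V = ∑ i, Real.exp (u' i) := ⟨_, rfl⟩
  have hS'0 : 0 ≤ S' := by
    rw [hS'def]
    exact Finset.sum_nonneg fun i _ => mul_nonneg (hu'0 i) (Real.exp_pos _).le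
  -- S ≥ Ne
  have hSNe : Ne ≤ S := by
    have h1 : ∀ i, 2 * Real.exp (u i) - Real.exp 1 ≤ u i * Real.exp (u i) := by
      intro i
      have := tangent_line_mul_log (Real.exp_pos (u i))
      rwa [Real.log_exp, mul_comm (Real.exp (u i))] at this
    have h2 := Finset.sum_le_sum (fun i (_ : i ∈ Finset.univ) => h1 i)
    rw [Finset.sum_sub_distrib, ← Finset.mul_sum, hsum, Finset.sum_const,
      Finset.card_univ, Fintype.card_fin, nsmul_eq_mul] at h2
    rw [hSdef, hNedef]
    linarith [h2]
  -- Step A : V ≤ Ne + (1+0.36δ)/(2c) * ((1+0.6δ) Ne + 2 S)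
  have hVle : V ≤ Ne + (1+0.36*δ)/(2*c) * ((1+0.6*δ)*Ne + 2*S) := by
    have hA : ∀ i, Real.exp (u' i) ≤ Real.exp (u i)
        + (x i/c) * Real.exp (u i) * ((∑ j, H.p j (t+1) * H.loss j (t+1)) - H.loss i (t+1))
        + (1/(2*c)) * (1 + (x i+1)^2/c) * Real.exp ((x i+1)^2/(2*c)) := by
      intro i
      have hr : |((∑ j, H.p j (t+1) * H.loss j (t+1)) - H.loss i (t+1))| ≤ 1 := by
        have := H.step_abs t i
        rw [H.R_rec i t] at this
        simpa using this
      have h := taylor_step (c := c) (R := H.R i t)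
        (r := (∑ j, H.p j (t+1) * H.loss j (t+1)) - H.loss i (t+1)) hc hr
      have heq : H.R i t + ((∑ j, H.p j (t+1) * H.loss j (t+1)) - H.loss i (t+1))
          = H.R i (t+1) := (H.R_rec i t).symm
      rw [heq] at h
      simp only [hu'def, hudef, hxdef, hx'def]
      exact h
    have hsumA := Finset.sum_le_sum (fun i (_ : i ∈ Finset.univ) => hA i)
    rw [Finset.sum_add_distrib, Finset.sum_add_distrib, hsum] at hsumA
    have hmid : ∑ i, (x i/c) * Real.exp (u i) *
        ((∑ j, H.p j (t+1) * H.loss j (t+1)) - H.loss i (t+1)) = 0 := by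
      simp only [hxdef, hudef]
      rw [hcdef]
      exact H.zero_sum ht
    have hthird : ∑ i, (1/(2*c)) * (1 + (x i+1)^2/c) * Real.exp ((x i+1)^2/(2*c))
        ≤ (1+0.36*δ)/(2*c) * ((1+0.6*δ)*Ne + 2*S) := by
      have hper : ∀ i, (1/(2*c)) * (1 + (x i+1)^2/c) * Real.exp ((x i+1)^2/(2*c))
          ≤ (1+0.36*δ)/(2*c) * ((1+0.6*δ)*Real.exp (u i) + 2*(u i * Real.exp (u i))) := by
        intro i
        have h2x1 : (2*(x i)+1)/(2*c) ≤ 0.3*δ := by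
          rw [div_le_iff₀ (by linarith)]
          nlinarith [hxδ i, hone]
        have hexparg : (x i+1)^2/(2*c) = u i + (2*(x i)+1)/(2*c) := by
          rw [hudef]; field_simp; ring
        have hexpb : Real.exp ((x i+1)^2/(2*c)) ≤ Real.exp (u i) * (1+0.36*δ) := by
          rw [hexparg, Real.exp_add]
          have h1 : Real.exp ((2*(x i)+1)/(2*c)) ≤ Real.exp (0.3*δ) :=
            Real.exp_le_exp.2 h2x1
          have h2 := exp_small hδ0 hδ1
          exact mul_le_mul_of_nonneg_left (h1.trans h2) (Real.exp_pos _).le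
        have hcoef : 1 + (x i+1)^2/c ≤ 1 + 0.6*δ + 2*(u i) := by
          have : (x i+1)^2/c = 2*(u i) + (2*(x i)+1)/c := by
            rw [hudef]; field_simp; ring
          rw [this]
          have : (2*(x i)+1)/c ≤ 0.6*δ := by
            rw [div_le_iff₀ (by linarith)]
            nlinarith [hxδ i, hone]
          linarith
        have hcpos2 : (0:ℝ) < 1/(2*c) := by positivity
        calc (1/(2*c)) * (1 + (x i+1)^2/c) * Real.exp ((x i+1)^2/(2*c))
            ≤ (1/(2*c)) * (1 + 0.6*δ + 2*(u i)) * (Real.exp (u i) * (1+0.36*δ)) := by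
              apply mul_le_mul
              · apply mul_le_mul_of_nonneg_left hcoef hcpos2.le
              · exact hexpb
              · exact (Real.exp_pos _).le
              · have h3 : 0 ≤ 1 + 0.6*δ + 2*(u i) := by nlinarith [hu0 i]
                positivity
          _ = (1+0.36*δ)/(2*c) * ((1+0.6*δ)*Real.exp (u i) + 2*(u i * Real.exp (u i))) := by
              ring
      calc ∑ i, (1/(2*c)) * (1 + (x i+1)^2/c) * Real.exp ((x i+1)^2/(2*c))
          ≤ ∑ i, (1+0.36*δ)/(2*c) * ((1+0.6*δ)*Real.exp (u i) + 2*(u i * Real.exp (u i))) :=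
            Finset.sum_le_sum (fun i _ => hper i)
        _ = (1+0.36*δ)/(2*c) * ((1+0.6*δ)*Ne + 2*S) := by
            rw [← Finset.mul_sum]
            congr 1
            rw [Finset.sum_add_distrib, ← Finset.mul_sum, ← Finset.mul_sum, hsum,
              ← hSdef, hNedef]
    rw [hVdef]
    calc ∑ i, Real.exp (u' i) ≤ Ne + (∑ i, (x i/c) * Real.exp (u i) *
          ((∑ j, H.p j (t+1) * H.loss j (t+1)) - H.loss i (t+1)))
        + ∑ i, (1/(2*c)) * (1 + (x i+1)^2/c) * Real.exp ((x i+1)^2/(2*c)) := hsumA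
      _ = Ne + ∑ i, (1/(2*c)) * (1 + (x i+1)^2/c) * Real.exp ((x i+1)^2/(2*c)) := by
          rw [hmid]; ring
      _ ≤ Ne + (1+0.36*δ)/(2*c) * ((1+0.6*δ)*Ne + 2*S) := by linarith [hthird]
  -- Step B : S - S' ≤ 0.29 δ (Ne + S)
  have hSB : S - S' ≤ 0.29*δ*(Ne + S) := by
    have hper : ∀ i, u i * Real.exp (u i) - u' i * Real.exp (u' i)
        ≤ (0.29*δ) * ((1 + u i) * Real.exp (u i)) := by
      intro i
      have hxc : x i ≤ 0.29*δ*c := hxδ i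
      rcases le_or_gt (u i) (u' i) with hle | hlt
      · have h1 : u i * Real.exp (u i) ≤ u' i * Real.exp (u' i) :=
          mul_le_mul hle (Real.exp_le_exp.2 hle) (Real.exp_pos _).le (hu'0 i)
        have h2 : 0 ≤ (0.29*δ) * ((1 + u i) * Real.exp (u i)) := by
          have := hu0 i
          have := (Real.exp_pos (u i)).le
          positivity
        linarith
      · have h1 := mul_exp_sub_mul_exp_le (hu'0 i) hlt.le
        have hd : u i - u' i ≤ 0.29*δ := by
          have hsq : (x i)^2 - (x' i)^2 ≤ 2*(x i) := by
            have h2 := abs_le.1 (hxx' i)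
            have hx2 : (x' i)^2 < (x i)^2 := by
              have h6 := hlt
              rw [hudef, hu'def] at h6
              simp only [] at h6
              exact (div_lt_div_iff_of_pos_right (by linarith : (0:ℝ) < 2*c)).1 h6
            have hxle : x' i ≤ x i := by nlinarith [hx2, hx0 i, hx'0 i]
            nlinarith [h2.2, hxle, hx'0 i]
          have : u i - u' i = ((x i)^2 - (x' i)^2)/(2*c) := by
            rw [hudef, hu'def]; ring
          rw [this, div_le_iff₀ (by linarith)]
          nlinarith [hxc, hδ0]
        have h2 : (u i - u' i) * ((1 + u i) * Real.exp (u i))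
            ≤ (0.29*δ) * ((1 + u i) * Real.exp (u i)) := by
          apply mul_le_mul_of_nonneg_right hd
          have := hu0 i
          have := (Real.exp_pos (u i)).le
          positivity
        calc u i * Real.exp (u i) - u' i * Real.exp (u' i)
            ≤ (u i - u' i) * (1 + u i) * Real.exp (u i) := h1
          _ = (u i - u' i) * ((1 + u i) * Real.exp (u i)) := by ring
          _ ≤ (0.29*δ) * ((1 + u i) * Real.exp (u i)) := h2
    have hsumB := Finset.sum_le_sum (fun i (_ : i ∈ Finset.univ) => hper i)
    rw [Finset.sum_sub_distrib, ← Finset.mul_sum] at hsumB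
    have hre : ∑ i, (1 + u i) * Real.exp (u i)
        = Ne + S := by
      have : ∀ i : Fin N, (1 + u i) * Real.exp (u i)
          = Real.exp (u i) + u i * Real.exp (u i) := fun i => by ring
      rw [Finset.sum_congr rfl (fun i _ => this i), Finset.sum_add_distrib, hsum, ← hSdef]
    rw [hre, ← hSdef, ← hS'def] at hsumB
    exact hsumB
  -- setup for the shrinkage step
  obtain ⟨q, hqdef⟩ : ∃ q, q = Δ/(c+Δ) := ⟨_, rfl⟩
  have hcΔ : (0:ℝ) < c + Δ := by linarith
  have hq0 : 0 < q := by rw [hqdef]; positivity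
  have hu'B : ∀ i, u' i ≤ B + 0.3*δ := by
    intro i
    have h2 := abs_le.1 (hxx' i)
    have h3 : (x' i)^2 ≤ (x i + 1)^2 := by nlinarith [hx'0 i, hx0 i, h2.1, h2.2]
    have h4 : u' i ≤ (x i+1)^2/(2*c) := by
      rw [hu'def]
      exact (div_le_div_iff_of_pos_right (by linarith : (0:ℝ) < 2*c)).2 h3
    have h5 : (x i+1)^2/(2*c) = u i + (2*(x i)+1)/(2*c) := by
      rw [hudef]; field_simp; ring
    have h6 : (2*(x i) + 1)/(2*c) ≤ 0.3*δ := by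
      rw [div_le_iff₀ (by linarith : (0:ℝ) < 2*c)]
      nlinarith [hxδ i, hone]
    have h7 := huB i
    rw [h5] at h4
    linarith
  -- per-term shrinkage
  have hGle : ∀ i, Real.exp ((x' i)^2/(2*(c+Δ))) ≤
      Real.exp (u' i) - q*(u' i * Real.exp (u' i))
        + (q^2/2)*((B + 0.3*δ) * (u' i * Real.exp (u' i))) := by
    intro i
    have harg : (x' i)^2/(2*(c+Δ)) = u' i + (-(q*u' i)) := by
      rw [hu'def, hqdef]; field_simp; ring
    have hqu0 : 0 ≤ q * u' i := mul_nonneg hq0.le (hu'0 i)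
    have h1 : Real.exp (-(q*u' i)) ≤ 1 - q*u' i + (q*u' i)^2/2 := by
      have h := exp_le_quad_of_nonpos (z := -(q*u' i)) (by linarith)
      calc Real.exp (-(q*u' i)) ≤ 1 + (-(q*u' i)) + (-(q*u' i))^2/2 := h
        _ = 1 - q*u' i + (q*u' i)^2/2 := by ring
    have h2 : Real.exp ((x' i)^2/(2*(c+Δ)))
        ≤ Real.exp (u' i) * (1 - q*u' i + (q*u' i)^2/2) := by
      rw [harg, Real.exp_add]
      exact mul_le_mul_of_nonneg_left h1 (Real.exp_pos _).le
    have h3 : Real.exp (u' i) * ((q*u' i)^2/2)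
        ≤ (q^2/2)*((B + 0.3*δ) * (u' i * Real.exp (u' i))) := by
      have he := (Real.exp_pos (u' i)).le
      have h4 : (u' i)^2 * Real.exp (u' i) ≤ (B + 0.3*δ) * (u' i * Real.exp (u' i)) := by
        have h5 : (u' i) * (u' i * Real.exp (u' i)) ≤ (B + 0.3*δ) * (u' i * Real.exp (u' i)) :=
          mul_le_mul_of_nonneg_right (hu'B i) (mul_nonneg (hu'0 i) he)
        nlinarith [h5]
      have heq : Real.exp (u' i) * ((q*u' i)^2/2)
          = (q^2/2)*((u' i)^2*Real.exp (u' i)) := by ring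
      rw [heq]
      exact mul_le_mul_of_nonneg_left h4 (by positivity)
    have hexp : Real.exp (u' i) * (1 - q*u' i + (q*u' i)^2/2)
        = Real.exp (u' i) - q*(u' i * Real.exp (u' i))
          + Real.exp (u' i) * ((q*u' i)^2/2) := by ring
    rw [hexp] at h2
    linarith [h2, h3]
  have hGsum : ∑ i, Real.exp ((x' i)^2/(2*(c+Δ)))
      ≤ V - q*S' + (q^2/2)*((B + 0.3*δ) * S') := by
    have h := Finset.sum_le_sum (fun i (_ : i ∈ Finset.univ) => hGle i)
    calc ∑ i, Real.exp ((x' i)^2/(2*(c+Δ)))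
        ≤ ∑ i, (Real.exp (u' i) - q*(u' i * Real.exp (u' i))
            + (q^2/2)*((B + 0.3*δ) * (u' i * Real.exp (u' i)))) := h
      _ = V - q*S' + (q^2/2)*((B + 0.3*δ) * S') := by
          rw [Finset.sum_add_distrib, Finset.sum_sub_distrib, ← Finset.mul_sum,
            ← hVdef, ← hS'def]
          congr 1
          simp only [hS'def, Finset.mul_sum]
  -- the goal, reformulated
  have hGNe : ∑ i, Real.exp ((x' i)^2/(2*(c+Δ))) ≤ Ne := by
    rcases le_or_gt V Ne with hVNe | hVNe
    · -- easy case : shrinking c only decreases the sum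
      have h1 : ∀ i, Real.exp ((x' i)^2/(2*(c+Δ))) ≤ Real.exp (u' i) := by
        intro i
        apply Real.exp_le_exp.2
        simp only [hu'def]
        exact div_le_div_of_nonneg_left (sq_nonneg _) (by linarith) (by linarith)
      calc ∑ i, Real.exp ((x' i)^2/(2*(c+Δ)))
          ≤ ∑ i, Real.exp (u' i) := Finset.sum_le_sum (fun i _ => h1 i)
        _ = V := hVdef.symm
        _ ≤ Ne := hVNe
    · -- main case
      have hS'tan : 2*V - Ne ≤ S' := by
        have h1 : ∀ i, 2 * Real.exp (u' i) - Real.exp 1 ≤ u' i * Real.exp (u' i) := by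
          intro i
          have := tangent_line_mul_log (Real.exp_pos (u' i))
          rwa [Real.log_exp, mul_comm (Real.exp (u' i))] at this
        have h2 := Finset.sum_le_sum (fun i (_ : i ∈ Finset.univ) => h1 i)
        rw [Finset.sum_sub_distrib, ← Finset.mul_sum, ← hVdef, Finset.sum_const,
          Finset.card_univ, Fintype.card_fin, nsmul_eq_mul, ← hS'def] at h2
        rw [hNedef]
        linarith [h2]
      have hS'Ne : Ne ≤ S' := by linarith
      have hS'pos : 0 < S' := lt_of_lt_of_le hNepos hS'Ne
      -- S ≤ (1+0.68δ) S'
      have hSS' : S ≤ (1+0.68*δ)*S' := by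
        have h1 : (1-0.29*δ)*S ≤ (1+0.29*δ)*S' := by nlinarith [hSB, hS'Ne]
        have h2 : S ≤ (1+0.29*δ)/(1-0.29*δ)*S' := by
          rw [div_mul_eq_mul_div, le_div_iff₀ (by nlinarith : (0:ℝ) < 1-0.29*δ)]
          nlinarith [h1]
        have h3 := num_ratio hδ0 hδ1
        calc S ≤ (1+0.29*δ)/(1-0.29*δ)*S' := h2
          _ ≤ (1+0.68*δ)*S' := mul_le_mul_of_nonneg_right h3 hS'0
      -- V - Ne ≤ (1+0.36δ)/(2c) (3+1.96δ) S'
      have hVS' : V - Ne ≤ (1+0.36*δ)/(2*c) * ((3+1.96*δ)*S') := by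
        have h1 : (1+0.6*δ)*Ne + 2*S ≤ (3+1.96*δ)*S' := by
          nlinarith [hS'Ne, hSS', hδ0, hδ1]
        have h2 : (0:ℝ) ≤ (1+0.36*δ)/(2*c) := by positivity
        have := mul_le_mul_of_nonneg_left h1 h2
        linarith [hVle, this]
      -- key scalar inequality
      have hkey : (1+0.36*δ)/(2*c) * (3+1.96*δ) ≤ q*(1-0.44*δ) := by
        have h2c : (0:ℝ) < 2*c := by linarith
        rw [hqdef, div_mul_eq_mul_div, div_mul_eq_mul_div, div_le_div_iff₀ h2c hcΔ]
        have e1 : (1+0.36*δ)*(3+1.96*δ)*(c+Δ)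
            ≤ (1+0.36*δ)*(3+1.96*δ)*(c*(1+0.48*δ)) := by
          apply mul_le_mul_of_nonneg_left _ (by nlinarith)
          nlinarith [hΔc]
        have e3 : c*((1+0.48*δ)*((1+0.36*δ)*(3+1.96*δ)))
            ≤ c*(3*(1+49.19*δ)*(1-0.44*δ)) :=
          mul_le_mul_of_nonneg_left (num_final hδ0 hδ1) hc.le
        have e4 : c*(3*(1+49.19*δ)*(1-0.44*δ)) = Δ*(1-0.44*δ)*(2*c) := by
          rw [hΔdef]; ring
        nlinarith [e1, e3, e4]
      -- q (B+0.3δ) ≤ 0.88 δ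
      have hq2 : q*(B+0.3*δ) ≤ 0.88*δ := by
        rw [hqdef, div_mul_eq_mul_div, div_le_iff₀ hcΔ]
        nlinarith [hΔB, hΔpos, hδ0]
      -- assemble
      have hfin1 : V - Ne ≤ q*S' - (q^2/2)*((B + 0.3*δ) * S') := by
        have h1 : V - Ne ≤ q*(1-0.44*δ)*S' := by
          have := mul_le_mul_of_nonneg_right hkey hS'0
          calc V - Ne ≤ (1+0.36*δ)/(2*c) * ((3+1.96*δ)*S') := hVS'
            _ = ((1+0.36*δ)/(2*c) * (3+1.96*δ))*S' := by ring
            _ ≤ (q*(1-0.44*δ))*S' := this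
            _ = q*(1-0.44*δ)*S' := by ring
        have h2 : (q^2/2)*((B + 0.3*δ) * S') ≤ 0.44*δ*(q*S') := by
          have h3 : q*(q*(B+0.3*δ)) ≤ q*(0.88*δ) := mul_le_mul_of_nonneg_left hq2 hq0.le
          have h4 : q*(q*(B+0.3*δ))*S' ≤ q*(0.88*δ)*S' := mul_le_mul_of_nonneg_right h3 hS'0
          nlinarith [h4]
        nlinarith [h1, h2]
      linarith [hGsum, hfin1]
  -- conclude by monotonicity of the defining equation
  by_contra hcon
  push_neg at hcon
  rw [← hcdef, ← hΔdef] at hcon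
  have hc1 : 0 < H.c (t+1) := H.c_pos (t+1) (by omega)
  have hsum1 : ∑ i, Real.exp ((x' i)^2/(2*H.c (t+1))) = Ne := by
    rw [hNedef, hx'def]
    exact H.sum_exp (t := t+1) (by omega)
  obtain ⟨j, hj⟩ := H.exists_pos (t := t+1) (by omega)
  have hj' : 0 < x' j := by rw [hx'def]; exact hj
  have hlt : ∑ i, Real.exp ((x' i)^2/(2*H.c (t+1)))
      < ∑ i, Real.exp ((x' i)^2/(2*(c+Δ))) := by
    apply Finset.sum_lt_sum
    · intro i _
      apply Real.exp_le_exp.2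
      exact div_le_div_of_nonneg_left (sq_nonneg _) (by linarith) (by linarith)
    · refine ⟨j, Finset.mem_univ j, ?_⟩
      apply Real.exp_lt_exp.2
      exact div_lt_div_of_pos_left (by positivity) (by linarith) (by linarith)
  rw [hsum1] at hlt
  linarith [hGNe, hlt]

lemma c_one_le : H.c 1 ≤ 1/2 := by
  obtain ⟨i, hi⟩ := H.exists_ge (t := 1) le_rfl
  have h1 := H.step_abs 0 i
  rw [H.R_zero i] at h1
  have h2 := abs_le.1 h1
  have h3 : max (H.R i 1) 0 ≤ 1 := max_le (by simpa using h2.2) (by norm_num)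
  have h4 : (0:ℝ) ≤ max (H.R i 1) 0 := le_max_right _ _
  nlinarith [hi]

lemma step_small {t : ℕ} (ht : 1 ≤ t) {δ : ℝ} (hδ0 : 0 < δ) (hδ1 : δ ≤ 1/2)
    (hlt : H.c t < 12*(1 + Real.log N)/δ^3) :
    H.c (t+1) ≤ 81*(Real.log N)^2/δ^3 := by
  have hL := H.logN_ge
  have hc := H.c_pos t ht
  have hd3 : (0:ℝ) < δ^3 := by positivity
  obtain ⟨j, hj⟩ := H.exists_ge (t := t+1) (by omega)
  have hx'x : |max (H.R j (t+1)) 0 - max (H.R j t) 0| ≤ 1 :=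
    (abs_max_sub_max_le_abs _ _ _).trans (H.step_abs t j)
  have hx0 : (0:ℝ) ≤ max (H.R j t) 0 := le_max_right _ _
  have hx'0 : (0:ℝ) ≤ max (H.R j (t+1)) 0 := le_max_right _ _
  have hxB : max (H.R j t) 0 ^ 2 ≤ 2 * H.c t * (1 + Real.log N) := H.sq_le ht j
  -- c(t+1) ≤ 0.55 x² + 5.5 ≤ 1.1 c B + 5.5
  have h5 : H.c (t+1) ≤ 1.1 * (H.c t * (1 + Real.log N)) + 5.5 := by
    have h2 := abs_le.1 hx'x
    nlinarith [hj, hxB, sq_nonneg (max (H.R j t) 0 - 10), hx0, hx'0]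
  have hcB : H.c t * (1 + Real.log N) < 12*(1 + Real.log N)^2/δ^3 := by
    have h6 : 0 < 1 + Real.log N := by linarith
    calc H.c t * (1 + Real.log N) < (12*(1 + Real.log N)/δ^3) * (1 + Real.log N) := by
          exact mul_lt_mul_of_pos_right hlt h6
      _ = 12*(1 + Real.log N)^2/δ^3 := by ring
  have key : 13.2*(1 + Real.log N)^2 + 5.5*δ^3 ≤ 81*(Real.log N)^2 := by
    nlinarith [sq_nonneg (Real.log N - 0.6931), pow_le_pow_left₀ hδ0.le hδ1 3, hL]
  have h7 : (13.2*(1 + Real.log N)^2 + 5.5*δ^3)/δ^3 ≤ 81*(Real.log N)^2/δ^3 :=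
    (div_le_div_iff_of_pos_right hd3).2 key
  rw [add_div, mul_div_assoc (5.5:ℝ), div_self (ne_of_gt hd3), mul_one] at h7
  have h8 : 1.1 * (H.c t * (1 + Real.log N)) ≤ 13.2*(1 + Real.log N)^2/δ^3 := by
    have : (1.1:ℝ) * (12*(1 + Real.log N)^2/δ^3) = 13.2*(1 + Real.log N)^2/δ^3 := by ring
    nlinarith [hcB]
  linarith [h5, h8, h7]


end NormalHedge

/-- Cumulative bound on the scale parameter: for every `0 < δ ≤ 1/2` and every round
`t ≥ 1`, `c t ≤ (3/2)(1 + 49.19 δ) t + (8 ln³ N)/δ + (81 ln² N)/δ³`. -/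
theorem normalHedge_scale_cumulative_bound {N : ℕ} (H : NormalHedge N)
    (δ : ℝ) (hδ0 : 0 < δ) (hδ1 : δ ≤ 1 / 2)
    (t : ℕ) (ht : 1 ≤ t) :
    H.c t ≤ 3 / 2 * (1 + 49.19 * δ) * t +
      8 * Real.log N ^ 3 / δ + 81 * Real.log N ^ 2 / δ ^ 3 := by
  have hL := H.logN_ge
  have hA1 : 0 ≤ 8 * Real.log N ^ 3 / δ := by positivity
  have hA2 : 0 ≤ 81 * Real.log N ^ 2 / δ ^ 3 := by positivity
  induction t, ht using Nat.le_induction with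
  | base =>
      have := H.c_one_le
      push_cast
      nlinarith [this, hδ0]
  | succ t ht ih =>
      rcases le_or_gt (12*(1 + Real.log N)/δ^3) (H.c t) with hth | hth
      · have h1 := H.step_main ht hδ0 hδ1 hth
        push_cast
        push_cast at ih
        nlinarith [h1, ih, hδ0]
      · have h1 := H.step_small ht hδ0 hδ1 hth
        have h2 : (0:ℝ) ≤ 3/2*(1+49.19*δ)*(t+1) := by positivity
        push_cast
        linarith [h1, h2]
end

section
/- Upper bounds on perturbed potentials (Lemma 5 of the analysis): let N ≥ 2 be an integer and 0 < δ ≤ 1. Suppose R_1,…,R_N ∈ ℝ and c ≥ (16 ln N)/δ² + 1/δ satisfy (1/N) Σ_{i=1}^N exp(([R_i]_+)²/(2c)) = e, and suppose ρ_1,…,ρ_N ∈ ℝ satisfy |ρ_i| ≤ [R_i]_+ + 1 for each i. Then Σ_{i=1}^N exp(ρ_i²/(2c)) ≤ e^δ · N e, and Σ_{i=1}^N (ρ_i²/(2c))·exp(ρ_i²/(2c)) ≤ e^δ (δ + 1 + ln N) · N e. -/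
open Real Finset

/-- Lemma 5 of the analysis (upper bounds on perturbed potentials): if the average
potential equals `e` at scale `c ≥ (16 ln N)/δ² + 1/δ` and `|ρ_i| ≤ [R_i]_+ + 1` for
each `i`, then `Σ exp(ρ_i²/(2c)) ≤ e^δ Ne` and
`Σ (ρ_i²/(2c)) exp(ρ_i²/(2c)) ≤ e^δ (δ + 1 + ln N) Ne`. -/
theorem normalHedge_perturbed_potential_upper_bounds
    {N : ℕ} (hN : 2 ≤ N) (δ : ℝ) (hδ0 : 0 < δ) (hδ1 : δ ≤ 1)
    (R ρ : Fin N → ℝ) (c : ℝ)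
    (hc : 16 * Real.log N / δ ^ 2 + 1 / δ ≤ c)
    (heq : (1 / N : ℝ) * ∑ i, Real.exp (max (R i) 0 ^ 2 / (2 * c)) = Real.exp 1)
    (hρ : ∀ i, |ρ i| ≤ max (R i) 0 + 1) :
    (∑ i, Real.exp (ρ i ^ 2 / (2 * c)) ≤ Real.exp δ * ((N : ℝ) * Real.exp 1)) ∧
    (∑ i, (ρ i ^ 2 / (2 * c)) * Real.exp (ρ i ^ 2 / (2 * c)) ≤
      Real.exp δ * (δ + 1 + Real.log N) * ((N : ℝ) * Real.exp 1)) := by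
  have hN0 : (0:ℝ) < N := by positivity
  have hN2 : (2:ℝ) ≤ N := by exact_mod_cast hN
  have hlog2 : Real.log 2 ≤ Real.log N := Real.log_le_log (by norm_num) hN2
  have hlogN : (0.69:ℝ) ≤ Real.log N := by
    have := Real.log_two_gt_d9; linarith
  have hδ2 : (0:ℝ) < δ ^ 2 := by positivity
  have hcδ : 16 * Real.log N ≤ c * δ ^ 2 := by
    have h1 : 16 * Real.log N / δ ^ 2 ≤ c := by
      have : 0 < 1 / δ := by positivity
      linarith
    calc 16 * Real.log N = 16 * Real.log N / δ ^ 2 * δ ^ 2 := by field_simp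
    _ ≤ c * δ ^ 2 := by nlinarith
  have hc0 : (0:ℝ) < c := by nlinarith
  have hcδ1 : (11:ℝ) ≤ c * δ := by nlinarith
  -- the sum equals N e
  have hsum : ∑ i, Real.exp (max (R i) 0 ^ 2 / (2 * c)) = (N:ℝ) * Real.exp 1 := by
    have := heq
    field_simp at this
    linarith
  -- each term is at most N e
  have hterm : ∀ i, Real.exp (max (R i) 0 ^ 2 / (2 * c)) ≤ (N:ℝ) * Real.exp 1 := by
    intro i
    rw [← hsum]
    exact Finset.single_le_sum (f := fun j => Real.exp (max (R j) 0 ^ 2 / (2 * c)))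
      (fun j _ => (Real.exp_pos _).le) (Finset.mem_univ i)
  -- hence each exponent is at most log N + 1
  have hxb : ∀ i, max (R i) 0 ^ 2 / (2 * c) ≤ Real.log N + 1 := by
    intro i
    have h := hterm i
    have hNe : (N:ℝ) * Real.exp 1 = Real.exp (Real.log N + 1) := by
      rw [Real.exp_add, Real.exp_log hN0]
    rw [hNe] at h
    exact Real.exp_le_exp.mp h
  -- key per-coordinate bound
  have hkey : ∀ i, ρ i ^ 2 / (2 * c) ≤ max (R i) 0 ^ 2 / (2 * c) + δ := by
    intro i
    set a := max (R i) 0 with ha_def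
    have ha : 0 ≤ a := le_max_right _ _
    have ha2 : a ^ 2 ≤ 2 * c * (Real.log N + 1) := by
      have := hxb i
      rw [div_le_iff₀ (by positivity)] at this
      linarith
    have hp1 : c * (16 * Real.log N) ≤ c * (c * δ ^ 2) :=
      mul_le_mul_of_nonneg_left hcδ hc0.le
    have hp2 : c * 0.69 ≤ c * Real.log N := mul_le_mul_of_nonneg_left hlogN hc0.le
    have hB0 : (0:ℝ) ≤ 4 * δ * c / 5 := by positivity
    have hB : a ≤ 4 * δ * c / 5 := by
      have hsq : a ^ 2 ≤ (4 * δ * c / 5) ^ 2 := by nlinarith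
      nlinarith
    have hρ2 : ρ i ^ 2 ≤ (a + 1) ^ 2 := by
      have h := abs_le.mp (hρ i)
      exact sq_le_sq' (by linarith [h.1]) h.2
    have hfin : ρ i ^ 2 ≤ a ^ 2 + 2 * c * δ := by nlinarith
    calc ρ i ^ 2 / (2 * c) ≤ (a ^ 2 + 2 * c * δ) / (2 * c) := by gcongr
      _ = a ^ 2 / (2 * c) + δ := by field_simp
  -- first bound
  have hb1 : ∑ i, Real.exp (ρ i ^ 2 / (2 * c)) ≤ Real.exp δ * ((N:ℝ) * Real.exp 1) := by
    calc ∑ i, Real.exp (ρ i ^ 2 / (2 * c))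
        ≤ ∑ i, Real.exp (max (R i) 0 ^ 2 / (2 * c)) * Real.exp δ := by
          apply Finset.sum_le_sum
          intro i _
          rw [← Real.exp_add]
          exact Real.exp_le_exp.mpr (hkey i)
      _ = Real.exp δ * ((N:ℝ) * Real.exp 1) := by
          rw [← Finset.sum_mul, hsum]; ring
  refine ⟨hb1, ?_⟩
  calc ∑ i, (ρ i ^ 2 / (2 * c)) * Real.exp (ρ i ^ 2 / (2 * c))
      ≤ ∑ i, (δ + 1 + Real.log N) * (Real.exp (max (R i) 0 ^ 2 / (2 * c)) * Real.exp δ) := by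
        apply Finset.sum_le_sum
        intro i _
        have hx0 : 0 ≤ ρ i ^ 2 / (2 * c) := by positivity
        have hx1 : ρ i ^ 2 / (2 * c) ≤ δ + 1 + Real.log N := by
          have := hkey i; have := hxb i; linarith
        have hx2 : Real.exp (ρ i ^ 2 / (2 * c)) ≤
            Real.exp (max (R i) 0 ^ 2 / (2 * c)) * Real.exp δ := by
          rw [← Real.exp_add]
          exact Real.exp_le_exp.mpr (hkey i)
        exact mul_le_mul hx1 hx2 (Real.exp_pos _).le (by positivity)
    _ = Real.exp δ * (δ + 1 + Real.log N) * ((N:ℝ) * Real.exp 1) := by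
        rw [← Finset.mul_sum, ← Finset.sum_mul, hsum]; ring
end
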